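/- arXiv:2601.10523 — 4 statements merged into one kernel-verified Lean document; each statement's English description precedes it below -/
import Mathlib

section
/- Let u be a finitely supported function on the integer lattice ℤⁿ and x_α the coordinate functions. Then Σ_{α=1}^n Σ_x Γ(x_α, u)²(x) d_x ≤ (1/(2n)) Σ_x Γ(u)(x) d_x. -/
open Finset

/-- Adjacency indicator on the integer lattice `ℤⁿ`: `μ x y = 1` iff `x` and `y`
are at `ℓ¹`-distance `1`. -/
def mu (n : ℕ) (x y : Fin n → ℤ) : ℝ :=
  if (∑ i, |x i - y i|) = 1 then 1 else 0

/-- Every vertex of `ℤⁿ` has degree `2n`. -/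
def deg (n : ℕ) : ℝ := 2 * n

/-- The normalized Laplacian on `ℤⁿ`: `Δf(x) = (1/(2n)) ∑_{y∼x} (f(y) - f(x))`. -/
noncomputable def lap (n : ℕ) (f : (Fin n → ℤ) → ℝ) (x : Fin n → ℤ) : ℝ :=
  (1 / deg n) * ∑ᶠ y, mu n x y * (f y - f x)

/-- The carré du champ operator on `ℤⁿ`:
`Γ(f,g)(x) = (1/(2 d_x)) ∑_y μ_{xy} (f(y)-f(x))(g(y)-g(x))`. -/
noncomputable def gam (n : ℕ) (f g : (Fin n → ℤ) → ℝ) (x : Fin n → ℤ) : ℝ :=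
  (1 / (2 * deg n)) * ∑ᶠ y, mu n x y * (f y - f x) * (g y - g x)

/-- The `α`-th coordinate function on `ℤⁿ`. -/
def coord {n : ℕ} (α : Fin n) (x : Fin n → ℤ) : ℝ := x α

def eps (b : Bool) : ℤ := if b then 1 else -1

lemma eps_ne_zero (b : Bool) : eps b ≠ 0 := by cases b <;> simp [eps]

lemma abs_eps (b : Bool) : |eps b| = 1 := by cases b <;> simp [eps]

def pt (n : ℕ) (x : Fin n → ℤ) (p : Fin n × Bool) : Fin n → ℤ :=
  x + Pi.single p.1 (eps p.2)

lemma pt_apply (n : ℕ) (x : Fin n → ℤ) (p : Fin n × Bool) (i : Fin n) :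
    pt n x p i = x i + if i = p.1 then eps p.2 else 0 := by
  simp [pt, Pi.single_apply]

lemma pt_injective (n : ℕ) (x : Fin n → ℤ) : Function.Injective (pt n x) := by
  intro p q h
  have h1 := congrFun h p.1
  have h2 := congrFun h q.1
  rw [pt_apply, pt_apply] at h1
  rw [pt_apply, pt_apply] at h2
  simp at h1 h2
  by_cases hpq : p.1 = q.1
  · rw [if_pos hpq] at h1
    have : p.2 = q.2 := by
      rcases p with ⟨i, b⟩; rcases q with ⟨j, c⟩
      cases b <;> cases c <;> first | rfl | (exfalso; simp [eps] at h1) <;> norm_num at h1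
    exact Prod.ext hpq this
  · rw [if_neg hpq] at h1
    exact absurd h1 (eps_ne_zero p.2)

lemma mu_pt (n : ℕ) (x : Fin n → ℤ) (p : Fin n × Bool) : mu n x (pt n x p) = 1 := by
  have : (∑ i, |x i - pt n x p i|) = 1 := by
    have : ∀ i, |x i - pt n x p i| = if i = p.1 then 1 else 0 := by
      intro i
      rw [pt_apply]
      by_cases h : i = p.1 <;> simp [h, abs_eps]
    simp only [this]
    simp
  simp [mu, this]

lemma mu_ne_zero (n : ℕ) (x y : Fin n → ℤ) (h : mu n x y ≠ 0) : ∃ p, y = pt n x p := by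
  have hs : (∑ i, |x i - y i|) = 1 := by
    by_contra hc; simp [mu, hc] at h
  have hne : ∃ i, |x i - y i| ≠ 0 := by
    by_contra hc
    push_neg at hc
    simp only [hc] at hs
    simp at hs
  obtain ⟨i, hi⟩ := hne
  have h1 : 1 ≤ |x i - y i| := Int.one_le_abs (by simpa using hi)
  have hle : |x i - y i| ≤ ∑ j, |x j - y j| :=
    Finset.single_le_sum (f := fun j => |x j - y j|) (fun j _ => abs_nonneg _) (mem_univ i)
  have heq : |x i - y i| = 1 := le_antisymm (hs ▸ hle) h1
  have hadd : |x i - y i| + ∑ j ∈ univ.erase i, |x j - y j| = 1 := by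
    rw [Finset.add_sum_erase univ (fun j => |x j - y j|) (mem_univ i)]; exact hs
  have hrest : ∀ j, j ≠ i → x j = y j := by
    intro j hj
    have hsum0 : ∑ j ∈ univ.erase i, |x j - y j| = 0 := by linarith
    have h0 := (Finset.sum_eq_zero_iff_of_nonneg (fun j _ => abs_nonneg (x j - y j))).mp hsum0 j
      (by simp [hj])
    have := abs_eq_zero.mp h0
    linarith
  rcases abs_eq (by norm_num : (0:ℤ) ≤ 1) |>.mp heq with hcase | hcase
  · refine ⟨(i, false), funext fun j => ?_⟩
    rw [pt_apply]
    by_cases hj : j = i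
    · subst hj; simp only [if_pos rfl, eps]; norm_num; linarith
    · simp [hj, hrest j hj]
  · refine ⟨(i, true), funext fun j => ?_⟩
    rw [pt_apply]
    by_cases hj : j = i
    · subst hj; simp only [if_pos rfl, eps]; norm_num; linarith
    · simp [hj, hrest j hj]

lemma finsum_mu (n : ℕ) (x : Fin n → ℤ) (F : (Fin n → ℤ) → ℝ) :
    ∑ᶠ y, mu n x y * F y = ∑ p : Fin n × Bool, F (pt n x p) := by
  have hsub : Function.support (fun y => mu n x y * F y) ⊆
      ↑(Finset.image (pt n x) Finset.univ) := by
    intro y hy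
    have hmu : mu n x y ≠ 0 := fun h => hy (by simp [Function.mem_support, h])
    obtain ⟨p, rfl⟩ := mu_ne_zero n x y hmu
    simp
  rw [finsum_eq_sum_of_support_subset _ hsub,
    Finset.sum_image (fun p _ q _ h => pt_injective n x h)]
  exact Finset.sum_congr rfl fun p _ => by rw [mu_pt]; ring

lemma gam_eq (n : ℕ) (f g : (Fin n → ℤ) → ℝ) (x : Fin n → ℤ) :
    gam n f g x = (1 / (2 * deg n)) *
      ∑ p : Fin n × Bool, (f (pt n x p) - f x) * (g (pt n x p) - g x) := by
  unfold gam
  congr 1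
  rw [← finsum_mu n x (fun y => (f y - f x) * (g y - g x))]
  exact finsum_congr fun y => by ring

lemma coord_diff (n : ℕ) (α : Fin n) (x : Fin n → ℤ) (p : Fin n × Bool) :
    coord α (pt n x p) - coord α x = if α = p.1 then (eps p.2 : ℝ) else 0 := by
  rw [coord, coord, pt_apply]
  by_cases h : α = p.1 <;> simp [h]

lemma gam_coord (n : ℕ) (α : Fin n) (u : (Fin n → ℤ) → ℝ) (x : Fin n → ℤ) :
    gam n (coord α) u x = (1 / (2 * deg n)) *
      ((u (pt n x (α, true)) - u x) - (u (pt n x (α, false)) - u x)) := by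
  rw [gam_eq]
  congr 1
  rw [Fintype.sum_prod_type]
  rw [Finset.sum_eq_single α]
  · rw [Fintype.sum_bool]
    simp [coord_diff, eps]
  · intro i _ hi
    apply Finset.sum_eq_zero
    intro b _
    rw [coord_diff, if_neg (Ne.symm hi), zero_mul]
  · simp

lemma gam_uu (n : ℕ) (u : (Fin n → ℤ) → ℝ) (x : Fin n → ℤ) :
    gam n u u x = (1 / (2 * deg n)) *
      ∑ α : Fin n, ((u (pt n x (α, true)) - u x) ^ 2 + (u (pt n x (α, false)) - u x) ^ 2) := by
  rw [gam_eq]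
  congr 1
  rw [Fintype.sum_prod_type]
  exact Finset.sum_congr rfl fun α _ => by rw [Fintype.sum_bool]; ring

lemma aux_ineq (c A B : ℝ) (hc : 0 < c) :
    (1/(2*(2*c)) * (A-B))^2 * (2*c) ≤ 1/(2*c) * (1/(2*(2*c)) * (A^2+B^2) * (2*c)) := by
  have key : (A-B)^2 ≤ 2*(A^2+B^2) := by nlinarith [sq_nonneg (A+B)]
  have hrhs : 1/(2*c) * (1/(2*(2*c)) * (A^2+B^2) * (2*c)) = (1/(2*(2*c))) * (A^2+B^2) := by
    rw [show 1/(2*c) * (1/(2*(2*c)) * (A^2+B^2) * (2*c))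
        = (1/(2*c)*(2*c)) * (1/(2*(2*c)) * (A^2+B^2)) from by ring,
      one_div_mul_cancel (by positivity : (2*c) ≠ 0), one_mul]
  have hlhs : (1/(2*(2*c)) * (A-B))^2 * (2*c) = (1/2) * ((1/(2*(2*c))) * (A-B)^2) := by
    rw [show (1/(2*(2*c)) * (A-B))^2 * (2*c)
        = (1/(2*(2*c))*(2*(2*c))) * ((1/(2*(2*c))) * (A-B)^2 * (1/2)) from by ring,
      one_div_mul_cancel (by positivity : (2*(2*c)) ≠ 0)]
    ring
  rw [hlhs, hrhs]
  have hpos : (0:ℝ) ≤ 1/(2*(2*c)) := by positivity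
  nlinarith [mul_le_mul_of_nonneg_left key hpos]

lemma pointwise_bound (n : ℕ) (hn : 0 < n) (u : (Fin n → ℤ) → ℝ) (x : Fin n → ℤ) :
    ∑ α : Fin n, (gam n (coord α) u x) ^ 2 * deg n
      ≤ (1 / (2 * n)) * (gam n u u x * deg n) := by
  have hN : (0:ℝ) < n := by exact_mod_cast hn
  simp only [gam_coord, gam_uu, deg]
  rw [Finset.mul_sum, Finset.sum_mul, Finset.mul_sum]
  apply Finset.sum_le_sum
  intro α _
  exact aux_ineq (n:ℝ) (u (pt n x (α, true)) - u x) (u (pt n x (α, false)) - u x) hN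

lemma gam_eq_zero (n : ℕ) (f u : (Fin n → ℤ) → ℝ) (x : Fin n → ℤ)
    (h0 : u x = 0) (h1 : ∀ p, u (pt n x p) = 0) : gam n f u x = 0 := by
  rw [gam_eq]
  have : ∀ p : Fin n × Bool, (f (pt n x p) - f x) * (u (pt n x p) - u x) = 0 := by
    intro p; rw [h0, h1 p]; ring
  simp [this]


/-- For a finitely supported `u` on `ℤⁿ`,
`∑_α ∑_x Γ(x_α, u)²(x) d_x ≤ (1/(2n)) ∑_x Γ(u)(x) d_x`. -/
theorem sum_coord_gamma_sq_le (n : ℕ) (hn : 0 < n)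
    (u : (Fin n → ℤ) → ℝ) (hu : (Function.support u).Finite) :
    ∑ α : Fin n, ∑ᶠ x, (gam n (coord α) u x) ^ 2 * deg n
      ≤ (1 / (2 * n)) * ∑ᶠ x, gam n u u x * deg n := by
  classical
  set T : Set (Fin n → ℤ) :=
    Function.support u ∪ ⋃ p : Fin n × Bool, (fun x => pt n x p) ⁻¹' Function.support u with hT
  have hTfin : T.Finite := by
    apply Set.Finite.union hu
    apply Set.finite_iUnion
    intro p
    exact Set.Finite.preimage
      (fun a _ b _ h => add_left_injective (Pi.single p.1 (eps p.2)) h) hu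
  have hzero : ∀ x ∉ T, u x = 0 ∧ ∀ p, u (pt n x p) = 0 := by
    intro x hx
    simp only [hT, Set.mem_union, Set.mem_iUnion, Set.mem_preimage,
      Function.mem_support, not_or, not_exists, not_not] at hx
    exact ⟨hx.1, hx.2⟩
  have hs1 : ∀ α : Fin n, (∑ᶠ x, (gam n (coord α) u x) ^ 2 * deg n)
      = ∑ x ∈ hTfin.toFinset, (gam n (coord α) u x) ^ 2 * deg n := by
    intro α
    apply finsum_eq_sum_of_support_subset
    intro x hx
    rw [Finset.mem_coe, Set.Finite.mem_toFinset]
    by_contra hxT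
    obtain ⟨h0, h1⟩ := hzero x hxT
    exact hx (by simp [gam_eq_zero n (coord α) u x h0 h1])
  have hs2 : (∑ᶠ x, gam n u u x * deg n)
      = ∑ x ∈ hTfin.toFinset, gam n u u x * deg n := by
    apply finsum_eq_sum_of_support_subset
    intro x hx
    rw [Finset.mem_coe, Set.Finite.mem_toFinset]
    by_contra hxT
    obtain ⟨h0, h1⟩ := hzero x hxT
    exact hx (by simp [gam_eq_zero n u u x h0 h1])
  calc ∑ α : Fin n, ∑ᶠ x, (gam n (coord α) u x) ^ 2 * deg n
      = ∑ α : Fin n, ∑ x ∈ hTfin.toFinset, (gam n (coord α) u x) ^ 2 * deg n :=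
        Finset.sum_congr rfl fun α _ => hs1 α
    _ = ∑ x ∈ hTfin.toFinset, ∑ α : Fin n, (gam n (coord α) u x) ^ 2 * deg n :=
        Finset.sum_comm
    _ ≤ ∑ x ∈ hTfin.toFinset, (1 / (2 * n)) * (gam n u u x * deg n) :=
        Finset.sum_le_sum fun x _ => pointwise_bound n hn u x
    _ = (1 / (2 * n)) * ∑ x ∈ hTfin.toFinset, gam n u u x * deg n := by
        rw [Finset.mul_sum]
    _ = (1 / (2 * n)) * ∑ᶠ x, gam n u u x * deg n := by rw [hs2]
end

section
/- Let Ω ⊂ ℤⁿ be finite, g a coordinate function, and u a finitely supported function vanishing outside Ω. Then 2 Σ_x g(x) u(x) Γ(g,u)(x) d_x = −(1/(2n)) Σ_x u(x)² d_x + I_g(u), where I_g(u) = (1/4) Σ_{x,y} μ_{xy} |∇_{xy}g|² |∇_{xy}u|². -/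
open Finset

-- auxiliary lemmas

lemma dist_one_iff {n : ℕ} (x y : Fin n → ℤ) :
    (∑ i, |x i - y i|) = 1 ↔ ∃ i, y = x + Pi.single i 1 ∨ y = x - Pi.single i 1 := by
  constructor
  · intro h
    obtain ⟨i, -, hi⟩ : ∃ i ∈ Finset.univ, |x i - y i| ≠ 0 := by
      apply Finset.exists_ne_zero_of_sum_ne_zero
      rw [h]; norm_num
    have hnn := abs_nonneg (x i - y i)
    have h1 : |x i - y i| = 1 := by
      have hle : |x i - y i| ≤ 1 := by
        rw [← h]
        exact Finset.single_le_sum (f := fun j => |x j - y j|)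
          (fun j _ => abs_nonneg _) (Finset.mem_univ i)
      omega
    have h0 : ∀ j, j ≠ i → x j = y j := by
      intro j hj
      have htot := Finset.sum_erase_add Finset.univ (fun k => |x k - y k|) (Finset.mem_univ i)
      simp only [h, h1] at htot
      have hsum : ∑ k ∈ Finset.univ.erase i, |x k - y k| = 0 := by omega
      have := (Finset.sum_eq_zero_iff_of_nonneg (fun k _ => abs_nonneg (x k - y k))).1 hsum j
        (Finset.mem_erase.2 ⟨hj, Finset.mem_univ j⟩)
      have := abs_eq_zero.mp this
      omega
    refine ⟨i, ?_⟩
    rcases (abs_eq (by norm_num : (0:ℤ) ≤ 1)).1 h1 with h2 | h2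
    · right
      funext j
      by_cases hj : j = i
      · subst hj; simp only [Pi.sub_apply, Pi.single_eq_same]; omega
      · simp only [Pi.sub_apply, Pi.single_apply, if_neg hj, sub_zero]
        exact (h0 j hj).symm
    · left
      funext j
      by_cases hj : j = i
      · subst hj; simp only [Pi.add_apply, Pi.single_eq_same]; omega
      · simp only [Pi.add_apply, Pi.single_apply, if_neg hj, add_zero]
        exact (h0 j hj).symm
  · rintro ⟨i, h | h⟩ <;> subst h
    · have hterm : ∀ j, |x j - (x + (Pi.single i 1 : Fin n → ℤ)) j| = if j = i then 1 else 0 := by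
        intro j
        simp only [Pi.add_apply, Pi.single_apply]
        split <;> simp
      rw [Finset.sum_congr rfl (fun j _ => hterm j)]
      simp
    · have hterm : ∀ j, |x j - (x - (Pi.single i 1 : Fin n → ℤ)) j| = if j = i then 1 else 0 := by
        intro j
        simp only [Pi.sub_apply, Pi.single_apply]
        split <;> simp
      rw [Finset.sum_congr rfl (fun j _ => hterm j)]
      simp

lemma mu_finsum {n : ℕ} (x : Fin n → ℤ) (f : (Fin n → ℤ) → ℝ) :
    ∑ᶠ y, mu n x y * f y
      = ∑ i, (f (x + Pi.single i 1) + f (x - Pi.single i 1)) := by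
  classical
  set N : Finset (Fin n → ℤ) :=
    (Finset.univ.image (fun i => x + Pi.single i 1)) ∪
      (Finset.univ.image (fun i => x - Pi.single i 1)) with hN
  have hmem : ∀ y, y ∈ N ↔ ∃ i, y = x + Pi.single i 1 ∨ y = x - Pi.single i 1 := by
    intro y
    simp only [hN, Finset.mem_union, Finset.mem_image, Finset.mem_univ, true_and]
    constructor
    · rintro (⟨i, hi⟩ | ⟨i, hi⟩)
      · exact ⟨i, Or.inl hi.symm⟩
      · exact ⟨i, Or.inr hi.symm⟩
    · rintro ⟨i, h | h⟩
      · exact Or.inl ⟨i, h.symm⟩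
      · exact Or.inr ⟨i, h.symm⟩
  have hsupp : Function.support (fun y => mu n x y * f y) ⊆ (N : Set (Fin n → ℤ)) := by
    intro y hy
    simp only [Function.mem_support] at hy
    have hmu : (∑ i, |x i - y i|) = 1 := by
      by_contra hc
      apply hy
      simp only [mu, if_neg hc, zero_mul]
    exact Finset.mem_coe.2 ((hmem y).2 ((dist_one_iff x y).1 hmu))
  rw [finsum_eq_sum_of_support_subset _ hsupp]
  have hmu : ∀ y ∈ N, mu n x y * f y = f y := by
    intro y hy
    rw [mu, if_pos ((dist_one_iff x y).2 ((hmem y).1 hy)), one_mul]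
  rw [Finset.sum_congr rfl hmu]
  have hinj1 : ∀ a ∈ (Finset.univ : Finset (Fin n)), ∀ b ∈ (Finset.univ : Finset (Fin n)),
      x + (Pi.single a 1 : Fin n → ℤ) = x + Pi.single b 1 → a = b := by
    intro a _ b _ h
    have h2 := congrFun (add_left_cancel h) a
    simp only [Pi.single_eq_same, Pi.single_apply] at h2
    by_contra hne
    split at h2 <;> simp_all
  have hinj2 : ∀ a ∈ (Finset.univ : Finset (Fin n)), ∀ b ∈ (Finset.univ : Finset (Fin n)),
      x - (Pi.single a 1 : Fin n → ℤ) = x - Pi.single b 1 → a = b := by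
    intro a _ b _ h
    have h3 : (Pi.single a 1 : Fin n → ℤ) = Pi.single b 1 := by
      have h4 : x - (x - (Pi.single a 1 : Fin n → ℤ)) = x - (x - Pi.single b 1) := by rw [h]
      simpa using h4
    have h2 := congrFun h3 a
    simp only [Pi.single_eq_same, Pi.single_apply] at h2
    by_contra hne
    split at h2 <;> simp_all
  have hdisj : Disjoint (Finset.univ.image (fun i => x + Pi.single i (1:ℤ)))
      (Finset.univ.image (fun i => x - Pi.single i (1:ℤ))) := by
    rw [Finset.disjoint_left]
    rintro y hy1 hy2
    simp only [Finset.mem_image, Finset.mem_univ, true_and] at hy1 hy2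
    obtain ⟨i, hi⟩ := hy1
    obtain ⟨j, hj⟩ := hy2
    have heq : x + Pi.single i (1:ℤ) = x - Pi.single j 1 := by rw [hi, hj]
    have h2 := congrFun heq i
    simp only [Pi.add_apply, Pi.sub_apply, Pi.single_eq_same, Pi.single_apply] at h2
    split at h2 <;> omega
  rw [hN, Finset.sum_union hdisj, Finset.sum_image hinj1, Finset.sum_image hinj2,
    ← Finset.sum_add_distrib]

lemma mySum_translate {n : ℕ} (s : Finset (Fin n → ℤ)) (f : (Fin n → ℤ) → ℝ) (w : Fin n → ℤ)
    (h1 : ∀ x ∉ s, f x = 0) (h2 : ∀ x ∉ s, f (x + w) = 0) :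
    ∑ x ∈ s, f (x + w) = ∑ x ∈ s, f x := by
  classical
  have hinj : ∀ a ∈ s, ∀ b ∈ s, a + w = b + w → a = b := fun a _ b _ h => add_right_cancel h
  have e0 : ∑ x ∈ s.image (· + w), f x = ∑ x ∈ s, f (x + w) := Finset.sum_image hinj
  rw [← e0]
  have e1 : ∑ x ∈ s.image (· + w), f x = ∑ x ∈ s ∪ s.image (· + w), f x := by
    apply Finset.sum_subset Finset.subset_union_right
    intro y _ hny
    have hxw : y - w ∉ s := by
      intro hmem
      exact hny (Finset.mem_image.2 ⟨y - w, hmem, by simp⟩)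
    simpa using h2 (y - w) hxw
  have e2 : ∑ x ∈ s, f x = ∑ x ∈ s ∪ s.image (· + w), f x := by
    apply Finset.sum_subset Finset.subset_union_left
    intro y _ hny
    exact h1 y hny
  rw [e1, e2]

/-- For a coordinate function `g = x_α` and a function `u` vanishing outside a
finite `Ω ⊂ ℤⁿ`,
`2 ∑_x g u Γ(g,u) d_x = -(1/(2n)) ∑_x u² d_x + I_g(u)` where
`I_g(u) = (1/4) ∑_{x,y} μ_{xy} |∇_{xy}g|² |∇_{xy}u|²`. -/
theorem symmetrization_identity (n : ℕ) (hn : 0 < n) (Ω : Finset (Fin n → ℤ))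
    (u : (Fin n → ℤ) → ℝ) (hu0 : ∀ x ∉ Ω, u x = 0) (α : Fin n) :
    2 * ∑ x ∈ Ω, coord α x * u x * gam n (coord α) u x * deg n
      = -(1 / (2 * n)) * ∑ x ∈ Ω, u x ^ 2 * deg n
        + (1 / 4) *
          ∑ᶠ x, ∑ᶠ y, mu n x y * (coord α y - coord α x) ^ 2 * (u y - u x) ^ 2 := by
  classical
  set v : Fin n → ℤ := Pi.single α 1 with hv
  have hdeg : deg n ≠ 0 := by
    simp only [deg]
    positivity
  have hgp : ∀ (i : Fin n) (x : Fin n → ℤ),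
      coord α (x + Pi.single i 1) - coord α x = if i = α then 1 else 0 := by
    intro i x
    simp only [coord, Pi.add_apply, Pi.single_apply]
    by_cases h : i = α
    · subst h; simp
    · rw [if_neg (fun hc => h hc.symm), if_neg h]; push_cast; ring
  have hgm : ∀ (i : Fin n) (x : Fin n → ℤ),
      coord α (x - Pi.single i 1) - coord α x = if i = α then -1 else 0 := by
    intro i x
    simp only [coord, Pi.sub_apply, Pi.single_apply]
    by_cases h : i = α
    · subst h; simp
    · rw [if_neg (fun hc => h hc.symm), if_neg h]; push_cast; ring
  -- pointwise computation of gam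
  have hgam : ∀ x, gam n (coord α) u x * deg n = (u (x + v) - u (x - v)) / 2 := by
    intro x
    rw [gam]
    have step : (∑ᶠ y, mu n x y * (coord α y - coord α x) * (u y - u x))
        = ∑ᶠ y, mu n x y * ((coord α y - coord α x) * (u y - u x)) :=
      finsum_congr fun y => by ring
    rw [step, mu_finsum x (fun y => (coord α y - coord α x) * (u y - u x))]
    have hsum : (∑ i, ((coord α (x + Pi.single i 1) - coord α x) * (u (x + Pi.single i 1) - u x)
          + (coord α (x - Pi.single i 1) - coord α x) * (u (x - Pi.single i 1) - u x)))
        = u (x + v) - u (x - v) := by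
      rw [Finset.sum_eq_single α]
      · rw [hgp α x, hgm α x, if_pos rfl, if_pos rfl, ← hv]; ring
      · intro i _ hi
        rw [hgp i x, hgm i x, if_neg hi, if_neg hi]; ring
      · intro h; exact absurd (Finset.mem_univ α) h
    rw [hsum]
    field_simp
  -- pointwise computation of the inner finsum
  have hInner : ∀ x, (∑ᶠ y, mu n x y * (coord α y - coord α x) ^ 2 * (u y - u x) ^ 2)
      = (u (x + v) - u x) ^ 2 + (u (x - v) - u x) ^ 2 := by
    intro x
    have step : (∑ᶠ y, mu n x y * (coord α y - coord α x) ^ 2 * (u y - u x) ^ 2)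
        = ∑ᶠ y, mu n x y * ((coord α y - coord α x) ^ 2 * (u y - u x) ^ 2) :=
      finsum_congr fun y => by ring
    rw [step, mu_finsum x (fun y => (coord α y - coord α x) ^ 2 * (u y - u x) ^ 2)]
    rw [Finset.sum_eq_single α]
    · rw [hgp α x, hgm α x, if_pos rfl, if_pos rfl, ← hv]; ring
    · intro i _ hi
      rw [hgp i x, hgm i x, if_neg hi, if_neg hi]; ring
    · intro h; exact absurd (Finset.mem_univ α) h
  -- the big finset
  set T : Finset (Fin n → ℤ) := Ω ∪ Ω.image (· + v) ∪ Ω.image (· - v) with hT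
  have hΩT : Ω ⊆ T := by
    intro x hx
    simp only [hT, Finset.mem_union]
    exact Or.inl (Or.inl hx)
  have hT0 : ∀ x ∉ T, u x = 0 ∧ u (x + v) = 0 ∧ u (x - v) = 0 := by
    intro x hx
    simp only [hT, Finset.mem_union, Finset.mem_image, not_or, not_exists] at hx
    obtain ⟨⟨hx1, hx2⟩, hx3⟩ := hx
    refine ⟨hu0 x hx1, ?_, ?_⟩
    · exact hu0 _ (fun hc => hx3 (x + v) ⟨hc, by simp⟩)
    · exact hu0 _ (fun hc => hx2 (x - v) ⟨hc, by simp⟩)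
  -- outer finsum
  have hOuter : (∑ᶠ x, ∑ᶠ y, mu n x y * (coord α y - coord α x) ^ 2 * (u y - u x) ^ 2)
      = ∑ x ∈ T, ((u (x + v) - u x) ^ 2 + (u (x - v) - u x) ^ 2) := by
    rw [finsum_congr hInner]
    apply finsum_eq_sum_of_support_subset
    intro x hx
    by_contra hxT
    obtain ⟨h1, h2, h3⟩ := hT0 x hxT
    simp [Function.mem_support, h1, h2, h3] at hx
  -- LHS
  have hL : 2 * ∑ x ∈ Ω, coord α x * u x * gam n (coord α) u x * deg n
      = ∑ x ∈ T, coord α x * u x * (u (x + v) - u (x - v)) := by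
    have e1 : ∀ x ∈ Ω, coord α x * u x * gam n (coord α) u x * deg n
        = coord α x * u x * (u (x + v) - u (x - v)) / 2 := by
      intro x _
      have h := hgam x
      calc coord α x * u x * gam n (coord α) u x * deg n
          = coord α x * u x * (gam n (coord α) u x * deg n) := by ring
        _ = coord α x * u x * ((u (x + v) - u (x - v)) / 2) := by rw [h]
        _ = coord α x * u x * (u (x + v) - u (x - v)) / 2 := by ring
    rw [Finset.sum_congr rfl e1, Finset.mul_sum]
    have e2 : ∀ x ∈ Ω, 2 * (coord α x * u x * (u (x + v) - u (x - v)) / 2)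
        = coord α x * u x * (u (x + v) - u (x - v)) := fun x _ => by ring
    rw [Finset.sum_congr rfl e2]
    apply Finset.sum_subset hΩT
    intro x _ hx
    rw [hu0 x hx]; ring
  -- RHS first term
  have hR1 : -(1 / (2 * (n:ℝ))) * ∑ x ∈ Ω, u x ^ 2 * deg n = -∑ x ∈ T, u x ^ 2 := by
    have e3 : ∑ x ∈ T, u x ^ 2 = ∑ x ∈ Ω, u x ^ 2 := by
      symm
      apply Finset.sum_subset hΩT
      intro x _ hx
      rw [hu0 x hx]; ring
    rw [e3, ← Finset.sum_mul]
    have hn' : (n:ℝ) ≠ 0 := Nat.cast_ne_zero.2 hn.ne'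
    rw [deg]
    field_simp
  rw [hL, hR1, hOuter]
  -- now work over T
  -- translation identities
  have key : ∀ f : (Fin n → ℤ) → ℝ, (∀ x ∉ T, f x = 0) → (∀ x ∉ T, f (x - v) = 0) →
      ∑ x ∈ T, f (x - v) = ∑ x ∈ T, f x := by
    intro f hf1 hf2
    have := mySum_translate T f (-v) hf1 (by
      intro x hx
      rw [← sub_eq_add_neg]
      exact hf2 x hx)
    simpa [sub_eq_add_neg] using this
  have E1 : ∑ x ∈ T, u (x + v) ^ 2 = ∑ x ∈ T, u x ^ 2 := by
    apply mySum_translate T (fun x => u x ^ 2) v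
    · intro x hx; rw [(hT0 x hx).1]; ring
    · intro x hx; rw [(hT0 x hx).2.1]; ring
  have E2 : ∑ x ∈ T, u (x - v) ^ 2 = ∑ x ∈ T, u x ^ 2 := by
    apply key (fun x => u x ^ 2)
    · intro x hx; rw [(hT0 x hx).1]; ring
    · intro x hx; rw [(hT0 x hx).2.2]; ring
  have E3 : ∑ x ∈ T, u x * u (x - v) = ∑ x ∈ T, u (x + v) * u x := by
    have := key (fun x => u (x + v) * u x)
      (by intro x hx; show u (x + v) * u x = 0; rw [(hT0 x hx).1]; ring)
      (by intro x hx; show u (x - v + v) * u (x - v) = 0; rw [(hT0 x hx).2.2]; ring)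
    simpa [sub_add_cancel] using this
  have hcoord : ∀ x : Fin n → ℤ, coord α (x - v) = coord α x - 1 := by
    intro x
    simp [coord, hv, Pi.single_eq_same]
  have E4 : ∑ x ∈ T, coord α x * u x * u (x - v)
      = ∑ x ∈ T, (coord α x + 1) * (u (x + v) * u x) := by
    have hkey := key (fun x => (coord α x + 1) * (u (x + v) * u x))
      (by intro x hx; show (coord α x + 1) * (u (x + v) * u x) = 0; rw [(hT0 x hx).1]; ring)
      (by intro x hx; show (coord α (x - v) + 1) * (u (x - v + v) * u (x - v)) = 0
          rw [(hT0 x hx).2.2]; ring)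
    rw [← hkey]
    apply Finset.sum_congr rfl
    intro x _
    show coord α x * u x * u (x - v) = (coord α (x - v) + 1) * (u (x - v + v) * u (x - v))
    rw [hcoord x, sub_add_cancel]
    ring
  -- final algebra
  have split1 : ∑ x ∈ T, coord α x * u x * (u (x + v) - u (x - v))
      = ∑ x ∈ T, coord α x * u x * u (x + v) - ∑ x ∈ T, coord α x * u x * u (x - v) := by
    rw [← Finset.sum_sub_distrib]
    exact Finset.sum_congr rfl fun x _ => by ring
  have split2 : ∑ x ∈ T, ((u (x + v) - u x) ^ 2 + (u (x - v) - u x) ^ 2)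
      = ∑ x ∈ T, u (x + v) ^ 2 + ∑ x ∈ T, u (x - v) ^ 2 + 2 * ∑ x ∈ T, u x ^ 2
        - 2 * ∑ x ∈ T, u (x + v) * u x - 2 * ∑ x ∈ T, u x * u (x - v) := by
    have h2a : ∑ x ∈ T, ((u (x + v) - u x) ^ 2 + (u (x - v) - u x) ^ 2)
        = ∑ x ∈ T, (u (x + v) ^ 2 + u (x - v) ^ 2 + 2 * u x ^ 2
            - 2 * (u (x + v) * u x) - 2 * (u x * u (x - v))) :=
      Finset.sum_congr rfl fun x _ => by ring
    rw [h2a, Finset.sum_sub_distrib, Finset.sum_sub_distrib, Finset.sum_add_distrib,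
      Finset.sum_add_distrib, ← Finset.mul_sum, ← Finset.mul_sum, ← Finset.mul_sum]
  have split3 : ∑ x ∈ T, (coord α x + 1) * (u (x + v) * u x)
      = ∑ x ∈ T, coord α x * u x * u (x + v) + ∑ x ∈ T, u (x + v) * u x := by
    rw [← Finset.sum_add_distrib]
    exact Finset.sum_congr rfl fun x _ => by ring
  rw [split1, split2, E1, E2, E3, E4, split3]
  ring
end

section
/- (Yang's first type inequality for the discrete Schrödinger operator) Let Ω be a finite subset of ℤⁿ, V ≥ 0 on Ω, ρ > 0 on Ω with minimum ρ_min and maximum ρ_max, and let 0 < λ_1 ≤ ⋯ ≤ λ_N (N = |Ω|) be the eigenvalues of the Dirichlet problem −Δu + Vu = λρu in Ω, u = 0 on ∂Ω. Then for any 1 ≤ k ≤ N − 1: Σ_{i=1}^k (λ_{k+1} − λ_i) [ λ_{k+1}(ρ_min/ρ_max − ρ_min λ_i) − λ_i(ρ_min/ρ_max − ρ_min λ_i + 4/n) ] ≤ 0. -/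
open Finset

namespace Yang

variable {n : ℕ}

def eps (b : Bool) : ℤ := if b then 1 else -1

def nb (x : Fin n → ℤ) (p : Fin n × Bool) : Fin n → ℤ :=
  Function.update x p.1 (x p.1 + eps p.2)

def pflip (p : Fin n × Bool) : Fin n × Bool := (p.1, !p.2)

lemma nb_apply (x : Fin n → ℤ) (p : Fin n × Bool) (i : Fin n) :
    nb x p i = if i = p.1 then x p.1 + eps p.2 else x i := by
  simp [nb, Function.update_apply]

lemma nb_nb (x : Fin n → ℤ) (p : Fin n × Bool) : nb (nb x p) (pflip p) = x := by
  funext i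
  simp only [nb_apply, pflip]
  by_cases h : i = p.1 <;> simp [h, eps] <;> cases p.2 <;> simp <;> ring

lemma nb_injective (x : Fin n → ℤ) : Function.Injective (nb x) := by
  intro p q h
  have hp := congrArg (fun z => z p.1) h
  have hq := congrArg (fun z => z q.1) h
  simp only [nb_apply] at hp hq
  by_cases hpq : p.1 = q.1
  · have h2 : eps p.2 = eps q.2 := by
      simp [hpq] at hp
      omega
    have : p.2 = q.2 := by
      cases hb : p.2 <;> cases hb' : q.2 <;> simp [hb, hb', eps] at h2 ⊢ <;> omega
    exact Prod.ext hpq this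
  · exfalso
    have h1 : (p.1 : Fin n) ≠ q.1 := hpq
    simp [if_neg (Ne.symm h1)] at hq
    simp only [eps] at hq
    split at hq <;> omega

lemma mu_nb (hn : 0 < n) (x : Fin n → ℤ) (p : Fin n × Bool) : mu n x (nb x p) = 1 := by
  have : (∑ i, |x i - nb x p i|) = 1 := by
    have : ∀ i, |x i - nb x p i| = if i = p.1 then 1 else 0 := by
      intro i
      rw [nb_apply]
      by_cases h : i = p.1 <;> simp [h] <;> cases p.2 <;> simp [eps]
    simp only [this]
    simp
  simp [mu, this]

lemma mu_supp {x y : Fin n → ℤ} (h : mu n x y ≠ 0) : ∃ p, y = nb x p := by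
  have hs : (∑ i, |x i - y i|) = 1 := by
    by_contra hc; simp [mu, hc] at h
  set d : Fin n → ℤ := fun i => x i - y i with hd
  have hnz : ∃ i, d i ≠ 0 := by
    by_contra hc
    push_neg at hc
    simp only [hd] at hc
    have : (∑ i, |x i - y i|) = 0 := by
      apply Finset.sum_eq_zero; intro i _; rw [abs_eq_zero]; exact hc i
    omega
  obtain ⟨i₀, hi₀⟩ := hnz
  have habs : 1 ≤ |d i₀| := Int.one_le_abs hi₀
  have hzero : ∀ j, j ≠ i₀ → d j = 0 := by
    intro j hj
    have hsub : ({i₀, j} : Finset (Fin n)) ⊆ univ := subset_univ _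
    have : |d i₀| + |d j| ≤ ∑ i, |x i - y i| := by
      rw [show (∑ i, |x i - y i|) = ∑ i, |d i| from rfl]
      calc |d i₀| + |d j| = ∑ i ∈ ({i₀, j} : Finset (Fin n)), |d i| := by
            rw [Finset.sum_pair (Ne.symm hj)]
        _ ≤ ∑ i, |d i| := Finset.sum_le_sum_of_subset_of_nonneg hsub
            (fun i _ _ => abs_nonneg _)
    have : |d j| ≤ 0 := by linarith
    exact abs_eq_zero.mp (le_antisymm this (abs_nonneg _))
  have hsum : (∑ i, |x i - y i|) = |d i₀| := by
    rw [show (∑ i, |x i - y i|) = ∑ i, |d i| from rfl]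
    apply Finset.sum_eq_single
    · intro j _ hj; rw [abs_eq_zero]; exact hzero j hj
    · intro h; exact absurd (mem_univ i₀) h
  have : |d i₀| = 1 := by rw [← hsum]; exact hs
  have : d i₀ = 1 ∨ d i₀ = -1 := (abs_eq (by norm_num : (0:ℤ) ≤ 1)).mp this
  refine ⟨(i₀, if d i₀ = -1 then true else false), ?_⟩
  funext j
  rw [nb_apply]
  by_cases hj : j = i₀
  · subst hj
    rcases this with h1 | h1 <;> simp [h1, eps, hd] at h1 ⊢ <;> omega
  · have := hzero j hj
    simp [hj, hd] at this ⊢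
    omega

lemma sum_mu (hn : 0 < n) (x : Fin n → ℤ) (F : (Fin n → ℤ) → ℝ) :
    ∑ᶠ y, mu n x y * F y = ∑ p : Fin n × Bool, F (nb x p) := by
  have hsupp : Function.support (fun y => mu n x y * F y) ⊆
      ↑((univ : Finset (Fin n × Bool)).image (nb x)) := by
    intro y hy
    have : mu n x y ≠ 0 := by
      intro hc; simp [Function.mem_support, hc] at hy
    obtain ⟨p, rfl⟩ := mu_supp this
    simp
  rw [finsum_eq_sum_of_support_subset _ hsupp, Finset.sum_image
    (fun p _ q _ h => nb_injective x h)]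
  apply Finset.sum_congr rfl
  intro p _
  rw [mu_nb hn, one_mul]

lemma lap_eq (hn : 0 < n) (F : (Fin n → ℤ) → ℝ) (x : Fin n → ℤ) :
    lap n F x = (1 / deg n) * ∑ p : Fin n × Bool, (F (nb x p) - F x) := by
  rw [lap, sum_mu hn]

lemma gam_eq (hn : 0 < n) (F G : (Fin n → ℤ) → ℝ) (x : Fin n → ℤ) :
    gam n F G x = (1 / (2 * deg n)) *
      ∑ p : Fin n × Bool, (F (nb x p) - F x) * (G (nb x p) - G x) := by
  rw [gam]
  congr 1
  rw [← sum_mu hn x (fun y => (F y - F x) * (G y - G x))]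
  apply finsum_congr
  intro y
  ring


section Coord

lemma coord_nb_sub (α : Fin n) (x : Fin n → ℤ) (p : Fin n × Bool) :
    coord α (nb x p) - coord α x = if p.1 = α then ((eps p.2 : ℤ) : ℝ) else 0 := by
  simp only [coord, nb_apply]
  by_cases h : p.1 = α
  · rw [if_pos h, if_pos h.symm, ← h]
    push_cast
    ring
  · rw [if_neg h, if_neg (fun hc => h hc.symm)]
    ring

lemma eps_sq (b : Bool) : ((eps b : ℤ) : ℝ)^2 = 1 := by cases b <;> simp [eps]

lemma c1 (α : Fin n) (x : Fin n → ℤ) :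
    ∑ p : Fin n × Bool, (coord α (nb x p) - coord α x) = 0 := by
  simp only [coord_nb_sub]
  rw [Fintype.sum_prod_type]
  apply Finset.sum_eq_zero
  intro β _
  rw [Fintype.sum_bool]
  by_cases h : β = α <;> simp [h, eps]

lemma c2 (α : Fin n) (x : Fin n → ℤ) :
    ∑ p : Fin n × Bool, (coord α (nb x p) - coord α x)^2 = 2 := by
  simp only [coord_nb_sub]
  rw [Fintype.sum_prod_type]
  have : ∀ β : Fin n, ∑ b : Bool, (if β = α then ((eps b : ℤ) : ℝ) else 0)^2
      = if β = α then 2 else 0 := by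
    intro β
    rw [Fintype.sum_bool]
    by_cases h : β = α <;> simp [h, eps] <;> norm_num
  simp only [this]
  simp

lemma c3 (x : Fin n → ℤ) (p : Fin n × Bool) :
    ∑ α : Fin n, (coord α (nb x p) - coord α x)^2 = 1 := by
  have key : ∀ α : Fin n, (coord α (nb x p) - coord α x)^2 = if α = p.1 then 1 else 0 := by
    intro α
    rw [coord_nb_sub]
    by_cases h : p.1 = α
    · rw [if_pos h, eps_sq, if_pos h.symm]
    · rw [if_neg h, if_neg (fun hc : α = p.1 => h hc.symm)]
      norm_num
  simp only [key]
  simp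

lemma c4 (α : Fin n) (x : Fin n → ℤ) :
    ∑ p : Fin n × Bool, ((coord α (nb x p))^2 - (coord α x)^2) = 2 := by
  have key : ∀ p : Fin n × Bool, (coord α (nb x p))^2 - (coord α x)^2
      = 2 * coord α x * (coord α (nb x p) - coord α x)
        + (coord α (nb x p) - coord α x)^2 := by
    intro p; ring
  simp only [key]
  rw [Finset.sum_add_distrib, ← Finset.mul_sum, c1, c2]
  ring

lemma c5 (α : Fin n) (x : Fin n → ℤ) (p : Fin n × Bool) :
    (coord α (nb x p) - coord α x)^3 = coord α (nb x p) - coord α x := by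
  rw [coord_nb_sub]
  by_cases h : p.1 = α <;> simp [h]
  cases p.2 <;> simp [eps] <;> norm_num

lemma c6 (α : Fin n) (x : Fin n → ℤ) (p : Fin n × Bool) :
    (coord α (nb x p) - coord α x)^4 = (coord α (nb x p) - coord α x)^2 := by
  rw [coord_nb_sub]
  by_cases h : p.1 = α <;> simp [h]
  cases p.2 <;> simp [eps] <;> norm_num

end Coord

section Green

variable (n) in
/-- `Ω` together with all its neighbours. -/
noncomputable def TT (Ω : Finset (Fin n → ℤ)) : Finset (Fin n → ℤ) :=
  Ω ∪ Ω.biUnion (fun x => (Finset.univ : Finset (Fin n × Bool)).image (nb x))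

lemma mem_TT_left {Ω : Finset (Fin n → ℤ)} {x : Fin n → ℤ} (h : x ∈ Ω) : x ∈ TT n Ω :=
  Finset.mem_union_left _ h

lemma nb_mem_TT {Ω : Finset (Fin n → ℤ)} {x : Fin n → ℤ} (h : x ∈ Ω) (p : Fin n × Bool) :
    nb x p ∈ TT n Ω := by
  apply Finset.mem_union_right
  rw [Finset.mem_biUnion]
  exact ⟨x, h, Finset.mem_image.mpr ⟨p, Finset.mem_univ p, rfl⟩⟩

lemma mem_TT_of_nb {Ω : Finset (Fin n → ℤ)} {x : Fin n → ℤ} {p : Fin n × Bool}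
    (h : nb x p ∈ Ω) : x ∈ TT n Ω := by
  have : x = nb (nb x p) (pflip p) := (nb_nb x p).symm
  rw [this]
  exact nb_mem_TT h _

lemma omega_subset_TT (Ω : Finset (Fin n → ℤ)) : Ω ⊆ TT n Ω := fun _ h => mem_TT_left h

lemma pflip_pflip (p : Fin n × Bool) : pflip (pflip p) = p := by simp [pflip]

lemma edge_flip (S : Finset (Fin n → ℤ)) (W : (Fin n → ℤ) → (Fin n × Bool) → ℝ)
    (hW : ∀ x p, W x p ≠ 0 → x ∈ S ∧ nb x p ∈ S) :
    ∑ x ∈ S, ∑ p : Fin n × Bool, W x p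
      = ∑ x ∈ S, ∑ p : Fin n × Bool, W (nb x p) (pflip p) := by
  classical
  rw [← Finset.sum_product' (s := S) (t := Finset.univ),
      ← Finset.sum_product' (s := S) (t := Finset.univ)]
  rw [← Finset.sum_filter_ne_zero (s := S ×ˢ Finset.univ)
        (f := fun q => W q.1 q.2),
      ← Finset.sum_filter_ne_zero (s := S ×ˢ Finset.univ)
        (f := fun q => W (nb q.1 q.2) (pflip q.2))]
  apply Finset.sum_nbij' (i := fun q => (nb q.1 q.2, pflip q.2))
    (j := fun q => (nb q.1 q.2, pflip q.2))
  · intro q hq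
    rw [Finset.mem_filter] at hq ⊢
    obtain ⟨-, hq2⟩ := hq
    refine ⟨Finset.mem_product.mpr ⟨(hW _ _ hq2).2, Finset.mem_univ _⟩, ?_⟩
    simpa [nb_nb, pflip_pflip] using hq2
  · intro q hq
    rw [Finset.mem_filter] at hq ⊢
    obtain ⟨-, hq2⟩ := hq
    exact ⟨Finset.mem_product.mpr ⟨(hW _ _ hq2).1, Finset.mem_univ _⟩, hq2⟩
  · intro q _
    simp [nb_nb, pflip_pflip]
  · intro q _
    simp [nb_nb, pflip_pflip]
  · intro q _
    simp [nb_nb, pflip_pflip]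

lemma deg_ne_zero (hn : 0 < n) : deg n ≠ 0 := by
  simp [deg]
  omega

lemma green (hn : 0 < n) (Ω : Finset (Fin n → ℤ)) (F G : (Fin n → ℤ) → ℝ)
    (hG : ∀ x ∉ Ω, G x = 0) :
    ∑ x ∈ Ω, (-(lap n F x)) * G x * deg n
      = (1/2) * ∑ x ∈ TT n Ω, ∑ p : Fin n × Bool,
          (F (nb x p) - F x) * (G (nb x p) - G x) := by
  have hB : ∀ S : Finset (Fin n → ℤ), Ω ⊆ S →
      ∑ x ∈ S, ∑ p : Fin n × Bool, (F (nb x p) - F x) * G x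
        = ∑ x ∈ Ω, ∑ p : Fin n × Bool, (F (nb x p) - F x) * G x := by
    intro S hS
    symm
    apply Finset.sum_subset hS
    intro x _ hx
    simp [hG x hx]
  have hA : ∑ x ∈ TT n Ω, ∑ p : Fin n × Bool, (F (nb x p) - F x) * G (nb x p)
      = - ∑ x ∈ TT n Ω, ∑ p : Fin n × Bool, (F (nb x p) - F x) * G x := by
    rw [edge_flip (TT n Ω) (fun x p => (F (nb x p) - F x) * G (nb x p))]
    · rw [← Finset.sum_neg_distrib]
      apply Finset.sum_congr rfl
      intro x _
      rw [← Finset.sum_neg_distrib]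
      apply Finset.sum_congr rfl
      intro p _
      rw [nb_nb]
      ring
    · intro x p hW
      have hGnz : G (nb x p) ≠ 0 := fun hc => hW (by rw [hc]; ring)
      have hmem : nb x p ∈ Ω := by
        by_contra hc
        exact hGnz (hG _ hc)
      exact ⟨mem_TT_of_nb hmem, mem_TT_left hmem⟩
  have expand : ∑ x ∈ TT n Ω, ∑ p : Fin n × Bool,
      (F (nb x p) - F x) * (G (nb x p) - G x)
      = (∑ x ∈ TT n Ω, ∑ p : Fin n × Bool, (F (nb x p) - F x) * G (nb x p))
        - ∑ x ∈ TT n Ω, ∑ p : Fin n × Bool, (F (nb x p) - F x) * G x := by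
    rw [← Finset.sum_sub_distrib]
    apply Finset.sum_congr rfl
    intro x _
    rw [← Finset.sum_sub_distrib]
    apply Finset.sum_congr rfl
    intro p _
    ring
  rw [expand, hA, hB _ (omega_subset_TT Ω)]
  have lhs_eq : ∀ x, (-(lap n F x)) * G x * deg n
      = - ∑ p : Fin n × Bool, (F (nb x p) - F x) * G x := by
    intro x
    have hd : deg n ≠ 0 := deg_ne_zero hn
    rw [lap_eq hn]
    have : (-(1 / deg n * ∑ p : Fin n × Bool, (F (nb x p) - F x))) * G x * deg n
        = -((∑ p : Fin n × Bool, (F (nb x p) - F x)) * G x) * (deg n / deg n) := by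
      ring
    rw [this, div_self hd, mul_one, Finset.sum_mul, neg_inj]
  rw [Finset.sum_congr rfl (fun x _ => lhs_eq x), Finset.sum_neg_distrib]
  ring

end Green


section Space

variable (n) in
noncomputable def ip (Ω : Finset (Fin n → ℤ)) (ρ : (Fin n → ℤ) → ℝ)
    (F G : (Fin n → ℤ) → ℝ) : ℝ :=
  ∑ x ∈ Ω, F x * G x * ρ x * deg n

variable (n) in
noncomputable def qf (Ω : Finset (Fin n → ℤ)) (V : (Fin n → ℤ) → ℝ)
    (F G : (Fin n → ℤ) → ℝ) : ℝ :=
  ∑ x ∈ Ω, (-(lap n F x) + V x * F x) * G x * deg n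

variable {Ω : Finset (Fin n → ℤ)} {V ρ : (Fin n → ℤ) → ℝ}

lemma ip_comm (F G : (Fin n → ℤ) → ℝ) : ip n Ω ρ F G = ip n Ω ρ G F := by
  apply Finset.sum_congr rfl
  intro x _
  ring

lemma ip_nonneg (hρ : ∀ x ∈ Ω, 0 < ρ x) (F : (Fin n → ℤ) → ℝ) :
    0 ≤ ip n Ω ρ F F := by
  apply Finset.sum_nonneg
  intro x hx
  have h1 : 0 ≤ F x * F x := mul_self_nonneg _
  have h2 : 0 ≤ ρ x := (hρ x hx).le
  have h3 : (0:ℝ) ≤ deg n := by unfold deg; positivity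
  have := mul_nonneg (mul_nonneg h1 h2) h3
  linarith [this]

lemma ip_sum_r (F : (Fin n → ℤ) → ℝ) (s : Finset ℕ) (c : ℕ → ℝ)
    (G : ℕ → (Fin n → ℤ) → ℝ) :
    ip n Ω ρ F (fun x => ∑ j ∈ s, c j * G j x) = ∑ j ∈ s, c j * ip n Ω ρ F (G j) := by
  unfold ip
  calc ∑ x ∈ Ω, F x * (∑ j ∈ s, c j * G j x) * ρ x * deg n
      = ∑ x ∈ Ω, ∑ j ∈ s, c j * (F x * G j x * ρ x * deg n) := by
        apply Finset.sum_congr rfl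
        intro x _
        rw [Finset.mul_sum, Finset.sum_mul, Finset.sum_mul]
        apply Finset.sum_congr rfl
        intro j _
        ring
    _ = ∑ j ∈ s, ∑ x ∈ Ω, c j * (F x * G j x * ρ x * deg n) := Finset.sum_comm
    _ = ∑ j ∈ s, c j * ∑ x ∈ Ω, F x * G j x * ρ x * deg n := by
        apply Finset.sum_congr rfl
        intro j _
        rw [← Finset.mul_sum]

lemma ip_sub_sum_l (F : (Fin n → ℤ) → ℝ) (s : Finset ℕ) (c : ℕ → ℝ)
    (G : ℕ → (Fin n → ℤ) → ℝ) (H : (Fin n → ℤ) → ℝ) :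
    ip n Ω ρ (fun x => F x - ∑ j ∈ s, c j * G j x) H
      = ip n Ω ρ F H - ∑ j ∈ s, c j * ip n Ω ρ (G j) H := by
  unfold ip
  calc ∑ x ∈ Ω, (F x - ∑ j ∈ s, c j * G j x) * H x * ρ x * deg n
      = ∑ x ∈ Ω, (F x * H x * ρ x * deg n
          - ∑ j ∈ s, c j * (G j x * H x * ρ x * deg n)) := by
        apply Finset.sum_congr rfl
        intro x _
        rw [sub_mul, sub_mul, sub_mul, Finset.sum_mul, Finset.sum_mul, Finset.sum_mul]
        congr 1
        apply Finset.sum_congr rfl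
        intro j _
        ring
    _ = (∑ x ∈ Ω, F x * H x * ρ x * deg n)
          - ∑ x ∈ Ω, ∑ j ∈ s, c j * (G j x * H x * ρ x * deg n) :=
        Finset.sum_sub_distrib _ _
    _ = (∑ x ∈ Ω, F x * H x * ρ x * deg n)
          - ∑ j ∈ s, c j * ∑ x ∈ Ω, G j x * H x * ρ x * deg n := by
        rw [Finset.sum_comm]
        congr 1
        apply Finset.sum_congr rfl
        intro j _
        rw [← Finset.mul_sum]

lemma qf_sum_r (F : (Fin n → ℤ) → ℝ) (s : Finset ℕ) (c : ℕ → ℝ)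
    (G : ℕ → (Fin n → ℤ) → ℝ) :
    qf n Ω V F (fun x => ∑ j ∈ s, c j * G j x) = ∑ j ∈ s, c j * qf n Ω V F (G j) := by
  unfold qf
  calc ∑ x ∈ Ω, (-(lap n F x) + V x * F x) * (∑ j ∈ s, c j * G j x) * deg n
      = ∑ x ∈ Ω, ∑ j ∈ s, c j * ((-(lap n F x) + V x * F x) * G j x * deg n) := by
        apply Finset.sum_congr rfl
        intro x _
        rw [Finset.mul_sum, Finset.sum_mul]
        apply Finset.sum_congr rfl
        intro j _
        ring
    _ = ∑ j ∈ s, ∑ x ∈ Ω, c j * ((-(lap n F x) + V x * F x) * G j x * deg n) :=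
        Finset.sum_comm
    _ = ∑ j ∈ s, c j * ∑ x ∈ Ω, (-(lap n F x) + V x * F x) * G j x * deg n := by
        apply Finset.sum_congr rfl
        intro j _
        rw [← Finset.mul_sum]

lemma qf_split (F G : (Fin n → ℤ) → ℝ) :
    qf n Ω V F G = (∑ x ∈ Ω, (-(lap n F x)) * G x * deg n)
      + ∑ x ∈ Ω, V x * F x * G x * deg n := by
  unfold qf
  rw [← Finset.sum_add_distrib]
  apply Finset.sum_congr rfl
  intro x _
  ring

lemma qf_symm (hn : 0 < n) (F G : (Fin n → ℤ) → ℝ) (hF : ∀ x ∉ Ω, F x = 0)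
    (hG : ∀ x ∉ Ω, G x = 0) :
    qf n Ω V F G = qf n Ω V G F := by
  rw [qf_split, qf_split, green hn Ω F G hG, green hn Ω G F hF]
  congr 1
  · congr 1
    apply Finset.sum_congr rfl
    intro x _
    apply Finset.sum_congr rfl
    intro p _
    ring
  · apply Finset.sum_congr rfl
    intro x _
    ring

end Space


lemma deg_pos (hn : 0 < n) : 0 < deg n := by
  unfold deg
  have : (1:ℝ) ≤ (n:ℝ) := by exact_mod_cast hn
  linarith

section Complete

variable {Ω : Finset (Fin n → ℤ)} {ρ : (Fin n → ℤ) → ℝ}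

lemma idx_sum (Ω : Finset (Fin n → ℤ)) (g : ℕ → ℝ) :
    ∑ a : {z // z ∈ Ω}, g ((Fintype.equivFinOfCardEq (Fintype.card_coe Ω) a : ℕ) + 1)
      = ∑ j ∈ Finset.Icc 1 Ω.card, g j := by
  rw [Equiv.sum_comp (Fintype.equivFinOfCardEq (Fintype.card_coe Ω))
    (fun i : Fin Ω.card => g ((i : ℕ) + 1))]
  rw [Fin.sum_univ_eq_sum_range (fun i => g (i + 1))]
  rw [← Finset.Ico_add_one_right_eq_Icc, Finset.sum_Ico_eq_sum_range]
  apply Finset.sum_congr (by rw [Nat.add_sub_cancel])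
  intro i _
  rw [Nat.add_comm]

lemma completeness (hn : 0 < n) (hρ : ∀ x ∈ Ω, 0 < ρ x)
    (u : ℕ → (Fin n → ℤ) → ℝ)
    (horth : ∀ i ∈ Finset.Icc 1 Ω.card, ∀ j ∈ Finset.Icc 1 Ω.card,
      ∑ x ∈ Ω, u i x * u j x * ρ x * deg n = if i = j then 1 else 0) :
    ∀ x ∈ Ω, ∀ y ∈ Ω,
      (∑ j ∈ Finset.Icc 1 Ω.card, u j x * u j y) * ρ y * deg n
        = if x = y then 1 else 0 := by
  classical
  set e := Fintype.equivFinOfCardEq (Fintype.card_coe Ω) with he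
  set idx : {z // z ∈ Ω} → ℕ := fun a => (e a : ℕ) + 1 with hidxdef
  have hidx : ∀ a, idx a ∈ Finset.Icc 1 Ω.card := by
    intro a
    have := (e a).isLt
    simp only [hidxdef, Finset.mem_Icc]
    omega
  have hidx_inj : Function.Injective idx := by
    intro a b h
    simp only [hidxdef] at h
    have : (e a : ℕ) = (e b : ℕ) := by omega
    exact e.injective (Fin.ext this)
  set w : (Fin n → ℤ) → ℝ := fun z => Real.sqrt (ρ z * deg n) with hw
  have hwsq : ∀ z ∈ Ω, w z * w z = ρ z * deg n := by
    intro z hz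
    exact Real.mul_self_sqrt (mul_nonneg (hρ z hz).le (deg_pos hn).le)
  have hwpos : ∀ z ∈ Ω, 0 < w z :=
    fun z hz => Real.sqrt_pos.mpr (mul_pos (hρ z hz) (deg_pos hn))
  set M : Matrix {z // z ∈ Ω} {z // z ∈ Ω} ℝ :=
    Matrix.of (fun a b => u (idx a) b.1 * w b.1) with hM
  have hMMT : M * M.transpose = 1 := by
    ext a b
    rw [Matrix.mul_apply, Matrix.one_apply]
    have : ∀ c : {z // z ∈ Ω}, M a c * M.transpose c b
        = u (idx a) c.1 * u (idx b) c.1 * ρ c.1 * deg n := by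
      intro c
      rw [Matrix.transpose_apply]
      simp only [hM, Matrix.of_apply]
      have hc := hwsq c.1 c.2
      calc u (idx a) c.1 * w c.1 * (u (idx b) c.1 * w c.1)
          = u (idx a) c.1 * u (idx b) c.1 * (w c.1 * w c.1) := by ring
        _ = u (idx a) c.1 * u (idx b) c.1 * ρ c.1 * deg n := by rw [hc]; ring
    rw [Finset.sum_congr rfl (fun c _ => this c)]
    rw [Finset.sum_coe_sort Ω (fun z => u (idx a) z * u (idx b) z * ρ z * deg n)]
    rw [horth _ (hidx a) _ (hidx b)]
    by_cases hab : a = b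
    · simp [hab]
    · rw [if_neg (fun hc => hab (hidx_inj hc)), if_neg hab]
  have hMTM : M.transpose * M = 1 := mul_eq_one_comm.mp hMMT
  intro x hx y hy
  have hent := congrFun (congrFun hMTM ⟨x, hx⟩) ⟨y, hy⟩
  rw [Matrix.mul_apply, Matrix.one_apply] at hent
  have hterm : ∀ c : {z // z ∈ Ω}, M.transpose ⟨x, hx⟩ c * M c ⟨y, hy⟩
      = w x * w y * (u (idx c) x * u (idx c) y) := by
    intro c
    rw [Matrix.transpose_apply]
    simp only [hM, Matrix.of_apply]
    ring
  rw [Finset.sum_congr rfl (fun c _ => hterm c), ← Finset.mul_sum] at hent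
  have hsum : ∑ c : {z // z ∈ Ω}, u (idx c) x * u (idx c) y
      = ∑ j ∈ Finset.Icc 1 Ω.card, u j x * u j y := by
    exact idx_sum Ω (fun j => u j x * u j y)
  rw [hsum] at hent
  by_cases hxy : x = y
  · subst hxy
    rw [if_pos rfl] at hent ⊢
    have h2 : w x * w x = ρ x * deg n := hwsq x hx
    rw [show w x * w x * ∑ j ∈ Finset.Icc 1 #Ω, u j x * u j x
        = (w x * w x) * ∑ j ∈ Finset.Icc 1 #Ω, u j x * u j x from rfl, h2] at hent
    rw [← hent]
    ring
  · rw [if_neg (fun hc : (⟨x,hx⟩ : {z // z ∈ Ω}) = ⟨y,hy⟩ => hxy (congrArg Subtype.val hc))] at hent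
    rw [if_neg hxy]
    have hwx := hwpos x hx
    have hwy := hwpos y hy
    have : ∑ j ∈ Finset.Icc 1 Ω.card, u j x * u j y = 0 := by
      have hne : w x * w y ≠ 0 := by positivity
      exact (mul_eq_zero.mp hent).resolve_left hne
    rw [this]
    ring

end Complete


section Eig

variable {Ω : Finset (Fin n → ℤ)} {V ρ : (Fin n → ℤ) → ℝ}
variable {u : ℕ → (Fin n → ℤ) → ℝ} {lam : ℕ → ℝ}

lemma eig_pair
    (heig : ∀ i ∈ Finset.Icc 1 Ω.card, ∀ x ∈ Ω,
      -(lap n (u i) x) + V x * u i x = lam i * ρ x * u i x)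
    {j : ℕ} (hj : j ∈ Finset.Icc 1 Ω.card) (G : (Fin n → ℤ) → ℝ) :
    qf n Ω V (u j) G = lam j * ip n Ω ρ (u j) G := by
  unfold qf ip
  rw [Finset.mul_sum]
  apply Finset.sum_congr rfl
  intro x hx
  rw [heig j hj x hx]
  ring

lemma expansion (hn : 0 < n) (hρ : ∀ x ∈ Ω, 0 < ρ x)
    (hu0 : ∀ i ∈ Finset.Icc 1 Ω.card, ∀ x ∉ Ω, u i x = 0)
    (horth : ∀ i ∈ Finset.Icc 1 Ω.card, ∀ j ∈ Finset.Icc 1 Ω.card,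
      ∑ x ∈ Ω, u i x * u j x * ρ x * deg n = if i = j then 1 else 0)
    (φ : (Fin n → ℤ) → ℝ) (hφ : ∀ x ∉ Ω, φ x = 0) :
    ∀ x, φ x = ∑ j ∈ Finset.Icc 1 Ω.card, ip n Ω ρ φ (u j) * u j x := by
  intro x
  by_cases hx : x ∈ Ω
  · have comp := completeness hn hρ u horth
    symm
    unfold ip
    calc ∑ j ∈ Finset.Icc 1 Ω.card, (∑ y ∈ Ω, φ y * u j y * ρ y * deg n) * u j x
        = ∑ j ∈ Finset.Icc 1 Ω.card, ∑ y ∈ Ω,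
            φ y * (u j x * u j y * (ρ y * deg n)) := by
          apply Finset.sum_congr rfl
          intro j _
          rw [Finset.sum_mul]
          apply Finset.sum_congr rfl
          intro y _
          ring
      _ = ∑ y ∈ Ω, ∑ j ∈ Finset.Icc 1 Ω.card,
            φ y * (u j x * u j y * (ρ y * deg n)) := Finset.sum_comm
      _ = ∑ y ∈ Ω, φ y * ((∑ j ∈ Finset.Icc 1 Ω.card, u j x * u j y) * ρ y * deg n) := by
          apply Finset.sum_congr rfl
          intro y _
          rw [← Finset.mul_sum, ← Finset.sum_mul]
          ring
      _ = ∑ y ∈ Ω, φ y * (if x = y then 1 else 0) := by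
          apply Finset.sum_congr rfl
          intro y hy
          rw [comp x hx y hy]
      _ = φ x := by
          rw [Finset.sum_congr rfl (fun y (_ : y ∈ Ω) => mul_ite (x = y) (φ y) 1 0)]
          simp only [mul_one, mul_zero]
          rw [Finset.sum_ite_eq Ω x φ, if_pos hx]
  · rw [hφ x hx]
    symm
    apply Finset.sum_eq_zero
    intro j hj
    rw [hu0 j hj x hx, mul_zero]

lemma ip_sq (hn : 0 < n) (hρ : ∀ x ∈ Ω, 0 < ρ x)
    (hu0 : ∀ i ∈ Finset.Icc 1 Ω.card, ∀ x ∉ Ω, u i x = 0)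
    (horth : ∀ i ∈ Finset.Icc 1 Ω.card, ∀ j ∈ Finset.Icc 1 Ω.card,
      ∑ x ∈ Ω, u i x * u j x * ρ x * deg n = if i = j then 1 else 0)
    (φ : (Fin n → ℤ) → ℝ) (hφ : ∀ x ∉ Ω, φ x = 0) :
    ip n Ω ρ φ φ = ∑ j ∈ Finset.Icc 1 Ω.card, (ip n Ω ρ φ (u j))^2 := by
  have hfun : φ = fun x => ∑ j ∈ Finset.Icc 1 Ω.card, ip n Ω ρ φ (u j) * u j x :=
    funext (expansion hn hρ hu0 horth φ hφ)
  calc ip n Ω ρ φ φ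
      = ip n Ω ρ φ (fun x => ∑ j ∈ Finset.Icc 1 Ω.card, ip n Ω ρ φ (u j) * u j x) :=
        congrArg (ip n Ω ρ φ) hfun
    _ = ∑ j ∈ Finset.Icc 1 Ω.card, ip n Ω ρ φ (u j) * ip n Ω ρ φ (u j) :=
        ip_sum_r φ _ _ u
    _ = ∑ j ∈ Finset.Icc 1 Ω.card, (ip n Ω ρ φ (u j))^2 := by
        apply Finset.sum_congr rfl
        intro j _
        ring

lemma qf_sq (hn : 0 < n) (hρ : ∀ x ∈ Ω, 0 < ρ x)
    (hu0 : ∀ i ∈ Finset.Icc 1 Ω.card, ∀ x ∉ Ω, u i x = 0)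
    (heig : ∀ i ∈ Finset.Icc 1 Ω.card, ∀ x ∈ Ω,
      -(lap n (u i) x) + V x * u i x = lam i * ρ x * u i x)
    (horth : ∀ i ∈ Finset.Icc 1 Ω.card, ∀ j ∈ Finset.Icc 1 Ω.card,
      ∑ x ∈ Ω, u i x * u j x * ρ x * deg n = if i = j then 1 else 0)
    (φ : (Fin n → ℤ) → ℝ) (hφ : ∀ x ∉ Ω, φ x = 0) :
    qf n Ω V φ φ = ∑ j ∈ Finset.Icc 1 Ω.card, lam j * (ip n Ω ρ φ (u j))^2 := by
  have hfun : φ = fun x => ∑ j ∈ Finset.Icc 1 Ω.card, ip n Ω ρ φ (u j) * u j x :=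
    funext (expansion hn hρ hu0 horth φ hφ)
  calc qf n Ω V φ φ
      = qf n Ω V φ (fun x => ∑ j ∈ Finset.Icc 1 Ω.card, ip n Ω ρ φ (u j) * u j x) :=
        congrArg (qf n Ω V φ) hfun
    _ = ∑ j ∈ Finset.Icc 1 Ω.card, ip n Ω ρ φ (u j) * qf n Ω V φ (u j) :=
        qf_sum_r φ _ _ u
    _ = ∑ j ∈ Finset.Icc 1 Ω.card, lam j * (ip n Ω ρ φ (u j))^2 := by
        apply Finset.sum_congr rfl
        intro j hj
        rw [qf_symm hn φ (u j) hφ (hu0 j hj), eig_pair heig hj, ip_comm (u j) φ]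
        ring

lemma rayleigh (hn : 0 < n) (hρ : ∀ x ∈ Ω, 0 < ρ x)
    (hu0 : ∀ i ∈ Finset.Icc 1 Ω.card, ∀ x ∉ Ω, u i x = 0)
    (heig : ∀ i ∈ Finset.Icc 1 Ω.card, ∀ x ∈ Ω,
      -(lap n (u i) x) + V x * u i x = lam i * ρ x * u i x)
    (horth : ∀ i ∈ Finset.Icc 1 Ω.card, ∀ j ∈ Finset.Icc 1 Ω.card,
      ∑ x ∈ Ω, u i x * u j x * ρ x * deg n = if i = j then 1 else 0)
    (hmono : ∀ i j : ℕ, 1 ≤ i → i ≤ j → j ≤ Ω.card → lam i ≤ lam j)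
    {k : ℕ} (hk : k + 1 ≤ Ω.card)
    (φ : (Fin n → ℤ) → ℝ) (hφ : ∀ x ∉ Ω, φ x = 0)
    (horthφ : ∀ j ∈ Finset.Icc 1 k, ip n Ω ρ φ (u j) = 0) :
    lam (k+1) * ip n Ω ρ φ φ ≤ qf n Ω V φ φ := by
  have h1 : qf n Ω V φ φ - lam (k+1) * ip n Ω ρ φ φ
      = ∑ j ∈ Finset.Icc 1 Ω.card, (lam j - lam (k+1)) * (ip n Ω ρ φ (u j))^2 := by
    rw [qf_sq hn hρ hu0 heig horth φ hφ, ip_sq hn hρ hu0 horth φ hφ, Finset.mul_sum,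
      ← Finset.sum_sub_distrib]
    apply Finset.sum_congr rfl
    intro j _
    ring
  have h2 : 0 ≤ ∑ j ∈ Finset.Icc 1 Ω.card, (lam j - lam (k+1)) * (ip n Ω ρ φ (u j))^2 := by
    apply Finset.sum_nonneg
    intro j hj
    rw [Finset.mem_Icc] at hj
    by_cases hjk : j ≤ k
    · rw [horthφ j (Finset.mem_Icc.mpr ⟨hj.1, hjk⟩)]
      norm_num
    · have : lam (k+1) ≤ lam j := hmono (k+1) j (by omega) (by omega) hj.2
      have hsq : (0:ℝ) ≤ (ip n Ω ρ φ (u j))^2 := sq_nonneg _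
      nlinarith
  linarith

lemma commut (hn : 0 < n)
    (heig : ∀ i ∈ Finset.Icc 1 Ω.card, ∀ x ∈ Ω,
      -(lap n (u i) x) + V x * u i x = lam i * ρ x * u i x)
    {i : ℕ} (hi : i ∈ Finset.Icc 1 Ω.card) (α : Fin n) {x : Fin n → ℤ} (hx : x ∈ Ω) :
    -(lap n (fun y => coord α y * u i y) x) + V x * (coord α x * u i x)
      = lam i * ρ x * (coord α x * u i x) - 2 * gam n (coord α) (u i) x := by
  have hlap : lap n (fun y => coord α y * u i y) x
      = coord α x * lap n (u i) x + 2 * gam n (coord α) (u i) x := by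
    rw [lap_eq hn, lap_eq hn, gam_eq hn]
    have hsplit : ∑ p : Fin n × Bool, (coord α (nb x p) * u i (nb x p) - coord α x * u i x)
        = (∑ p : Fin n × Bool, coord α x * (u i (nb x p) - u i x))
          + (∑ p : Fin n × Bool, u i x * (coord α (nb x p) - coord α x))
          + ∑ p : Fin n × Bool, (coord α (nb x p) - coord α x) * (u i (nb x p) - u i x) := by
      rw [← Finset.sum_add_distrib, ← Finset.sum_add_distrib]
      apply Finset.sum_congr rfl
      intro p _
      ring
    rw [hsplit, ← Finset.mul_sum, ← Finset.mul_sum, c1, mul_zero]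
    have hd : deg n ≠ 0 := deg_ne_zero hn
    field_simp
    ring
  rw [hlap]
  have h := heig i hi x hx
  linear_combination coord α x * h

end Eig


section Alpha

variable {Ω : Finset (Fin n → ℤ)} {V ρ : (Fin n → ℤ) → ℝ}
variable {u : ℕ → (Fin n → ℤ) → ℝ} {lam : ℕ → ℝ}

variable (n) in
noncomputable def Ac (Ω : Finset (Fin n → ℤ)) (ρ : (Fin n → ℤ) → ℝ)
    (u : ℕ → (Fin n → ℤ) → ℝ) (α : Fin n) (i j : ℕ) : ℝ :=
  ip n Ω ρ (fun x => coord α x * u i x) (u j)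

variable (n) in
noncomputable def Bc (Ω : Finset (Fin n → ℤ)) (u : ℕ → (Fin n → ℤ) → ℝ)
    (α : Fin n) (i j : ℕ) : ℝ :=
  ∑ x ∈ Ω, gam n (coord α) (u i) x * u j x * deg n

variable (n) in
noncomputable def phiF (Ω : Finset (Fin n → ℤ)) (ρ : (Fin n → ℤ) → ℝ)
    (u : ℕ → (Fin n → ℤ) → ℝ) (α : Fin n) (k i : ℕ) : (Fin n → ℤ) → ℝ :=
  fun x => coord α x * u i x - ∑ j ∈ Finset.Icc 1 k, Ac n Ω ρ u α i j * u j x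

variable (n) in
noncomputable def Rc (Ω : Finset (Fin n → ℤ)) (u : ℕ → (Fin n → ℤ) → ℝ)
    (α : Fin n) (i : ℕ) : ℝ :=
  (1/8) * ∑ x ∈ TT n Ω, ∑ p : Fin n × Bool,
    (coord α (nb x p) - coord α x)^2 * (u i (nb x p) - u i x)^2

variable (n) in
noncomputable def wc (Ω : Finset (Fin n → ℤ)) (u : ℕ → (Fin n → ℤ) → ℝ)
    (α : Fin n) (i : ℕ) : ℝ :=
  -2 * ∑ x ∈ Ω, gam n (coord α) (u i) x * (coord α x * u i x) * deg n

variable (n) in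
noncomputable def ggc (Ω : Finset (Fin n → ℤ)) (ρ : (Fin n → ℤ) → ℝ)
    (u : ℕ → (Fin n → ℤ) → ℝ) (α : Fin n) (i : ℕ) : ℝ :=
  ∑ x ∈ Ω, (2 * gam n (coord α) (u i) x)^2 / ρ x * deg n

lemma Ac_symm (α : Fin n) (i j : ℕ) : Ac n Ω ρ u α i j = Ac n Ω ρ u α j i := by
  unfold Ac ip
  apply Finset.sum_congr rfl
  intro x _
  ring

lemma AB_rel (hn : 0 < n)
    (hu0 : ∀ i ∈ Finset.Icc 1 Ω.card, ∀ x ∉ Ω, u i x = 0)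
    (heig : ∀ i ∈ Finset.Icc 1 Ω.card, ∀ x ∈ Ω,
      -(lap n (u i) x) + V x * u i x = lam i * ρ x * u i x)
    (α : Fin n) {i j : ℕ} (hi : i ∈ Finset.Icc 1 Ω.card) (hj : j ∈ Finset.Icc 1 Ω.card) :
    (lam j - lam i) * Ac n Ω ρ u α i j = -2 * Bc n Ω u α i j := by
  have hfu : ∀ x ∉ Ω, (fun y => coord α y * u i y) x = 0 := by
    intro x hx
    simp only
    rw [hu0 i hi x hx, mul_zero]
  have q1 : qf n Ω V (fun y => coord α y * u i y) (u j)
      = lam i * Ac n Ω ρ u α i j - 2 * Bc n Ω u α i j := by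
    unfold qf
    have key : ∀ x ∈ Ω, (-(lap n (fun y => coord α y * u i y) x)
          + V x * (coord α x * u i x)) * u j x * deg n
        = lam i * (coord α x * u i x * u j x * ρ x * deg n)
          - 2 * (gam n (coord α) (u i) x * u j x * deg n) := by
      intro x hx
      rw [commut hn heig hi α hx]
      ring
    rw [Finset.sum_congr rfl key, Finset.sum_sub_distrib, ← Finset.mul_sum, ← Finset.mul_sum]
    rfl
  have q2 : qf n Ω V (fun y => coord α y * u i y) (u j) = lam j * Ac n Ω ρ u α i j := by
    rw [qf_symm hn _ (u j) hfu (hu0 j hj), eig_pair heig hj]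
    congr 1
    unfold Ac ip
    apply Finset.sum_congr rfl
    intro x _
    ring
  rw [q2] at q1
  linarith

lemma phi_supp (hu0 : ∀ i ∈ Finset.Icc 1 Ω.card, ∀ x ∉ Ω, u i x = 0)
    (α : Fin n) {k i : ℕ} (hk : k + 1 ≤ Ω.card) (hi : i ∈ Finset.Icc 1 k) :
    ∀ x ∉ Ω, phiF n Ω ρ u α k i x = 0 := by
  intro x hx
  unfold phiF
  rw [Finset.mem_Icc] at hi
  rw [hu0 i (Finset.mem_Icc.mpr ⟨hi.1, by omega⟩) x hx, mul_zero]
  rw [Finset.sum_eq_zero (fun j hj => ?_), sub_zero]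
  rw [Finset.mem_Icc] at hj
  rw [hu0 j (Finset.mem_Icc.mpr ⟨hj.1, by omega⟩) x hx, mul_zero]

lemma ip_phi (horth : ∀ i ∈ Finset.Icc 1 Ω.card, ∀ j ∈ Finset.Icc 1 Ω.card,
      ∑ x ∈ Ω, u i x * u j x * ρ x * deg n = if i = j then 1 else 0)
    (α : Fin n) {k : ℕ} (hk : k + 1 ≤ Ω.card) (i0 : ℕ)
    {j : ℕ} (hj : j ∈ Finset.Icc 1 Ω.card) :
    ip n Ω ρ (phiF n Ω ρ u α k i0) (u j)
      = if j ≤ k then 0 else Ac n Ω ρ u α i0 j := by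
  unfold phiF
  rw [ip_sub_sum_l]
  have hterm : ∀ l ∈ Finset.Icc 1 k, Ac n Ω ρ u α i0 l * ip n Ω ρ (u l) (u j)
      = if l = j then Ac n Ω ρ u α i0 l else 0 := by
    intro l hl
    rw [Finset.mem_Icc] at hl
    have : ip n Ω ρ (u l) (u j) = if l = j then 1 else 0 :=
      horth l (Finset.mem_Icc.mpr ⟨hl.1, by omega⟩) j hj
    rw [this]
    by_cases h : l = j <;> simp [h]
  rw [Finset.sum_congr rfl hterm, Finset.sum_ite_eq' (Finset.Icc 1 k) j
    (fun l => Ac n Ω ρ u α i0 l)]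
  rw [Finset.mem_Icc] at hj
  by_cases hjk : j ≤ k
  · rw [if_pos (Finset.mem_Icc.mpr ⟨hj.1, hjk⟩), if_pos hjk]
    exact sub_self _
  · rw [if_neg (fun hc => hjk (Finset.mem_Icc.mp hc).2), if_neg hjk, sub_zero]
    rfl

lemma phi_orth (horth : ∀ i ∈ Finset.Icc 1 Ω.card, ∀ j ∈ Finset.Icc 1 Ω.card,
      ∑ x ∈ Ω, u i x * u j x * ρ x * deg n = if i = j then 1 else 0)
    (α : Fin n) {k : ℕ} (hk : k + 1 ≤ Ω.card) (i0 : ℕ)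
    {j : ℕ} (hj : j ∈ Finset.Icc 1 k) :
    ip n Ω ρ (phiF n Ω ρ u α k i0) (u j) = 0 := by
  rw [Finset.mem_Icc] at hj
  rw [ip_phi horth α hk i0 (Finset.mem_Icc.mpr ⟨hj.1, by omega⟩), if_pos hj.2]

end Alpha

section Alpha2

variable {Ω : Finset (Fin n → ℤ)} {V ρ : (Fin n → ℤ) → ℝ}
variable {u : ℕ → (Fin n → ℤ) → ℝ} {lam : ℕ → ℝ}

lemma ip_quad (F G : (Fin n → ℤ) → ℝ) (a : ℝ) :
    ip n Ω ρ (fun x => a * F x - G x) (fun x => a * F x - G x)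
      = a^2 * ip n Ω ρ F F - 2*a* ip n Ω ρ F G + ip n Ω ρ G G := by
  unfold ip
  have key : ∀ x ∈ Ω, (a * F x - G x) * (a * F x - G x) * ρ x * deg n
      = a^2 * (F x * F x * ρ x * deg n) - 2*a*(F x * G x * ρ x * deg n)
        + G x * G x * ρ x * deg n := by
    intro x _
    ring
  rw [Finset.sum_congr rfl key, Finset.sum_add_distrib, Finset.sum_sub_distrib,
    ← Finset.mul_sum, ← Finset.mul_sum]

lemma WX_expand (hn : 0 < n) (hρ : ∀ x ∈ Ω, 0 < ρ x)
    (hu0 : ∀ i ∈ Finset.Icc 1 Ω.card, ∀ x ∉ Ω, u i x = 0)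
    (horth : ∀ i ∈ Finset.Icc 1 Ω.card, ∀ j ∈ Finset.Icc 1 Ω.card,
      ∑ x ∈ Ω, u i x * u j x * ρ x * deg n = if i = j then 1 else 0)
    (α : Fin n) (i : ℕ) (φ : (Fin n → ℤ) → ℝ) (hφ : ∀ x ∉ Ω, φ x = 0) :
    ∑ x ∈ Ω, gam n (coord α) (u i) x * φ x * deg n
      = ∑ j ∈ Finset.Icc 1 Ω.card, Bc n Ω u α i j * ip n Ω ρ φ (u j) := by
  have hexp := expansion hn hρ hu0 horth φ hφ
  calc ∑ x ∈ Ω, gam n (coord α) (u i) x * φ x * deg n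
      = ∑ x ∈ Ω, ∑ j ∈ Finset.Icc 1 Ω.card,
          ip n Ω ρ φ (u j) * (gam n (coord α) (u i) x * u j x * deg n) := by
        apply Finset.sum_congr rfl
        intro x _
        rw [hexp x, Finset.mul_sum, Finset.sum_mul]
        apply Finset.sum_congr rfl
        intro j _
        ring
    _ = ∑ j ∈ Finset.Icc 1 Ω.card, ∑ x ∈ Ω,
          ip n Ω ρ φ (u j) * (gam n (coord α) (u i) x * u j x * deg n) := Finset.sum_comm
    _ = ∑ j ∈ Finset.Icc 1 Ω.card, Bc n Ω u α i j * ip n Ω ρ φ (u j) := by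
        apply Finset.sum_congr rfl
        intro j _
        rw [← Finset.mul_sum]
        unfold Bc
        ring

lemma qf_phi (hn : 0 < n) (hρ : ∀ x ∈ Ω, 0 < ρ x)
    (hu0 : ∀ i ∈ Finset.Icc 1 Ω.card, ∀ x ∉ Ω, u i x = 0)
    (heig : ∀ i ∈ Finset.Icc 1 Ω.card, ∀ x ∈ Ω,
      -(lap n (u i) x) + V x * u i x = lam i * ρ x * u i x)
    (horth : ∀ i ∈ Finset.Icc 1 Ω.card, ∀ j ∈ Finset.Icc 1 Ω.card,
      ∑ x ∈ Ω, u i x * u j x * ρ x * deg n = if i = j then 1 else 0)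
    (α : Fin n) {k i : ℕ} (hk : k + 1 ≤ Ω.card) (hi : i ∈ Finset.Icc 1 k) :
    qf n Ω V (phiF n Ω ρ u α k i) (phiF n Ω ρ u α k i)
      = lam i * ip n Ω ρ (phiF n Ω ρ u α k i) (phiF n Ω ρ u α k i)
        - 2 * ∑ x ∈ Ω, gam n (coord α) (u i) x * phiF n Ω ρ u α k i x * deg n := by
  have hφ := phi_supp (ρ := ρ) hu0 α hk hi
  have hiN : i ∈ Finset.Icc 1 Ω.card := by
    rw [Finset.mem_Icc] at hi ⊢
    omega
  rw [WX_expand hn hρ hu0 horth α i _ hφ]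
  rw [qf_sq hn hρ hu0 heig horth _ hφ, ip_sq hn hρ hu0 horth _ hφ, Finset.mul_sum,
    Finset.mul_sum, ← Finset.sum_sub_distrib]
  apply Finset.sum_congr rfl
  intro j hj
  rw [ip_phi horth α hk i hj]
  by_cases hjk : j ≤ k
  · rw [if_pos hjk]
    ring
  · rw [if_neg hjk]
    have h := AB_rel hn hu0 heig α hiN hj
    linear_combination Ac n Ω ρ u α i j * h

variable (n) in
noncomputable def gv (Ω : Finset (Fin n → ℤ)) (ρ : (Fin n → ℤ) → ℝ)
    (u : ℕ → (Fin n → ℤ) → ℝ) (α : Fin n) (i : ℕ) : (Fin n → ℤ) → ℝ :=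
  fun x => if x ∈ Ω then -2 * gam n (coord α) (u i) x / ρ x else 0

lemma ip_gv (hρ : ∀ x ∈ Ω, 0 < ρ x) (α : Fin n) (i : ℕ) (H : (Fin n → ℤ) → ℝ) :
    ip n Ω ρ (gv n Ω ρ u α i) H
      = -2 * ∑ x ∈ Ω, gam n (coord α) (u i) x * H x * deg n := by
  unfold ip gv
  rw [Finset.mul_sum]
  apply Finset.sum_congr rfl
  intro x hx
  rw [if_pos hx]
  have : ρ x ≠ 0 := (hρ x hx).ne'
  field_simp

lemma ip_gv_gv (hρ : ∀ x ∈ Ω, 0 < ρ x) (α : Fin n) (i : ℕ) :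
    ip n Ω ρ (gv n Ω ρ u α i) (gv n Ω ρ u α i) = ggc n Ω ρ u α i := by
  unfold ip gv ggc
  apply Finset.sum_congr rfl
  intro x hx
  rw [if_pos hx]
  have : ρ x ≠ 0 := (hρ x hx).ne'
  field_simp

lemma ip_gv_u (hρ : ∀ x ∈ Ω, 0 < ρ x) (α : Fin n) (i j : ℕ) :
    ip n Ω ρ (gv n Ω ρ u α i) (u j) = -2 * Bc n Ω u α i j := by
  rw [ip_gv hρ α i (u j)]
  rfl

lemma starstar (hn : 0 < n) (hρ : ∀ x ∈ Ω, 0 < ρ x)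
    (hu0 : ∀ i ∈ Finset.Icc 1 Ω.card, ∀ x ∉ Ω, u i x = 0)
    (heig : ∀ i ∈ Finset.Icc 1 Ω.card, ∀ x ∈ Ω,
      -(lap n (u i) x) + V x * u i x = lam i * ρ x * u i x)
    (horth : ∀ i ∈ Finset.Icc 1 Ω.card, ∀ j ∈ Finset.Icc 1 Ω.card,
      ∑ x ∈ Ω, u i x * u j x * ρ x * deg n = if i = j then 1 else 0)
    (hmono : ∀ i j : ℕ, 1 ≤ i → i ≤ j → j ≤ Ω.card → lam i ≤ lam j)
    (α : Fin n) {k i : ℕ} (hk : k + 1 ≤ Ω.card) (hi : i ∈ Finset.Icc 1 k) :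
    (lam (k+1) - lam i)^2 * (wc n Ω u α i
        + 2 * ∑ j ∈ Finset.Icc 1 k, Ac n Ω ρ u α i j * Bc n Ω u α i j)
      ≤ (lam (k+1) - lam i) * ggc n Ω ρ u α i
        - 4 * (lam (k+1) - lam i) * ∑ j ∈ Finset.Icc 1 k, (Bc n Ω u α i j)^2 := by
  have hiN : i ∈ Finset.Icc 1 Ω.card := by
    rw [Finset.mem_Icc] at hi ⊢
    omega
  have hsubN : ∀ j ∈ Finset.Icc 1 k, j ∈ Finset.Icc 1 Ω.card := by
    intro j hj
    rw [Finset.mem_Icc] at hj ⊢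
    omega
  set β := lam (k+1) - lam i with hβdef
  set φ := phiF n Ω ρ u α k i with hφdef
  have hφ : ∀ x ∉ Ω, φ x = 0 := phi_supp (ρ := ρ) hu0 α hk hi
  have horthφ : ∀ j ∈ Finset.Icc 1 k, ip n Ω ρ φ (u j) = 0 :=
    fun j hj => phi_orth horth α hk i hj
  have hβ : 0 ≤ β := by
    rw [Finset.mem_Icc] at hi
    have := hmono i (k+1) hi.1 (by omega) hk
    simp only [hβdef]
    linarith
  set WX := ∑ x ∈ Ω, gam n (coord α) (u i) x * φ x * deg n with hWXdef
  set P := ip n Ω ρ φ φ with hPdef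
  have ray : lam (k+1) * P ≤ qf n Ω V φ φ :=
    rayleigh hn hρ hu0 heig horth hmono hk φ hφ horthφ
  have hqf : qf n Ω V φ φ = lam i * P - 2 * WX :=
    qf_phi hn hρ hu0 heig horth α hk hi
  have h2 : β * P ≤ -2 * WX := by
    rw [hqf] at ray
    simp only [hβdef]
    linarith
  have hW2 : -2 * WX = wc n Ω u α i
      + 2 * ∑ j ∈ Finset.Icc 1 k, Ac n Ω ρ u α i j * Bc n Ω u α i j := by
    have hsplit : WX = (∑ x ∈ Ω, gam n (coord α) (u i) x * (coord α x * u i x) * deg n)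
        - ∑ j ∈ Finset.Icc 1 k, Ac n Ω ρ u α i j * Bc n Ω u α i j := by
      simp only [hWXdef, hφdef]
      unfold phiF
      calc ∑ x ∈ Ω, gam n (coord α) (u i) x
              * (coord α x * u i x - ∑ j ∈ Finset.Icc 1 k, Ac n Ω ρ u α i j * u j x)
              * deg n
          = ∑ x ∈ Ω, (gam n (coord α) (u i) x * (coord α x * u i x) * deg n
              - ∑ j ∈ Finset.Icc 1 k, Ac n Ω ρ u α i j
                  * (gam n (coord α) (u i) x * u j x * deg n)) := by
            apply Finset.sum_congr rfl
            intro x _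
            rw [mul_sub, sub_mul, Finset.mul_sum, Finset.sum_mul]
            congr 1
            apply Finset.sum_congr rfl
            intro j _
            ring
        _ = (∑ x ∈ Ω, gam n (coord α) (u i) x * (coord α x * u i x) * deg n)
              - ∑ x ∈ Ω, ∑ j ∈ Finset.Icc 1 k, Ac n Ω ρ u α i j
                  * (gam n (coord α) (u i) x * u j x * deg n) := Finset.sum_sub_distrib _ _
        _ = (∑ x ∈ Ω, gam n (coord α) (u i) x * (coord α x * u i x) * deg n)
              - ∑ j ∈ Finset.Icc 1 k, Ac n Ω ρ u α i j * Bc n Ω u α i j := by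
            rw [Finset.sum_comm]
            congr 1
            apply Finset.sum_congr rfl
            intro j _
            rw [← Finset.mul_sum]
            unfold Bc
            rfl
    rw [hsplit]
    unfold wc
    ring
  set gh : (Fin n → ℤ) → ℝ := fun x => gv n Ω ρ u α i x
      - ∑ j ∈ Finset.Icc 1 k, (-2 * Bc n Ω u α i j) * u j x with hghdef
  have hgh_any : ∀ H : (Fin n → ℤ) → ℝ, ip n Ω ρ gh H
      = ip n Ω ρ (gv n Ω ρ u α i) H
        - ∑ j ∈ Finset.Icc 1 k, (-2 * Bc n Ω u α i j) * ip n Ω ρ (u j) H := by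
    intro H
    simp only [hghdef]
    rw [ip_sub_sum_l]
  have hghφ : ip n Ω ρ gh φ = -2 * WX := by
    rw [hgh_any φ]
    have hz : ∑ j ∈ Finset.Icc 1 k, (-2 * Bc n Ω u α i j) * ip n Ω ρ (u j) φ = 0 :=
      Finset.sum_eq_zero (fun j hj => by rw [ip_comm (u j) φ, horthφ j hj, mul_zero])
    rw [hz, sub_zero, ip_gv hρ α i φ]
  have hghu : ∀ l ∈ Finset.Icc 1 k, ip n Ω ρ gh (u l) = 0 := by
    intro l hl
    rw [hgh_any (u l), ip_gv_u hρ]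
    have hterm : ∀ j ∈ Finset.Icc 1 k, (-2 * Bc n Ω u α i j) * ip n Ω ρ (u j) (u l)
        = if j = l then -2 * Bc n Ω u α i j else 0 := by
      intro j hj
      have := horth j (hsubN j hj) l (hsubN l hl)
      rw [show ip n Ω ρ (u j) (u l) = if j = l then 1 else 0 from this]
      by_cases h : j = l <;> simp [h]
    rw [Finset.sum_congr rfl hterm, Finset.sum_ite_eq' (Finset.Icc 1 k) l, if_pos hl]
    ring
  have hghgh : ip n Ω ρ gh gh = ggc n Ω ρ u α i
      - 4 * ∑ j ∈ Finset.Icc 1 k, (Bc n Ω u α i j)^2 := by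
    have e1 : ip n Ω ρ gh gh = ip n Ω ρ gh (gv n Ω ρ u α i) := by
      rw [ip_comm gh gh, hgh_any gh]
      have hz : ∑ j ∈ Finset.Icc 1 k, (-2 * Bc n Ω u α i j) * ip n Ω ρ (u j) gh = 0 :=
        Finset.sum_eq_zero (fun j hj => by
          rw [ip_comm (u j) gh, hghu j hj, mul_zero])
      rw [hz, sub_zero, ip_comm]
    rw [e1, hgh_any (gv n Ω ρ u α i), ip_gv_gv hρ]
    have hterm : ∀ j ∈ Finset.Icc 1 k,
        (-2 * Bc n Ω u α i j) * ip n Ω ρ (u j) (gv n Ω ρ u α i)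
          = 4 * (Bc n Ω u α i j)^2 := by
      intro j _
      rw [ip_comm (u j) (gv n Ω ρ u α i), ip_gv_u hρ]
      ring
    rw [Finset.sum_congr rfl hterm, ← Finset.mul_sum]
  have hquad : 0 ≤ β^2 * P - 2*β* ip n Ω ρ φ gh + ip n Ω ρ gh gh := by
    have := ip_nonneg (n := n) hρ (fun x => β * φ x - gh x)
    rw [ip_quad φ gh β] at this
    exact this
  have hφgh : ip n Ω ρ φ gh = -2 * WX := by
    rw [ip_comm]
    exact hghφ
  rw [hφgh, hghgh] at hquad
  have e2 : 0 ≤ β^2 * (-2 * WX - β * P) :=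
    mul_nonneg (sq_nonneg β) (by linarith)
  have e1 : 0 ≤ β * (β^2 * P - 2*β*(-2*WX)
      + (ggc n Ω ρ u α i - 4 * ∑ j ∈ Finset.Icc 1 k, (Bc n Ω u α i j)^2)) :=
    mul_nonneg hβ hquad
  have key : β^2 * (-2 * WX) ≤ β * ggc n Ω ρ u α i
      - 4 * β * ∑ j ∈ Finset.Icc 1 k, (Bc n Ω u α i j)^2 := by
    nlinarith [e1, e2]
  rw [← hW2]
  exact key

end Alpha2


section StarSec

variable {n : ℕ} {Ω : Finset (Fin n → ℤ)} {V ρ : (Fin n → ℤ) → ℝ}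
variable {u : ℕ → (Fin n → ℤ) → ℝ} {lam : ℕ → ℝ}

lemma antisym_sum (s : Finset ℕ) (F : ℕ → ℕ → ℝ)
    (h : ∀ i ∈ s, ∀ j ∈ s, F i j + F j i = 0) :
    ∑ i ∈ s, ∑ j ∈ s, F i j = 0 := by
  have h2 : (∑ i ∈ s, ∑ j ∈ s, F i j) + (∑ i ∈ s, ∑ j ∈ s, F j i) = 0 := by
    rw [← Finset.sum_add_distrib]
    apply Finset.sum_eq_zero
    intro i hi
    rw [← Finset.sum_add_distrib]
    exact Finset.sum_eq_zero (fun j hj => h i hi j hj)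
  have h3 : ∑ i ∈ s, ∑ j ∈ s, F j i = ∑ i ∈ s, ∑ j ∈ s, F i j := Finset.sum_comm
  linarith

lemma star (hn : 0 < n) (hρ : ∀ x ∈ Ω, 0 < ρ x)
    (hu0 : ∀ i ∈ Finset.Icc 1 Ω.card, ∀ x ∉ Ω, u i x = 0)
    (heig : ∀ i ∈ Finset.Icc 1 Ω.card, ∀ x ∈ Ω,
      -(lap n (u i) x) + V x * u i x = lam i * ρ x * u i x)
    (horth : ∀ i ∈ Finset.Icc 1 Ω.card, ∀ j ∈ Finset.Icc 1 Ω.card,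
      ∑ x ∈ Ω, u i x * u j x * ρ x * deg n = if i = j then 1 else 0)
    (hmono : ∀ i j : ℕ, 1 ≤ i → i ≤ j → j ≤ Ω.card → lam i ≤ lam j)
    (α : Fin n) {k : ℕ} (hk : k + 1 ≤ Ω.card) :
    ∑ i ∈ Finset.Icc 1 k, (lam (k+1) - lam i)^2 * wc n Ω u α i
      ≤ ∑ i ∈ Finset.Icc 1 k, (lam (k+1) - lam i) * ggc n Ω ρ u α i := by
  have hsubN : ∀ j ∈ Finset.Icc 1 k, j ∈ Finset.Icc 1 Ω.card := by
    intro j hj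
    rw [Finset.mem_Icc] at hj ⊢
    omega
  have hsum : ∑ i ∈ Finset.Icc 1 k, (lam (k+1) - lam i)^2 * (wc n Ω u α i
        + 2 * ∑ j ∈ Finset.Icc 1 k, Ac n Ω ρ u α i j * Bc n Ω u α i j)
      ≤ ∑ i ∈ Finset.Icc 1 k, ((lam (k+1) - lam i) * ggc n Ω ρ u α i
        - 4 * (lam (k+1) - lam i) * ∑ j ∈ Finset.Icc 1 k, (Bc n Ω u α i j)^2) :=
    Finset.sum_le_sum (fun i hi => starstar hn hρ hu0 heig horth hmono α hk hi)
  have hzero : ∑ i ∈ Finset.Icc 1 k, ∑ j ∈ Finset.Icc 1 k,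
      (2 * (lam (k+1) - lam i)^2 * (Ac n Ω ρ u α i j * Bc n Ω u α i j)
        + 4 * (lam (k+1) - lam i) * (Bc n Ω u α i j)^2) = 0 := by
    apply antisym_sum
    intro i hi j hj
    have r1 := AB_rel (V := V) hn hu0 heig α (hsubN i hi) (hsubN j hj)
    have r2 := AB_rel (V := V) hn hu0 heig α (hsubN j hj) (hsubN i hi)
    have hA : Ac n Ω ρ u α j i = Ac n Ω ρ u α i j := Ac_symm α j i
    have hB : Bc n Ω u α j i = - Bc n Ω u α i j := by
      rw [hA] at r2
      linarith
    rw [hA, hB]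
    linear_combination (2 * Bc n Ω u α i j * (2 * lam (k+1) - lam i - lam j)) * r1
  have eL : ∑ i ∈ Finset.Icc 1 k, (lam (k+1) - lam i)^2 * (wc n Ω u α i
        + 2 * ∑ j ∈ Finset.Icc 1 k, Ac n Ω ρ u α i j * Bc n Ω u α i j)
      = (∑ i ∈ Finset.Icc 1 k, (lam (k+1) - lam i)^2 * wc n Ω u α i)
        + ∑ i ∈ Finset.Icc 1 k, ∑ j ∈ Finset.Icc 1 k,
            2 * (lam (k+1) - lam i)^2 * (Ac n Ω ρ u α i j * Bc n Ω u α i j) := by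
    rw [← Finset.sum_add_distrib]
    apply Finset.sum_congr rfl
    intro i _
    rw [mul_add, Finset.mul_sum]
    congr 1
    rw [Finset.mul_sum]
    apply Finset.sum_congr rfl
    intro j _
    ring
  have eR : ∑ i ∈ Finset.Icc 1 k, ((lam (k+1) - lam i) * ggc n Ω ρ u α i
        - 4 * (lam (k+1) - lam i) * ∑ j ∈ Finset.Icc 1 k, (Bc n Ω u α i j)^2)
      = (∑ i ∈ Finset.Icc 1 k, (lam (k+1) - lam i) * ggc n Ω ρ u α i)
        - ∑ i ∈ Finset.Icc 1 k, ∑ j ∈ Finset.Icc 1 k,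
            4 * (lam (k+1) - lam i) * (Bc n Ω u α i j)^2 := by
    rw [← Finset.sum_sub_distrib]
    apply Finset.sum_congr rfl
    intro i _
    congr 1
    rw [Finset.mul_sum]
  have esplit : ∑ i ∈ Finset.Icc 1 k, ∑ j ∈ Finset.Icc 1 k,
        (2 * (lam (k+1) - lam i)^2 * (Ac n Ω ρ u α i j * Bc n Ω u α i j)
          + 4 * (lam (k+1) - lam i) * (Bc n Ω u α i j)^2)
      = (∑ i ∈ Finset.Icc 1 k, ∑ j ∈ Finset.Icc 1 k,
            2 * (lam (k+1) - lam i)^2 * (Ac n Ω ρ u α i j * Bc n Ω u α i j))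
        + ∑ i ∈ Finset.Icc 1 k, ∑ j ∈ Finset.Icc 1 k,
            4 * (lam (k+1) - lam i) * (Bc n Ω u α i j)^2 := by
    rw [← Finset.sum_add_distrib]
    apply Finset.sum_congr rfl
    intro i _
    rw [← Finset.sum_add_distrib]
  rw [eL] at hsum
  rw [eR] at hsum
  rw [esplit] at hzero
  linarith


end StarSec

section FinalSec

variable {n : ℕ} {Ω : Finset (Fin n → ℤ)} {V ρ : (Fin n → ℤ) → ℝ}
variable {u : ℕ → (Fin n → ℤ) → ℝ} {lam : ℕ → ℝ}

lemma wc_eq (hn : 0 < n)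
    (hu0 : ∀ i ∈ Finset.Icc 1 Ω.card, ∀ x ∉ Ω, u i x = 0)
    (α : Fin n) {i : ℕ} (hi : i ∈ Finset.Icc 1 Ω.card) :
    wc n Ω u α i = (∑ x ∈ Ω, (u i x)^2) - 2 * Rc n Ω u α i := by
  have hd : deg n ≠ 0 := deg_ne_zero hn
  -- step a : rewrite wc as edge sum over Ω
  have ha : wc n Ω u α i = - ∑ x ∈ Ω, ∑ p : Fin n × Bool,
      (coord α (nb x p) - coord α x) * (u i (nb x p) - u i x)
        * (coord α x * u i x) := by
    unfold wc
    rw [Finset.mul_sum, ← Finset.sum_neg_distrib]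
    apply Finset.sum_congr rfl
    intro x _
    rw [gam_eq hn, show ∑ p : Fin n × Bool, (coord α (nb x p) - coord α x)
        * (u i (nb x p) - u i x) * (coord α x * u i x)
      = (∑ p : Fin n × Bool, (coord α (nb x p) - coord α x)
          * (u i (nb x p) - u i x)) * (coord α x * u i x) from (Finset.sum_mul _ _ _).symm]
    field_simp
  -- step b : extend to TT
  have hb : ∑ x ∈ Ω, ∑ p : Fin n × Bool,
      (coord α (nb x p) - coord α x) * (u i (nb x p) - u i x) * (coord α x * u i x)
      = ∑ x ∈ TT n Ω, ∑ p : Fin n × Bool,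
        (coord α (nb x p) - coord α x) * (u i (nb x p) - u i x)
          * (coord α x * u i x) := by
    apply Finset.sum_subset (omega_subset_TT Ω)
    intro x _ hx
    apply Finset.sum_eq_zero
    intro p _
    rw [hu0 i hi x hx]
    ring
  -- step c : flip
  have hc : ∑ x ∈ TT n Ω, ∑ p : Fin n × Bool,
      (coord α (nb x p) - coord α x) * (u i (nb x p) - u i x) * (coord α x * u i x)
      = ∑ x ∈ TT n Ω, ∑ p : Fin n × Bool,
        (coord α (nb x p) - coord α x) * (u i (nb x p) - u i x)
          * (coord α (nb x p) * u i (nb x p)) := by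
    rw [edge_flip (TT n Ω) (fun x p => (coord α (nb x p) - coord α x)
      * (u i (nb x p) - u i x) * (coord α x * u i x))]
    · apply Finset.sum_congr rfl
      intro x _
      apply Finset.sum_congr rfl
      intro p _
      rw [nb_nb]
      ring
    · intro x p hW
      have hux : u i x ≠ 0 := by
        intro hc0
        apply hW
        rw [hc0]
        ring
      have hxΩ : x ∈ Ω := by
        by_contra hc0
        exact hux (hu0 i hi x hc0)
      exact ⟨mem_TT_left hxΩ, nb_mem_TT hxΩ p⟩
  -- step e : two-sum identity
  have he : (2:ℝ) * ∑ x ∈ TT n Ω, ∑ p : Fin n × Bool,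
      (coord α (nb x p) - coord α x) * (u i (nb x p) - u i x) * (coord α x * u i x)
      = (1/2) * (∑ x ∈ TT n Ω, ∑ p : Fin n × Bool,
          ((coord α (nb x p))^2 - (coord α x)^2) * ((u i (nb x p))^2 - (u i x)^2))
        + (1/2) * ∑ x ∈ TT n Ω, ∑ p : Fin n × Bool,
          (coord α (nb x p) - coord α x)^2 * (u i (nb x p) - u i x)^2 := by
    calc (2:ℝ) * ∑ x ∈ TT n Ω, ∑ p : Fin n × Bool,
        (coord α (nb x p) - coord α x) * (u i (nb x p) - u i x) * (coord α x * u i x)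
        = (∑ x ∈ TT n Ω, ∑ p : Fin n × Bool,
            (coord α (nb x p) - coord α x) * (u i (nb x p) - u i x)
              * (coord α x * u i x))
          + ∑ x ∈ TT n Ω, ∑ p : Fin n × Bool,
            (coord α (nb x p) - coord α x) * (u i (nb x p) - u i x)
              * (coord α (nb x p) * u i (nb x p)) := by
          rw [← hc]
          ring
      _ = ∑ x ∈ TT n Ω, ∑ p : Fin n × Bool,
            ((coord α (nb x p) - coord α x) * (u i (nb x p) - u i x)
              * (coord α x * u i x)
            + (coord α (nb x p) - coord α x) * (u i (nb x p) - u i x)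
              * (coord α (nb x p) * u i (nb x p))) := by
          rw [← Finset.sum_add_distrib]
          apply Finset.sum_congr rfl
          intro x _
          rw [← Finset.sum_add_distrib]
      _ = ∑ x ∈ TT n Ω, ∑ p : Fin n × Bool,
            ((1/2) * (((coord α (nb x p))^2 - (coord α x)^2)
                * ((u i (nb x p))^2 - (u i x)^2))
              + (1/2) * ((coord α (nb x p) - coord α x)^2
                * (u i (nb x p) - u i x)^2)) := by
          apply Finset.sum_congr rfl
          intro x _
          apply Finset.sum_congr rfl
          intro p _
          ring
      _ = (1/2) * (∑ x ∈ TT n Ω, ∑ p : Fin n × Bool,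
            ((coord α (nb x p))^2 - (coord α x)^2) * ((u i (nb x p))^2 - (u i x)^2))
          + (1/2) * ∑ x ∈ TT n Ω, ∑ p : Fin n × Bool,
            (coord α (nb x p) - coord α x)^2 * (u i (nb x p) - u i x)^2 := by
          rw [Finset.mul_sum, Finset.mul_sum, ← Finset.sum_add_distrib]
          apply Finset.sum_congr rfl
          intro x _
          rw [Finset.mul_sum, Finset.mul_sum, ← Finset.sum_add_distrib]
  -- step f : green for f², u²
  have hf : ∑ x ∈ TT n Ω, ∑ p : Fin n × Bool,
      ((coord α (nb x p))^2 - (coord α x)^2) * ((u i (nb x p))^2 - (u i x)^2)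
      = -4 * ∑ x ∈ Ω, (u i x)^2 := by
    have hG : ∀ x ∉ Ω, (fun y => (u i y)^2) x = 0 := by
      intro x hx
      simp only
      rw [hu0 i hi x hx]
      ring
    have hgreen := green hn Ω (fun y => (coord α y)^2) (fun y => (u i y)^2) hG
    have hlap : ∀ x, (-(lap n (fun y => (coord α y)^2) x)) * (u i x)^2 * deg n
        = -2 * (u i x)^2 := by
      intro x
      rw [lap_eq hn, c4]
      field_simp
    rw [Finset.sum_congr rfl (fun x _ => hlap x)] at hgreen
    have : ∑ x ∈ Ω, -2 * (u i x)^2 = -2 * ∑ x ∈ Ω, (u i x)^2 := by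
      rw [Finset.mul_sum]
    rw [this] at hgreen
    linarith [hgreen]
  have hR : ∑ x ∈ TT n Ω, ∑ p : Fin n × Bool,
      (coord α (nb x p) - coord α x)^2 * (u i (nb x p) - u i x)^2
      = 8 * Rc n Ω u α i := by
    unfold Rc
    ring
  rw [ha]
  have := he
  rw [hf, hR] at this
  linarith [hb, this]

lemma cs_inner (α : Fin n) (F : (Fin n → ℤ) → ℝ) (x : Fin n → ℤ) :
    (∑ p : Fin n × Bool, (coord α (nb x p) - coord α x) * (F (nb x p) - F x))^2
      ≤ 2 * ∑ p : Fin n × Bool,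
          (coord α (nb x p) - coord α x)^2 * (F (nb x p) - F x)^2 := by
  have hrw : ∑ p : Fin n × Bool, (coord α (nb x p) - coord α x) * (F (nb x p) - F x)
      = ∑ p : Fin n × Bool, (coord α (nb x p) - coord α x)^2
          * ((coord α (nb x p) - coord α x) * (F (nb x p) - F x)) := by
    apply Finset.sum_congr rfl
    intro p _
    linear_combination (-(F (nb x p) - F x)) * (c5 α x p)
  rw [hrw]
  calc (∑ p : Fin n × Bool, (coord α (nb x p) - coord α x)^2
          * ((coord α (nb x p) - coord α x) * (F (nb x p) - F x)))^2
      ≤ (∑ p : Fin n × Bool, ((coord α (nb x p) - coord α x)^2)^2)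
          * ∑ p : Fin n × Bool, ((coord α (nb x p) - coord α x)
              * (F (nb x p) - F x))^2 :=
        Finset.sum_mul_sq_le_sq_mul_sq _ _ _
    _ = 2 * ∑ p : Fin n × Bool,
          (coord α (nb x p) - coord α x)^2 * (F (nb x p) - F x)^2 := by
        have e4 : ∑ p : Fin n × Bool, ((coord α (nb x p) - coord α x)^2)^2 = 2 := by
          have hc6 : ∀ p : Fin n × Bool, ((coord α (nb x p) - coord α x)^2)^2
              = (coord α (nb x p) - coord α x)^2 := by
            intro p
            linear_combination c6 α x p
          rw [Finset.sum_congr rfl (fun p _ => hc6 p)]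
          exact c2 α x
        rw [e4]
        congr 1
        apply Finset.sum_congr rfl
        intro p _
        ring

lemma Rc_nonneg (α : Fin n) (i : ℕ) : 0 ≤ Rc n Ω u α i := by
  unfold Rc
  apply mul_nonneg (by norm_num)
  apply Finset.sum_nonneg
  intro x _
  apply Finset.sum_nonneg
  intro p _
  positivity


lemma ggc_le (hn : 0 < n) (hρ : ∀ x ∈ Ω, 0 < ρ x) {m : ℝ} (hm0 : 0 < m)
    (hm : ∀ x ∈ Ω, m ≤ ρ x) (α : Fin n) (i : ℕ) :
    ggc n Ω ρ u α i ≤ 8 / ((n:ℝ) * m) * Rc n Ω u α i := by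
  have hn' : (0:ℝ) < n := by exact_mod_cast hn
  have hstep : ∀ x ∈ Ω, (2 * gam n (coord α) (u i) x)^2 / ρ x * deg n
      ≤ 1 / ((n:ℝ) * m) * ∑ p : Fin n × Bool,
          (coord α (nb x p) - coord α x)^2 * (u i (nb x p) - u i x)^2 := by
    intro x hx
    have h1 : (2 * gam n (coord α) (u i) x)^2 / ρ x * deg n
        ≤ (2 * gam n (coord α) (u i) x)^2 / m * deg n := by
      apply mul_le_mul_of_nonneg_right _ (deg_pos hn).le
      apply div_le_div_of_nonneg_left (sq_nonneg _) hm0 (hm x hx)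
    apply h1.trans
    have hgam : (2 * gam n (coord α) (u i) x)^2
        = (1 / deg n)^2 * (∑ p : Fin n × Bool, (coord α (nb x p) - coord α x)
            * (u i (nb x p) - u i x))^2 := by
      rw [gam_eq hn]
      ring
    have hcs := cs_inner α (u i) x
    have hd : deg n = 2 * (n:ℝ) := rfl
    have hne : (n:ℝ) ≠ 0 := hn'.ne'
    have key : (1 / deg n)^2 * (∑ p : Fin n × Bool, (coord α (nb x p) - coord α x)
          * (u i (nb x p) - u i x))^2 / m * deg n
        = (∑ p : Fin n × Bool, (coord α (nb x p) - coord α x)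
            * (u i (nb x p) - u i x))^2 / (2 * (n:ℝ) * m) := by
      rw [hd]
      field_simp
    rw [hgam, key, div_le_iff₀ (by positivity)]
    have hrhs : 1 / ((n:ℝ) * m) * (∑ p : Fin n × Bool,
        (coord α (nb x p) - coord α x)^2 * (u i (nb x p) - u i x)^2)
          * (2 * (n:ℝ) * m)
        = 2 * ∑ p : Fin n × Bool,
            (coord α (nb x p) - coord α x)^2 * (u i (nb x p) - u i x)^2 := by
      field_simp
    rw [hrhs]
    exact hcs
  calc ggc n Ω ρ u α i
      ≤ ∑ x ∈ Ω, 1 / ((n:ℝ) * m) * ∑ p : Fin n × Bool,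
          (coord α (nb x p) - coord α x)^2 * (u i (nb x p) - u i x)^2 :=
        Finset.sum_le_sum hstep
    _ ≤ ∑ x ∈ TT n Ω, 1 / ((n:ℝ) * m) * ∑ p : Fin n × Bool,
          (coord α (nb x p) - coord α x)^2 * (u i (nb x p) - u i x)^2 := by
        apply Finset.sum_le_sum_of_subset_of_nonneg (omega_subset_TT Ω)
        intro x _ _
        apply mul_nonneg (by positivity)
        apply Finset.sum_nonneg
        intro p _
        positivity
    _ = 8 / ((n:ℝ) * m) * Rc n Ω u α i := by
        rw [← Finset.mul_sum]
        unfold Rc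
        ring

lemma Rc_sum (hn : 0 < n) (hV : ∀ x ∈ Ω, 0 ≤ V x)
    (hu0 : ∀ i ∈ Finset.Icc 1 Ω.card, ∀ x ∉ Ω, u i x = 0)
    (heig : ∀ i ∈ Finset.Icc 1 Ω.card, ∀ x ∈ Ω,
      -(lap n (u i) x) + V x * u i x = lam i * ρ x * u i x)
    (horth : ∀ i ∈ Finset.Icc 1 Ω.card, ∀ j ∈ Finset.Icc 1 Ω.card,
      ∑ x ∈ Ω, u i x * u j x * ρ x * deg n = if i = j then 1 else 0)
    {i : ℕ} (hi : i ∈ Finset.Icc 1 Ω.card) :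
    ∑ α : Fin n, Rc n Ω u α i ≤ lam i / 4 := by
  have hswap : ∑ α : Fin n, Rc n Ω u α i
      = (1/8) * ∑ x ∈ TT n Ω, ∑ p : Fin n × Bool, (u i (nb x p) - u i x)^2 := by
    unfold Rc
    rw [← Finset.mul_sum]
    congr 1
    rw [Finset.sum_comm]
    apply Finset.sum_congr rfl
    intro x _
    rw [Finset.sum_comm]
    apply Finset.sum_congr rfl
    intro p _
    rw [← Finset.sum_mul, c3, one_mul]
  have hgreen := green hn Ω (u i) (u i) (hu0 i hi)
  have heq : ∑ x ∈ Ω, (-(lap n (u i) x)) * u i x * deg n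
      = lam i - ∑ x ∈ Ω, V x * u i x * u i x * deg n := by
    have hpt : ∀ x ∈ Ω, (-(lap n (u i) x)) * u i x * deg n
        = lam i * (u i x * u i x * ρ x * deg n) - V x * u i x * u i x * deg n := by
      intro x hx
      have h := heig i hi x hx
      linear_combination (u i x * deg n) * h
    rw [Finset.sum_congr rfl hpt, Finset.sum_sub_distrib, ← Finset.mul_sum]
    have h1 := horth i hi i hi
    rw [if_pos rfl] at h1
    rw [h1, mul_one]
  have hVnn : 0 ≤ ∑ x ∈ Ω, V x * u i x * u i x * deg n := by
    apply Finset.sum_nonneg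
    intro x hx
    have h1 := hV x hx
    have h2 : 0 ≤ u i x * u i x := mul_self_nonneg _
    have h3 : (0:ℝ) ≤ deg n := (deg_pos hn).le
    nlinarith [mul_nonneg (mul_nonneg h1 h2) h3]
  rw [hswap]
  rw [heq] at hgreen
  have hconv : ∑ x ∈ TT n Ω, ∑ p : Fin n × Bool,
      (u i (nb x p) - u i x) * (u i (nb x p) - u i x)
      = ∑ x ∈ TT n Ω, ∑ p : Fin n × Bool, (u i (nb x p) - u i x)^2 := by
    apply Finset.sum_congr rfl
    intro x _
    apply Finset.sum_congr rfl
    intro p _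
    ring
  rw [hconv] at hgreen
  linarith [hVnn, hgreen]

lemma unorm (hn : 0 < n) {M : ℝ} (hM : ∀ x ∈ Ω, ρ x ≤ M)
    (horth : ∀ i ∈ Finset.Icc 1 Ω.card, ∀ j ∈ Finset.Icc 1 Ω.card,
      ∑ x ∈ Ω, u i x * u j x * ρ x * deg n = if i = j then 1 else 0)
    {i : ℕ} (hi : i ∈ Finset.Icc 1 Ω.card) :
    1 ≤ M * deg n * ∑ x ∈ Ω, (u i x)^2 := by
  have h1 := horth i hi i hi
  rw [if_pos rfl] at h1
  have h2 : ∑ x ∈ Ω, u i x * u i x * ρ x * deg n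
      ≤ ∑ x ∈ Ω, M * deg n * (u i x)^2 := by
    apply Finset.sum_le_sum
    intro x hx
    have hd : (0:ℝ) ≤ deg n := (deg_pos hn).le
    nlinarith [mul_self_nonneg (u i x), hM x hx, mul_nonneg (mul_self_nonneg (u i x)) hd]
  rw [← Finset.mul_sum] at h2
  linarith


end FinalSec

end Yang

open Yang

/-- Yang's first type inequality for the discrete Schrödinger operator on a
finite subset of `ℤⁿ`. -/
theorem yang_first_type (n : ℕ) (hn : 0 < n) (Ω : Finset (Fin n → ℤ)) (hne : Ω.Nonempty)
    (V ρ : (Fin n → ℤ) → ℝ)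
    (hV : ∀ x ∈ Ω, 0 ≤ V x) (hρ : ∀ x ∈ Ω, 0 < ρ x)
    (lam : ℕ → ℝ) (u : ℕ → (Fin n → ℤ) → ℝ)
    (hu0 : ∀ i ∈ Finset.Icc 1 Ω.card, ∀ x ∉ Ω, u i x = 0)
    (heig : ∀ i ∈ Finset.Icc 1 Ω.card, ∀ x ∈ Ω,
      -(lap n (u i) x) + V x * u i x = lam i * ρ x * u i x)
    (horth : ∀ i ∈ Finset.Icc 1 Ω.card, ∀ j ∈ Finset.Icc 1 Ω.card,
      ∑ x ∈ Ω, u i x * u j x * ρ x * deg n = if i = j then 1 else 0)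
    (hmono : ∀ i j : ℕ, 1 ≤ i → i ≤ j → j ≤ Ω.card → lam i ≤ lam j)
    (hpos : 0 < lam 1)
    (k : ℕ) (hk1 : 1 ≤ k) (hk2 : k ≤ Ω.card - 1) :
    ∑ i ∈ Finset.Icc 1 k, (lam (k + 1) - lam i) *
        (lam (k + 1) * (Ω.inf' hne ρ / Ω.sup' hne ρ - Ω.inf' hne ρ * lam i)
          - lam i * (Ω.inf' hne ρ / Ω.sup' hne ρ - Ω.inf' hne ρ * lam i + 4 / n))
      ≤ 0 := by
  classical
  have hcard : 0 < Ω.card := Finset.card_pos.mpr hne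
  have hNk : k + 1 ≤ Ω.card := by omega
  have hn' : (0:ℝ) < (n:ℝ) := by exact_mod_cast hn
  set m := Ω.inf' hne ρ with hmdef
  set M := Ω.sup' hne ρ with hMdef
  have hmle : ∀ x ∈ Ω, m ≤ ρ x := fun x hx => Finset.inf'_le ρ hx
  have hMge : ∀ x ∈ Ω, ρ x ≤ M := fun x hx => Finset.le_sup' ρ hx
  have hm0 : 0 < m := by
    obtain ⟨x0, hx0, he⟩ := Finset.exists_mem_eq_inf' hne ρ
    rw [hmdef, he]
    exact hρ x0 hx0
  have hM0 : 0 < M := by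
    obtain ⟨x0, hx0⟩ := hne
    exact lt_of_lt_of_le (hρ x0 hx0) (hMge x0 hx0)
  have hsubN : ∀ i ∈ Finset.Icc 1 k, i ∈ Finset.Icc 1 Ω.card := by
    intro i hi
    rw [Finset.mem_Icc] at hi ⊢
    omega
  have hβ : ∀ i ∈ Finset.Icc 1 k, 0 ≤ lam (k+1) - lam i := by
    intro i hi
    rw [Finset.mem_Icc] at hi
    have := hmono i (k+1) hi.1 (by omega) hNk
    linarith
  -- sum the per-direction inequality over α
  have hsumstar : ∑ i ∈ Finset.Icc 1 k, ∑ α : Fin n,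
        (lam (k+1) - lam i)^2 * wc n Ω u α i
      ≤ ∑ i ∈ Finset.Icc 1 k, ∑ α : Fin n,
        (lam (k+1) - lam i) * ggc n Ω ρ u α i := by
    rw [Finset.sum_comm (s := Finset.Icc 1 k) (t := Finset.univ)]
    rw [Finset.sum_comm (s := Finset.Icc 1 k) (t := Finset.univ)]
    exact Finset.sum_le_sum (fun α _ => star hn hρ hu0 heig horth hmono α hNk)
  -- lower bound for the left side
  have hL : ∀ i ∈ Finset.Icc 1 k,
      (lam (k+1) - lam i)^2 * (1/(2*M) - lam i/2)
        ≤ ∑ α : Fin n, (lam (k+1) - lam i)^2 * wc n Ω u α i := by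
    intro i hi
    rw [← Finset.mul_sum]
    apply mul_le_mul_of_nonneg_left _ (sq_nonneg _)
    have hwci : ∑ α : Fin n, wc n Ω u α i
        = (n:ℝ) * (∑ x ∈ Ω, (u i x)^2) - 2 * ∑ α : Fin n, Rc n Ω u α i := by
      rw [Finset.sum_congr rfl (fun α _ => wc_eq hn hu0 α (hsubN i hi))]
      rw [Finset.sum_sub_distrib, Finset.sum_const, Finset.card_univ, Fintype.card_fin,
        nsmul_eq_mul, ← Finset.mul_sum]
    rw [hwci]
    have h1 : 1 ≤ M * deg n * ∑ x ∈ Ω, (u i x)^2 :=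
      unorm hn hMge horth (hsubN i hi)
    have h2 : ∑ α : Fin n, Rc n Ω u α i ≤ lam i / 4 :=
      Rc_sum hn hV hu0 heig horth (hsubN i hi)
    have hd : deg n = 2*(n:ℝ) := rfl
    rw [hd] at h1
    have h3 : 1/(2*M) ≤ (n:ℝ) * ∑ x ∈ Ω, (u i x)^2 := by
      rw [div_le_iff₀ (by positivity)]
      nlinarith [h1]
    linarith
  -- upper bound for the right side
  have hR : ∀ i ∈ Finset.Icc 1 k,
      ∑ α : Fin n, (lam (k+1) - lam i) * ggc n Ω ρ u α i
        ≤ (lam (k+1) - lam i) * (8/((n:ℝ)*m) * (lam i/4)) := by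
    intro i hi
    rw [← Finset.mul_sum]
    apply mul_le_mul_of_nonneg_left _ (hβ i hi)
    have hg1 : ∑ α : Fin n, ggc n Ω ρ u α i
        ≤ 8/((n:ℝ)*m) * ∑ α : Fin n, Rc n Ω u α i := by
      rw [Finset.mul_sum]
      exact Finset.sum_le_sum (fun α _ => ggc_le hn hρ hm0 hmle α i)
    have h2 : ∑ α : Fin n, Rc n Ω u α i ≤ lam i / 4 :=
      Rc_sum hn hV hu0 heig horth (hsubN i hi)
    have h8 : (0:ℝ) ≤ 8/((n:ℝ)*m) := by positivity
    calc ∑ α : Fin n, ggc n Ω ρ u α i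
        ≤ 8/((n:ℝ)*m) * ∑ α : Fin n, Rc n Ω u α i := hg1
      _ ≤ 8/((n:ℝ)*m) * (lam i/4) := mul_le_mul_of_nonneg_left h2 h8
  -- combine
  have hmain : ∑ i ∈ Finset.Icc 1 k, (lam (k+1) - lam i)^2 * (1/(2*M) - lam i/2)
      ≤ ∑ i ∈ Finset.Icc 1 k, (lam (k+1) - lam i) * (8/((n:ℝ)*m) * (lam i/4)) :=
    le_trans (Finset.sum_le_sum hL) (le_trans hsumstar (Finset.sum_le_sum hR))
  -- rewrite the goal
  have etarget : ∀ i ∈ Finset.Icc 1 k,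
      (lam (k + 1) - lam i) * (lam (k + 1) * (m / M - m * lam i)
          - lam i * (m / M - m * lam i + 4 / (n:ℝ)))
        = 2*m*((lam (k+1) - lam i)^2 * (1/(2*M) - lam i/2))
          - (4/(n:ℝ)) * ((lam (k+1) - lam i) * lam i) := by
    intro i _
    ring
  have erhs : ∀ i ∈ Finset.Icc 1 k,
      2*m*((lam (k+1) - lam i) * (8/((n:ℝ)*m) * (lam i/4)))
        = (4/(n:ℝ)) * ((lam (k+1) - lam i) * lam i) := by
    intro i _
    field_simp
    ring
  calc ∑ i ∈ Finset.Icc 1 k, (lam (k + 1) - lam i) *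
        (lam (k + 1) * (m / M - m * lam i)
          - lam i * (m / M - m * lam i + 4 / (n:ℝ)))
      = ∑ i ∈ Finset.Icc 1 k, (2*m*((lam (k+1) - lam i)^2 * (1/(2*M) - lam i/2))
          - (4/(n:ℝ)) * ((lam (k+1) - lam i) * lam i)) :=
        Finset.sum_congr rfl etarget
    _ = 2*m* (∑ i ∈ Finset.Icc 1 k, (lam (k+1) - lam i)^2 * (1/(2*M) - lam i/2))
          - ∑ i ∈ Finset.Icc 1 k, (4/(n:ℝ)) * ((lam (k+1) - lam i) * lam i) := by
        rw [Finset.sum_sub_distrib, ← Finset.mul_sum]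
    _ ≤ 2*m* (∑ i ∈ Finset.Icc 1 k, (lam (k+1) - lam i) * (8/((n:ℝ)*m) * (lam i/4)))
          - ∑ i ∈ Finset.Icc 1 k, (4/(n:ℝ)) * ((lam (k+1) - lam i) * lam i) := by
        have := mul_le_mul_of_nonneg_left hmain (by linarith : (0:ℝ) ≤ 2*m)
        linarith
    _ = 0 := by
        rw [sub_eq_zero, Finset.mul_sum]
        exact Finset.sum_congr rfl erhs
end

section
/- (Yang's second type inequality for the discrete Schrödinger operator) With the same setup as the discrete Dirichlet Schrödinger problem on a finite set Ω ⊂ ℤⁿ, for any 1 ≤ k ≤ |Ω| − 1: λ_{k+1} ( 1 − (ρ_max/k) Σ_{i=1}^k λ_i ) ≤ (1/k)(1 + 4ρ_max/(n ρ_min)) Σ_{i=1}^k λ_i − (ρ_max/k) Σ_{i=1}^k λ_i². -/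
open Finset

namespace YangAux

variable {n : ℕ}

/-- shifted lattice point -/
def pt (x : Fin n → ℤ) (α : Fin n) (s : ℤ) : Fin n → ℤ := Function.update x α (x α + s)

@[simp] lemma pt_same (x : Fin n → ℤ) (α : Fin n) (s : ℤ) : pt x α s α = x α + s := by
  simp [pt]

lemma pt_other (x : Fin n → ℤ) (α β : Fin n) (s : ℤ) (h : β ≠ α) : pt x α s β = x β := by
  simp [pt, Function.update_of_ne h]

@[simp] lemma pt_pt_cancel₁ (x : Fin n → ℤ) (α : Fin n) : pt (pt x α (-1)) α 1 = x := by
  funext β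
  rcases eq_or_ne β α with rfl | h
  · simp [pt]
  · simp [pt, Function.update_of_ne h]

@[simp] lemma pt_pt_cancel₂ (x : Fin n → ℤ) (α : Fin n) : pt (pt x α 1) α (-1) = x := by
  funext β
  rcases eq_or_ne β α with rfl | h
  · simp [pt]
  · simp [pt, Function.update_of_ne h]

lemma pt_inj (α : Fin n) {s : ℤ} (hs : s = 1 ∨ s = -1) :
    Function.Injective (fun x : Fin n → ℤ => pt x α s) := by
  rcases hs with rfl | rfl
  · exact Function.LeftInverse.injective (g := fun y => pt y α (-1)) fun x => pt_pt_cancel₂ x α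
  · exact Function.LeftInverse.injective (g := fun y => pt y α 1) fun x => pt_pt_cancel₁ x α

lemma mu_pt (x : Fin n → ℤ) (α : Fin n) {s : ℤ} (hs : s = 1 ∨ s = -1) :
    mu n x (pt x α s) = 1 := by
  have hsum : (∑ i, |x i - pt x α s i|) = 1 := by
    rw [Finset.sum_eq_single α]
    · rcases hs with rfl | rfl <;> simp
    · intro β _ hβ
      rw [pt_other x α β s hβ]; simp
    · simp
  simp [mu, hsum]

lemma mu_decomp {x y : Fin n → ℤ} (h : mu n x y ≠ 0) :
    ∃ α : Fin n, ∃ s : ℤ, (s = 1 ∨ s = -1) ∧ y = pt x α s := by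
  have hsum : (∑ i, |x i - y i|) = 1 := by
    by_contra hc
    simp [mu, hc] at h
  have hex : ∃ α, x α ≠ y α := by
    by_contra hall
    push_neg at hall
    have : (∑ i, |x i - y i|) = 0 := Finset.sum_eq_zero fun i _ => by simp [hall i]
    omega
  obtain ⟨α, hα⟩ := hex
  have h1 : 1 ≤ |x α - y α| := Int.one_le_abs (sub_ne_zero.2 hα)
  have hsplit : |x α - y α| + ∑ β ∈ univ.erase α, |x β - y β| = ∑ i, |x i - y i| :=
    Finset.add_sum_erase univ (fun i => |x i - y i|) (mem_univ α)
  have hrest : 0 ≤ ∑ β ∈ univ.erase α, |x β - y β| :=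
    Finset.sum_nonneg fun β _ => abs_nonneg _
  have habs : |x α - y α| = 1 := by omega
  have hzero : ∑ β ∈ univ.erase α, |x β - y β| = 0 := by omega
  have hz : ∀ β ∈ univ.erase α, |x β - y β| = 0 :=
    (Finset.sum_eq_zero_iff_of_nonneg fun β _ => abs_nonneg _).1 hzero
  refine ⟨α, y α - x α, ?_, ?_⟩
  · rcases abs_eq (by norm_num : (0:ℤ) ≤ 1) |>.1 habs with h' | h' <;> omega
  · funext β
    rcases eq_or_ne β α with rfl | hβ
    · simp [pt]
    · rw [pt_other x α β _ hβ]
      have h0 : x β - y β = 0 := abs_eq_zero.1 (hz β (Finset.mem_erase.2 ⟨hβ, mem_univ β⟩))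
      omega

lemma musum (x : Fin n → ℤ) (F : (Fin n → ℤ) → ℝ) :
    ∑ᶠ y, mu n x y * F y = ∑ α : Fin n, (F (pt x α 1) + F (pt x α (-1))) := by
  classical
  set ptf : Fin n × Bool → (Fin n → ℤ) := fun p => pt x p.1 (if p.2 then 1 else -1) with hptf
  have hinj : ∀ p ∈ (univ : Finset (Fin n × Bool)), ∀ q ∈ univ, ptf p = ptf q → p = q := by
    rintro ⟨α, b⟩ - ⟨β, c⟩ - h
    have hvals : ∀ (d : Bool), (if d then (1:ℤ) else -1) = 1 ∨ (if d then (1:ℤ) else -1) = -1 := by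
      intro d; cases d <;> simp
    rcases eq_or_ne α β with rfl | hne
    · have hα := congrFun h α
      simp only [ptf, pt_same] at hα
      have : (if b then (1:ℤ) else -1) = (if c then (1:ℤ) else -1) := by omega
      cases b <;> cases c <;> simp_all
    · have hα := congrFun h α
      have h2 : ptf (β, c) α = x α := pt_other x β α _ hne
      simp only [ptf, pt_same] at hα h2
      rw [h2] at hα
      cases b <;> simp at hα <;> omega
  have hsupp : Function.support (fun y => mu n x y * F y) ⊆
      ↑((univ : Finset (Fin n × Bool)).image ptf) := by
    intro y hy
    have hmu : mu n x y ≠ 0 := fun h0 => hy (by simp [h0])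
    obtain ⟨α, s, hs, rfl⟩ := mu_decomp hmu
    simp only [Finset.coe_image, Set.mem_image, Finset.mem_coe]
    rcases hs with rfl | rfl
    · exact ⟨(α, true), by simp, by simp [ptf]⟩
    · exact ⟨(α, false), by simp, by simp [ptf]⟩
  rw [finsum_eq_sum_of_support_subset _ hsupp, Finset.sum_image hinj, Fintype.sum_prod_type]
  apply Finset.sum_congr rfl
  intro α _
  rw [Fintype.sum_bool]
  have h1 : mu n x (pt x α 1) = 1 := mu_pt x α (Or.inl rfl)
  have h2 : mu n x (pt x α (-1)) = 1 := mu_pt x α (Or.inr rfl)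
  simp only [ptf, if_true, if_false, Bool.false_eq_true]
  rw [h1, h2]; ring

lemma lap_eq (f : (Fin n → ℤ) → ℝ) (x : Fin n → ℤ) :
    lap n f x = (1 / deg n) *
      ∑ α : Fin n, ((f (pt x α 1) - f x) + (f (pt x α (-1)) - f x)) := by
  rw [lap, musum x (fun y => f y - f x)]


lemma sum_eq_sum_of_support {S T : Finset (Fin n → ℤ)} (F : (Fin n → ℤ) → ℝ)
    (h : ∀ x, F x ≠ 0 → x ∈ S ∧ x ∈ T) : ∑ x ∈ S, F x = ∑ x ∈ T, F x := by
  classical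
  have h1 : ∑ x ∈ S, F x = ∑ x ∈ S ∩ T, F x := by
    refine (Finset.sum_subset Finset.inter_subset_left ?_).symm
    intro x hx hnx
    by_contra h0
    exact hnx (Finset.mem_inter.2 ⟨hx, (h x h0).2⟩)
  have h2 : ∑ x ∈ T, F x = ∑ x ∈ S ∩ T, F x := by
    refine (Finset.sum_subset Finset.inter_subset_right ?_).symm
    intro x hx hnx
    by_contra h0
    exact hnx (Finset.mem_inter.2 ⟨(h x h0).1, hx⟩)
  rw [h1, h2]

variable (Ω : Finset (Fin n → ℤ))

/-- Ω together with all lattice neighbours of points of Ω. -/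
def BB : Finset (Fin n → ℤ) :=
  Ω ∪ Ω.biUnion fun z =>
    (univ : Finset (Fin n × Bool)).image fun p => pt z p.1 (if p.2 then 1 else -1)

lemma mem_BB {x} (hx : x ∈ Ω) : x ∈ BB Ω := Finset.mem_union_left _ hx

lemma pt_mem_BB {x} (hx : x ∈ Ω) (α : Fin n) {s : ℤ} (hs : s = 1 ∨ s = -1) :
    pt x α s ∈ BB Ω := by
  apply Finset.mem_union_right
  refine Finset.mem_biUnion.2 ⟨x, hx, Finset.mem_image.2 ?_⟩
  rcases hs with rfl | rfl
  · exact ⟨(α, true), mem_univ _, by simp⟩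
  · exact ⟨(α, false), mem_univ _, by simp⟩

lemma sum_BB_support (F : (Fin n → ℤ) → ℝ) (h : ∀ x, F x ≠ 0 → x ∈ Ω) :
    ∑ x ∈ BB Ω, F x = ∑ x ∈ Ω, F x :=
  sum_eq_sum_of_support F fun x hx => ⟨mem_BB Ω (h x hx), h x hx⟩

lemma sum_pt (F : (Fin n → ℤ) → ℝ) (α : Fin n) (s t : ℤ)
    (hst : (s = 1 ∧ t = -1) ∨ (s = -1 ∧ t = 1))
    (hF : ∀ x, F x ≠ 0 → x ∈ Ω ∨ pt x α t ∈ Ω) :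
    ∑ x ∈ BB Ω, F (pt x α s) = ∑ x ∈ BB Ω, F x := by
  have hs : s = 1 ∨ s = -1 := by
    rcases hst with ⟨rfl, -⟩ | ⟨rfl, -⟩; exacts [Or.inl rfl, Or.inr rfl]
  have ht : t = 1 ∨ t = -1 := by
    rcases hst with ⟨-, rfl⟩ | ⟨-, rfl⟩; exacts [Or.inr rfl, Or.inl rfl]
  have hinv : ∀ y, pt (pt y α t) α s = y := by
    rcases hst with ⟨rfl, rfl⟩ | ⟨rfl, rfl⟩
    · exact fun y => pt_pt_cancel₁ y α
    · exact fun y => pt_pt_cancel₂ y α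
  have h1 : ∑ x ∈ BB Ω, F (pt x α s) = ∑ y ∈ (BB Ω).image (fun x => pt x α s), F y :=
    (Finset.sum_image fun a _ b _ hab => pt_inj α hs hab).symm
  rw [h1]
  apply sum_eq_sum_of_support
  intro y hy
  constructor
  · refine Finset.mem_image.2 ⟨pt y α t, ?_, hinv y⟩
    rcases hF y hy with h | h
    · exact pt_mem_BB Ω h α ht
    · exact mem_BB Ω h
  · rcases hF y hy with h | h
    · exact mem_BB Ω h
    · have := pt_mem_BB Ω h α hs
      rwa [hinv y] at this

/-- weighted inner product over Ω -/
noncomputable def ipw (w f g : (Fin n → ℤ) → ℝ) : ℝ := ∑ x ∈ Ω, f x * g x * w x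

lemma ipw_symm (w f g : (Fin n → ℤ) → ℝ) : ipw Ω w f g = ipw Ω w g f :=
  Finset.sum_congr rfl fun x _ => by ring

lemma ipw_sum_left {β : Type*} (I : Finset β) (c : β → ℝ) (gs : β → (Fin n → ℤ) → ℝ)
    (h w : (Fin n → ℤ) → ℝ) :
    ipw Ω w (fun x => ∑ j ∈ I, c j * gs j x) h = ∑ j ∈ I, c j * ipw Ω w (gs j) h := by
  unfold ipw
  simp only [Finset.sum_mul]
  rw [Finset.sum_comm]
  refine Finset.sum_congr rfl fun j _ => ?_
  rw [Finset.mul_sum]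
  exact Finset.sum_congr rfl fun x _ => by ring

lemma ipw_sub_sum_left {β : Type*} (I : Finset β) (c : β → ℝ) (gs : β → (Fin n → ℤ) → ℝ)
    (f h w : (Fin n → ℤ) → ℝ) :
    ipw Ω w (fun x => f x - ∑ j ∈ I, c j * gs j x) h
      = ipw Ω w f h - ∑ j ∈ I, c j * ipw Ω w (gs j) h := by
  have h1 : ipw Ω w (fun x => f x - ∑ j ∈ I, c j * gs j x) h
      = ipw Ω w f h - ipw Ω w (fun x => ∑ j ∈ I, c j * gs j x) h := by
    unfold ipw
    rw [← Finset.sum_sub_distrib]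
    exact Finset.sum_congr rfl fun x _ => by ring
  rw [h1, ipw_sum_left]

lemma ipw_self_nonneg (w f : (Fin n → ℤ) → ℝ) (hw : ∀ x ∈ Ω, 0 ≤ w x) :
    0 ≤ ipw Ω w f f :=
  Finset.sum_nonneg fun x hx => mul_nonneg (mul_self_nonneg (f x)) (hw x hx)

lemma ipw_cs (w f g : (Fin n → ℤ) → ℝ) (hw : ∀ x ∈ Ω, 0 ≤ w x) :
    (ipw Ω w f g) ^ 2 ≤ ipw Ω w f f * ipw Ω w g g := by
  have key : ∀ a b : ℝ, ∀ x ∈ Ω, a * b * w x = (a * Real.sqrt (w x)) * (b * Real.sqrt (w x)) := by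
    intro a b x hx
    have h := Real.mul_self_sqrt (hw x hx)
    calc a * b * w x = a * b * (Real.sqrt (w x) * Real.sqrt (w x)) := by rw [h]
      _ = _ := by ring
  have e1 : ipw Ω w f g = ∑ x ∈ Ω, (f x * Real.sqrt (w x)) * (g x * Real.sqrt (w x)) :=
    Finset.sum_congr rfl fun x hx => key _ _ x hx
  have e2 : ipw Ω w f f = ∑ x ∈ Ω, (f x * Real.sqrt (w x)) ^ 2 :=
    Finset.sum_congr rfl fun x hx => by rw [key _ _ x hx]; ring
  have e3 : ipw Ω w g g = ∑ x ∈ Ω, (g x * Real.sqrt (w x)) ^ 2 :=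
    Finset.sum_congr rfl fun x hx => by rw [key _ _ x hx]; ring
  rw [e1, e2, e3]
  exact Finset.sum_mul_sq_le_sq_mul_sq Ω _ _

/-- the Dirichlet form -/
noncomputable def dir (f g : (Fin n → ℤ) → ℝ) : ℝ :=
  (1/2) * ∑ x ∈ BB Ω, ∑ α : Fin n,
    ((f (pt x α 1) - f x) * (g (pt x α 1) - g x) +
     (f (pt x α (-1)) - f x) * (g (pt x α (-1)) - g x))

/-- the quadratic form of the Schrödinger operator -/
noncomputable def qf (V : (Fin n → ℤ) → ℝ) (f g : (Fin n → ℤ) → ℝ) : ℝ :=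
  dir Ω f g + ∑ x ∈ Ω, V x * f x * g x * deg n

lemma dir_symm (f g : (Fin n → ℤ) → ℝ) : dir Ω f g = dir Ω g f := by
  unfold dir
  congr 1
  exact Finset.sum_congr rfl fun x _ => Finset.sum_congr rfl fun α _ => by ring

lemma qf_symm (V f g : (Fin n → ℤ) → ℝ) : qf Ω V f g = qf Ω V g f := by
  unfold qf
  rw [dir_symm]
  congr 1
  exact Finset.sum_congr rfl fun x _ => by ring

lemma green (hd : deg n ≠ 0) (f g : (Fin n → ℤ) → ℝ) (hg : ∀ x ∉ Ω, g x = 0) :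
    ∑ x ∈ Ω, -(lap n f x) * g x * deg n = dir Ω f g := by
  classical
  have hpt : ∀ x, -(lap n f x) * g x * deg n
      = ∑ α, ((f x - f (pt x α 1)) * g x + (f x - f (pt x α (-1))) * g x) := by
    intro x
    rw [lap_eq]
    have hfac : ∀ S : ℝ, -((1 / deg n) * S) * g x * deg n = S * (-(g x)) := by
      intro S; field_simp; try ring
    rw [hfac, Finset.sum_mul]
    exact Finset.sum_congr rfl fun α _ => by ring
  rw [Finset.sum_congr rfl fun x _ => hpt x]
  have hsupp : ∀ x, (∑ α, ((f x - f (pt x α 1)) * g x + (f x - f (pt x α (-1))) * g x)) ≠ 0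
      → x ∈ Ω := by
    intro x hx
    by_contra h0
    exact hx (Finset.sum_eq_zero fun α _ => by rw [hg x h0]; ring)
  rw [← sum_BB_support Ω _ hsupp]
  have hA : ∀ α, (∑ x ∈ BB Ω, (f (pt x α 1) - f x) * g (pt x α 1))
      = ∑ x ∈ BB Ω, (f x - f (pt x α (-1))) * g x := by
    intro α
    have hcond : ∀ y, (f (pt y α 1) - f y) * g (pt y α 1) ≠ 0 → y ∈ Ω ∨ pt y α 1 ∈ Ω := by
      intro y hy
      right; by_contra h0
      exact hy (by rw [hg _ h0]; ring)
    have h := sum_pt Ω (fun z => (f (pt z α 1) - f z) * g (pt z α 1)) α (-1) 1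
      (Or.inr ⟨rfl, rfl⟩) hcond
    rw [← h]
    exact Finset.sum_congr rfl fun x _ => by simp only [pt_pt_cancel₁]
  have hB : ∀ α, (∑ x ∈ BB Ω, (f (pt x α (-1)) - f x) * g (pt x α (-1)))
      = ∑ x ∈ BB Ω, (f x - f (pt x α 1)) * g x := by
    intro α
    have hcond : ∀ y, (f (pt y α (-1)) - f y) * g (pt y α (-1)) ≠ 0
        → y ∈ Ω ∨ pt y α (-1) ∈ Ω := by
      intro y hy
      right; by_contra h0
      exact hy (by rw [hg _ h0]; ring)
    have h := sum_pt Ω (fun z => (f (pt z α (-1)) - f z) * g (pt z α (-1))) α 1 (-1)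
      (Or.inl ⟨rfl, rfl⟩) hcond
    rw [← h]
    exact Finset.sum_congr rfl fun x _ => by simp only [pt_pt_cancel₂]
  have perα : ∀ α, (∑ x ∈ BB Ω,
      ((f (pt x α 1) - f x) * (g (pt x α 1) - g x) +
       (f (pt x α (-1)) - f x) * (g (pt x α (-1)) - g x)))
      = 2 * ∑ x ∈ BB Ω, ((f x - f (pt x α 1)) * g x + (f x - f (pt x α (-1))) * g x) := by
    intro α
    have hsplit : ∀ x, ((f (pt x α 1) - f x) * (g (pt x α 1) - g x) +
        (f (pt x α (-1)) - f x) * (g (pt x α (-1)) - g x))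
        = ((f (pt x α 1) - f x) * g (pt x α 1) + (f (pt x α (-1)) - f x) * g (pt x α (-1)))
          - ((f (pt x α 1) - f x) * g x + (f (pt x α (-1)) - f x) * g x) := fun x => by ring
    rw [Finset.sum_congr rfl fun x _ => hsplit x, Finset.sum_sub_distrib,
      Finset.sum_add_distrib, hA α, hB α]
    have hC1 : ∑ x ∈ BB Ω, (f (pt x α 1) - f x) * g x
        = - ∑ x ∈ BB Ω, (f x - f (pt x α 1)) * g x := by
      rw [← Finset.sum_neg_distrib]
      exact Finset.sum_congr rfl fun x _ => by ring
    have hC2 : ∑ x ∈ BB Ω, (f (pt x α (-1)) - f x) * g x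
        = - ∑ x ∈ BB Ω, (f x - f (pt x α (-1))) * g x := by
      rw [← Finset.sum_neg_distrib]
      exact Finset.sum_congr rfl fun x _ => by ring
    rw [Finset.sum_add_distrib, Finset.sum_add_distrib, hC1, hC2]
    ring
  have hR : (∑ x ∈ BB Ω, ∑ α : Fin n,
      ((f (pt x α 1) - f x) * (g (pt x α 1) - g x) +
       (f (pt x α (-1)) - f x) * (g (pt x α (-1)) - g x)))
      = 2 * ∑ x ∈ BB Ω, ∑ α : Fin n,
        ((f x - f (pt x α 1)) * g x + (f x - f (pt x α (-1))) * g x) := by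
    rw [Finset.sum_comm]
    rw [Finset.sum_congr rfl fun α _ => perα α, ← Finset.mul_sum]
    congr 1
    exact Finset.sum_comm
  unfold dir
  rw [hR]
  ring


variable (V ρ : (Fin n → ℤ) → ℝ) (u : ℕ → (Fin n → ℤ) → ℝ) (lam : ℕ → ℝ)

lemma qf_eig (hd : deg n ≠ 0)
    (heig : ∀ i ∈ Finset.Icc 1 Ω.card, ∀ x ∈ Ω,
      -(lap n (u i) x) + V x * u i x = lam i * ρ x * u i x)
    (i : ℕ) (hi : i ∈ Finset.Icc 1 Ω.card)
    (g : (Fin n → ℤ) → ℝ) (hg : ∀ x ∉ Ω, g x = 0) :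
    qf Ω V (u i) g = lam i * ipw Ω (fun x => ρ x * deg n) (u i) g := by
  unfold qf
  rw [← green Ω hd (u i) g hg, ← Finset.sum_add_distrib]
  unfold ipw
  rw [Finset.mul_sum]
  refine Finset.sum_congr rfl fun x hx => ?_
  have h := heig i hi x hx
  linear_combination (g x * deg n) * h

lemma lap_coord (f : (Fin n → ℤ) → ℝ) (x : Fin n → ℤ) (α : Fin n) :
    lap n (fun y => coord α y * f y) x
      = coord α x * lap n f x + (f (pt x α 1) - f (pt x α (-1))) / deg n := by
  rw [lap_eq, lap_eq]
  beta_reduce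
  have key : ∀ β : Fin n,
      ((coord α (pt x β 1) * f (pt x β 1) - coord α x * f x)
        + (coord α (pt x β (-1)) * f (pt x β (-1)) - coord α x * f x))
      = coord α x * ((f (pt x β 1) - f x) + (f (pt x β (-1)) - f x))
        + (if β = α then f (pt x α 1) - f (pt x α (-1)) else 0) := by
    intro β
    rcases eq_or_ne β α with rfl | hβ
    · have c1 : coord β (pt x β 1) = coord β x + 1 := by
        unfold coord; rw [pt_same]; push_cast; ring
      have c2 : coord β (pt x β (-1)) = coord β x - 1 := by
        unfold coord; rw [pt_same]; push_cast; ring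
      rw [c1, c2, if_pos rfl]; ring
    · have c1 : coord α (pt x β 1) = coord α x := by
        unfold coord; rw [pt_other x β α _ (Ne.symm hβ)]
      have c2 : coord α (pt x β (-1)) = coord α x := by
        unfold coord; rw [pt_other x β α _ (Ne.symm hβ)]
      rw [c1, c2, if_neg hβ]; ring
  rw [Finset.sum_congr rfl fun β _ => key β, Finset.sum_add_distrib, ← Finset.mul_sum,
    Finset.sum_ite_eq' univ α, if_pos (mem_univ α)]
  ring

lemma qf_coord (hd : deg n ≠ 0)
    (heig : ∀ i ∈ Finset.Icc 1 Ω.card, ∀ x ∈ Ω,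
      -(lap n (u i) x) + V x * u i x = lam i * ρ x * u i x)
    (i : ℕ) (hi : i ∈ Finset.Icc 1 Ω.card)
    (α : Fin n) (g : (Fin n → ℤ) → ℝ) (hg : ∀ x ∉ Ω, g x = 0) :
    qf Ω V (fun x => coord α x * u i x) g
      = lam i * ipw Ω (fun x => ρ x * deg n) (fun x => coord α x * u i x) g
        + ∑ x ∈ Ω, (-((u i (pt x α 1) - u i (pt x α (-1))) / deg n)) * g x * deg n := by
  unfold qf
  rw [← green Ω hd _ g hg, ← Finset.sum_add_distrib]
  unfold ipw
  rw [Finset.mul_sum, ← Finset.sum_add_distrib]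
  refine Finset.sum_congr rfl fun x hx => ?_
  rw [lap_coord]
  have h := heig i hi x hx
  linear_combination (coord α x * g x * deg n) * h


lemma dir_add_left (f₁ f₂ h : (Fin n → ℤ) → ℝ) :
    dir Ω (fun x => f₁ x + f₂ x) h = dir Ω f₁ h + dir Ω f₂ h := by
  unfold dir
  rw [← mul_add, ← Finset.sum_add_distrib]
  congr 1
  refine Finset.sum_congr rfl fun x _ => ?_
  rw [← Finset.sum_add_distrib]
  exact Finset.sum_congr rfl fun α _ => by ring

lemma dir_smul_left (a : ℝ) (f h : (Fin n → ℤ) → ℝ) :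
    dir Ω (fun x => a * f x) h = a * dir Ω f h := by
  unfold dir
  have key : ∀ x, (∑ α : Fin n,
      ((a * f (pt x α 1) - a * f x) * (h (pt x α 1) - h x) +
       (a * f (pt x α (-1)) - a * f x) * (h (pt x α (-1)) - h x)))
      = a * ∑ α : Fin n, ((f (pt x α 1) - f x) * (h (pt x α 1) - h x) +
       (f (pt x α (-1)) - f x) * (h (pt x α (-1)) - h x)) := by
    intro x
    rw [Finset.mul_sum]
    exact Finset.sum_congr rfl fun α _ => by ring
  rw [Finset.sum_congr rfl fun x _ => key x, ← Finset.mul_sum]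
  ring

lemma qf_add_left (V f₁ f₂ h : (Fin n → ℤ) → ℝ) :
    qf Ω V (fun x => f₁ x + f₂ x) h = qf Ω V f₁ h + qf Ω V f₂ h := by
  unfold qf
  rw [dir_add_left]
  have hV2 : ∑ x ∈ Ω, V x * (fun x => f₁ x + f₂ x) x * h x * deg n
      = ∑ x ∈ Ω, V x * f₁ x * h x * deg n + ∑ x ∈ Ω, V x * f₂ x * h x * deg n := by
    rw [← Finset.sum_add_distrib]
    exact Finset.sum_congr rfl fun x _ => by ring
  rw [hV2]
  ring

lemma qf_smul_left (V : (Fin n → ℤ) → ℝ) (a : ℝ) (f h : (Fin n → ℤ) → ℝ) :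
    qf Ω V (fun x => a * f x) h = a * qf Ω V f h := by
  unfold qf
  rw [dir_smul_left]
  have : ∑ x ∈ Ω, V x * (a * f x) * h x * deg n = a * ∑ x ∈ Ω, V x * f x * h x * deg n := by
    rw [Finset.mul_sum]
    exact Finset.sum_congr rfl fun x _ => by ring
  rw [this]
  ring

lemma qf_zero_left (V h : (Fin n → ℤ) → ℝ) : qf Ω V (fun _ => (0:ℝ)) h = 0 := by
  unfold qf dir
  simp

lemma qf_sum_left (V : (Fin n → ℤ) → ℝ) {β : Type*} [DecidableEq β] (I : Finset β)
    (c : β → ℝ) (gs : β → (Fin n → ℤ) → ℝ) (h : (Fin n → ℤ) → ℝ) :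
    qf Ω V (fun x => ∑ j ∈ I, c j * gs j x) h = ∑ j ∈ I, c j * qf Ω V (gs j) h := by
  induction I using Finset.cons_induction with
  | empty => simpa using qf_zero_left Ω V h
  | cons a s ha ih =>
    have hrw : (fun x => ∑ j ∈ Finset.cons a s ha, c j * gs j x)
        = fun x => c a * gs a x + ∑ j ∈ s, c j * gs j x :=
      funext fun x => Finset.sum_cons ha
    rw [hrw, qf_add_left, qf_smul_left, ih, Finset.sum_cons]

lemma qf_sub_sum_left (V : (Fin n → ℤ) → ℝ) {β : Type*} [DecidableEq β] (I : Finset β)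
    (c : β → ℝ) (gs : β → (Fin n → ℤ) → ℝ) (f h : (Fin n → ℤ) → ℝ) :
    qf Ω V (fun x => f x - ∑ j ∈ I, c j * gs j x) h
      = qf Ω V f h - ∑ j ∈ I, c j * qf Ω V (gs j) h := by
  have hrw : (fun x => f x - ∑ j ∈ I, c j * gs j x)
      = fun x => f x + ∑ j ∈ I, (-(c j)) * gs j x := by
    funext x
    have h0 : ∑ j ∈ I, (-(c j)) * gs j x = -∑ j ∈ I, c j * gs j x := by
      rw [← Finset.sum_neg_distrib]
      exact Finset.sum_congr rfl fun j _ => by ring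
    rw [h0]
    ring
  rw [hrw, qf_add_left, qf_sum_left]
  have h1 : ∑ j ∈ I, (-(c j)) * qf Ω V (gs j) h = -∑ j ∈ I, c j * qf Ω V (gs j) h := by
    rw [← Finset.sum_neg_distrib]
    exact Finset.sum_congr rfl fun j _ => by ring
  rw [h1]
  ring

lemma esum_apply {β γ : Type*} [Fintype γ] (s : Finset β) (F : β → EuclideanSpace ℝ γ)
    (j : γ) : (∑ i ∈ s, F i) j = ∑ i ∈ s, F i j := by
  classical
  induction s using Finset.cons_induction with
  | empty => rfl
  | cons a s ha ih => rw [Finset.sum_cons, Finset.sum_cons, PiLp.add_apply, ih]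

lemma minmax
    (hρ : ∀ x ∈ Ω, 0 < ρ x) (hd : 0 < deg n)
    (hu0 : ∀ i ∈ Finset.Icc 1 Ω.card, ∀ x ∉ Ω, u i x = 0)
    (heig : ∀ i ∈ Finset.Icc 1 Ω.card, ∀ x ∈ Ω,
      -(lap n (u i) x) + V x * u i x = lam i * ρ x * u i x)
    (horth : ∀ i ∈ Finset.Icc 1 Ω.card, ∀ j ∈ Finset.Icc 1 Ω.card,
      ∑ x ∈ Ω, u i x * u j x * ρ x * deg n = if i = j then 1 else 0)
    (hmono : ∀ i j : ℕ, 1 ≤ i → i ≤ j → j ≤ Ω.card → lam i ≤ lam j)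
    (k : ℕ) (hk : k + 1 ≤ Ω.card)
    (φ : (Fin n → ℤ) → ℝ) (hφ0 : ∀ x ∉ Ω, φ x = 0)
    (hφu : ∀ j ∈ Finset.Icc 1 k, ipw Ω (fun x => ρ x * deg n) φ (u j) = 0) :
    lam (k+1) * ipw Ω (fun x => ρ x * deg n) φ φ ≤ qf Ω V φ φ := by
  classical
  set w : (Fin n → ℤ) → ℝ := fun x => ρ x * deg n with hw
  have hwpos : ∀ x ∈ Ω, 0 < w x := fun x hx => mul_pos (hρ x hx) hd
  have hipw_uu : ∀ a b : ℕ, ipw Ω w (u a) (u b) = ∑ x ∈ Ω, u a x * u b x * ρ x * deg n :=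
    fun a b => Finset.sum_congr rfl fun x _ => by rw [hw]; ring
  set ι : ((Fin n → ℤ) → ℝ) → EuclideanSpace ℝ {x // x ∈ Ω} :=
    fun f => WithLp.toLp 2 (fun p : {x // x ∈ Ω} => f p.1 * Real.sqrt (w p.1)) with hι
  have hinner : ∀ f g : (Fin n → ℤ) → ℝ, (inner ℝ (ι f) (ι g) : ℝ) = ipw Ω w f g := by
    intro f g
    have h0 : ipw Ω w f g = ∑ p : {x // x ∈ Ω}, f p.1 * g p.1 * w p.1 :=
      (Finset.sum_coe_sort Ω (fun x => f x * g x * w x)).symm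
    rw [h0, PiLp.inner_apply]
    refine Finset.sum_congr rfl fun p _ => ?_
    simp only [hι, PiLp.toLp_apply, RCLike.inner_apply, conj_trivial]
    have hs := Real.mul_self_sqrt (le_of_lt (hwpos p.1 (Finset.coe_mem p)))
    linear_combination (f p.1 * g p.1) * hs
  set v : Fin Ω.card → EuclideanSpace ℝ {x // x ∈ Ω} := fun i => ι (u (i.1 + 1)) with hv
  have hmem : ∀ i : Fin Ω.card, i.1 + 1 ∈ Finset.Icc 1 Ω.card :=
    fun i => Finset.mem_Icc.2 ⟨Nat.le_add_left 1 i.1, Nat.succ_le_of_lt i.2⟩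
  have horthov : Orthonormal ℝ v := by
    rw [orthonormal_iff_ite]
    intro i j
    rw [hv]
    simp only []
    rw [hinner, hipw_uu, horth _ (hmem i) _ (hmem j)]
    by_cases h : i = j
    · subst h; simp
    · rw [if_neg (fun hc => h (Fin.ext (by omega))), if_neg h]
  have hsp : Submodule.span ℝ (Set.range v) = ⊤ := by
    have hNe : Nonempty (Fin Ω.card) := by
      refine ⟨⟨0, ?_⟩⟩; omega
    exact horthov.linearIndependent.span_eq_top_of_card_eq_finrank
      (by rw [Fintype.card_fin, finrank_euclideanSpace, Fintype.card_coe])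
  have hmemsp : ι φ ∈ Submodule.span ℝ (Set.range v) := by rw [hsp]; trivial
  obtain ⟨c, hc⟩ := (Submodule.mem_span_range_iff_exists_fun ℝ).1 hmemsp
  -- hc : ∑ i, c i • v i = ι φ
  have hinner_vφ : ∀ j : Fin Ω.card, (inner ℝ (v j) (ι φ) : ℝ) = c j := by
    intro j
    rw [← hc]
    exact horthov.inner_right_fintype c j
  have hcoef : ∀ j : Fin Ω.card, c j = ipw Ω w (u (j.1 + 1)) φ := by
    intro j
    rw [← hinner_vφ j, hv]
    exact hinner _ _
  have hpoint : ∀ x, φ x = ∑ i : Fin Ω.card, c i * u (i.1 + 1) x := by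
    intro x
    by_cases hx : x ∈ Ω
    · have h1 := congrArg (fun z : EuclideanSpace ℝ {x // x ∈ Ω} => z ⟨x, hx⟩) hc
      rw [esum_apply] at h1
      simp only [PiLp.smul_apply, smul_eq_mul, hv, hι, PiLp.toLp_apply] at h1
      have hs : Real.sqrt (w x) ≠ 0 := ne_of_gt (Real.sqrt_pos.2 (hwpos x hx))
      have h3 : (∑ i : Fin Ω.card, c i * u (i.1 + 1) x) * Real.sqrt (w x)
          = φ x * Real.sqrt (w x) := by
        rw [Finset.sum_mul, ← h1]
        exact Finset.sum_congr rfl fun i _ => by ring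
      exact (mul_right_cancel₀ hs h3).symm
    · rw [hφ0 x hx]
      exact (Finset.sum_eq_zero fun i _ => by rw [hu0 _ (hmem i) x hx]; ring).symm
  have hphi_eq : φ = fun x => ∑ i : Fin Ω.card, c i * u (i.1 + 1) x := funext hpoint
  have hq : qf Ω V φ φ = ∑ i : Fin Ω.card, c i * (lam (i.1 + 1) * c i) := by
    conv_lhs => rw [hphi_eq]
    rw [qf_sum_left]
    rw [← hphi_eq]
    refine Finset.sum_congr rfl fun i _ => ?_
    rw [qf_eig Ω V ρ u lam (ne_of_gt hd) heig _ (hmem i) φ hφ0, ← hw, ← hcoef i]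
  have hip : ipw Ω w φ φ = ∑ i : Fin Ω.card, c i * c i := by
    rw [← hinner φ φ]
    nth_rewrite 1 [← hc]
    rw [sum_inner]
    refine Finset.sum_congr rfl fun i _ => ?_
    rw [real_inner_smul_left, hinner_vφ i]
  rw [hq, hip, Finset.mul_sum]
  refine Finset.sum_le_sum fun i _ => ?_
  by_cases hik : i.1 + 1 ≤ k
  · have hc0 : c i = 0 := by
      rw [hcoef i, ipw_symm]
      exact hφu _ (Finset.mem_Icc.2 ⟨Nat.le_add_left 1 i.1, hik⟩)
    rw [hc0]
    simp
  · have hlam : lam (k+1) ≤ lam (i.1+1) :=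
      hmono (k+1) (i.1+1) (Nat.le_add_left 1 k) (by omega) (Nat.succ_le_of_lt i.2)
    have h2 := mul_le_mul_of_nonneg_right hlam (mul_self_nonneg (c i))
    calc lam (k+1) * (c i * c i) ≤ lam (i.1+1) * (c i * c i) := h2
      _ = c i * (lam (i.1+1) * c i) := by ring


/-- the commutator function `-2Γ(x_α, u_i)` -/
noncomputable def wfun (u : ℕ → (Fin n → ℤ) → ℝ) (i : ℕ) (α : Fin n) : (Fin n → ℤ) → ℝ :=
  fun x => -((u i (pt x α 1) - u i (pt x α (-1))) / deg n)

noncomputable def aco (Ω : Finset (Fin n → ℤ)) (ρ : (Fin n → ℤ) → ℝ)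
    (u : ℕ → (Fin n → ℤ) → ℝ) (i j : ℕ) (α : Fin n) : ℝ :=
  ipw Ω (fun x => ρ x * deg n) (fun x => coord α x * u i x) (u j)

noncomputable def bco (Ω : Finset (Fin n → ℤ)) (u : ℕ → (Fin n → ℤ) → ℝ)
    (i j : ℕ) (α : Fin n) : ℝ :=
  ipw Ω (fun _ => deg n) (wfun u i α) (u j)

noncomputable def phifun (Ω : Finset (Fin n → ℤ)) (ρ : (Fin n → ℤ) → ℝ)
    (u : ℕ → (Fin n → ℤ) → ℝ) (k i : ℕ) (α : Fin n) : (Fin n → ℤ) → ℝ :=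
  fun x => coord α x * u i x - ∑ j ∈ Finset.Icc 1 k, aco Ω ρ u i j α * u j x

lemma ipw_uu_orth
    (horth : ∀ i ∈ Finset.Icc 1 Ω.card, ∀ j ∈ Finset.Icc 1 Ω.card,
      ∑ x ∈ Ω, u i x * u j x * ρ x * deg n = if i = j then 1 else 0)
    {a b : ℕ} (ha : a ∈ Finset.Icc 1 Ω.card) (hb : b ∈ Finset.Icc 1 Ω.card) :
    ipw Ω (fun x => ρ x * deg n) (u a) (u b) = if a = b then 1 else 0 := by
  rw [show ipw Ω (fun x => ρ x * deg n) (u a) (u b)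
      = ∑ x ∈ Ω, u a x * u b x * ρ x * deg n from
    Finset.sum_congr rfl fun x _ => by ring]
  exact horth a ha b hb

lemma qf_coord' (hd : deg n ≠ 0)
    (heig : ∀ i ∈ Finset.Icc 1 Ω.card, ∀ x ∈ Ω,
      -(lap n (u i) x) + V x * u i x = lam i * ρ x * u i x)
    (i : ℕ) (hi : i ∈ Finset.Icc 1 Ω.card)
    (α : Fin n) (g : (Fin n → ℤ) → ℝ) (hg : ∀ x ∉ Ω, g x = 0) :
    qf Ω V (fun x => coord α x * u i x) g
      = lam i * ipw Ω (fun x => ρ x * deg n) (fun x => coord α x * u i x) g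
        + ipw Ω (fun _ => deg n) (wfun u i α) g := by
  rw [qf_coord Ω V ρ u lam hd heig i hi α g hg]
  rfl

lemma keyIA (hd : 0 < deg n) (hρ : ∀ x ∈ Ω, 0 < ρ x)
    (hu0 : ∀ i ∈ Finset.Icc 1 Ω.card, ∀ x ∉ Ω, u i x = 0)
    (heig : ∀ i ∈ Finset.Icc 1 Ω.card, ∀ x ∈ Ω,
      -(lap n (u i) x) + V x * u i x = lam i * ρ x * u i x)
    (horth : ∀ i ∈ Finset.Icc 1 Ω.card, ∀ j ∈ Finset.Icc 1 Ω.card,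
      ∑ x ∈ Ω, u i x * u j x * ρ x * deg n = if i = j then 1 else 0)
    (hmono : ∀ i j : ℕ, 1 ≤ i → i ≤ j → j ≤ Ω.card → lam i ≤ lam j)
    (k : ℕ) (hk : k + 1 ≤ Ω.card) (i : ℕ) (hik : i ∈ Finset.Icc 1 k) (α : Fin n) :
    (lam (k+1) - lam i) *
        ipw Ω (fun _ => deg n) (wfun u i α) (fun x => coord α x * u i x)
      ≤ ipw Ω (fun x => ρ x * deg n) (fun x => wfun u i α x / ρ x)
            (fun x => wfun u i α x / ρ x)
          - ∑ j ∈ Finset.Icc 1 k, (bco Ω u i j α)^2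
          + (lam (k+1) - lam i) *
              ∑ j ∈ Finset.Icc 1 k, aco Ω ρ u i j α * bco Ω u i j α := by
  classical
  have hsub : ∀ j ∈ Finset.Icc 1 k, j ∈ Finset.Icc 1 Ω.card := by
    intro j hj
    rw [Finset.mem_Icc] at hj ⊢
    omega
  have hiΩ : i ∈ Finset.Icc 1 Ω.card := hsub i hik
  have hkΩ : k + 1 ∈ Finset.Icc 1 Ω.card := Finset.mem_Icc.2 ⟨Nat.le_add_left 1 k, hk⟩
  have hXu0 : ∀ x ∉ Ω, coord α x * u i x = 0 := fun x hx => by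
    rw [hu0 i hiΩ x hx]; ring
  have hφ0 : ∀ x ∉ Ω, phifun Ω ρ u k i α x = 0 := by
    intro x hx
    unfold phifun
    rw [hXu0 x hx, Finset.sum_eq_zero fun j hj => by rw [hu0 j (hsub j hj) x hx]; ring]
    ring
  -- a-coefficients kill inner products with u j
  have hsum_ite : ∀ (c : ℕ → ℝ), ∀ j ∈ Finset.Icc 1 k,
      (∑ l ∈ Finset.Icc 1 k, c l * (if l = j then (1:ℝ) else 0)) = c j := by
    intro c j hj
    rw [Finset.sum_eq_single j]
    · simp
    · intro l _ hl; simp [hl]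
    · intro h; exact absurd hj h
  have hipφu : ∀ j ∈ Finset.Icc 1 k,
      ipw Ω (fun x => ρ x * deg n) (phifun Ω ρ u k i α) (u j) = 0 := by
    intro j hj
    have h0 : ipw Ω (fun x => ρ x * deg n) (phifun Ω ρ u k i α) (u j)
        = ipw Ω (fun x => ρ x * deg n)
            (fun x => coord α x * u i x - ∑ l ∈ Finset.Icc 1 k, aco Ω ρ u i l α * u l x)
            (u j) := rfl
    rw [h0, ipw_sub_sum_left]
    have h1 : ∀ l ∈ Finset.Icc 1 k,
        aco Ω ρ u i l α * ipw Ω (fun x => ρ x * deg n) (u l) (u j)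
          = aco Ω ρ u i l α * (if l = j then (1:ℝ) else 0) := by
      intro l hl
      rw [ipw_uu_orth Ω ρ u horth (hsub l hl) (hsub j hj)]
    rw [Finset.sum_congr rfl h1, hsum_ite _ j hj]
    show aco Ω ρ u i j α - aco Ω ρ u i j α = 0
    ring
  -- value of qf on the trial function
  have hXuφ : ipw Ω (fun x => ρ x * deg n) (phifun Ω ρ u k i α) (phifun Ω ρ u k i α)
      = ipw Ω (fun x => ρ x * deg n) (fun x => coord α x * u i x) (phifun Ω ρ u k i α) := by
    have h0 : ipw Ω (fun x => ρ x * deg n) (phifun Ω ρ u k i α) (phifun Ω ρ u k i α)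
        = ipw Ω (fun x => ρ x * deg n)
            (fun x => coord α x * u i x - ∑ l ∈ Finset.Icc 1 k, aco Ω ρ u i l α * u l x)
            (phifun Ω ρ u k i α) := rfl
    rw [h0, ipw_sub_sum_left]
    have h1 : ∀ l ∈ Finset.Icc 1 k,
        aco Ω ρ u i l α * ipw Ω (fun x => ρ x * deg n) (u l) (phifun Ω ρ u k i α) = 0 := by
      intro l hl
      rw [ipw_symm, hipφu l hl]
      ring
    rw [Finset.sum_congr rfl h1, Finset.sum_const, smul_zero]
    ring
  have hqfφφ : qf Ω V (phifun Ω ρ u k i α) (phifun Ω ρ u k i α)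
      = lam i * ipw Ω (fun x => ρ x * deg n) (phifun Ω ρ u k i α) (phifun Ω ρ u k i α)
        + ipw Ω (fun _ => deg n) (wfun u i α) (phifun Ω ρ u k i α) := by
    have h0 : qf Ω V (phifun Ω ρ u k i α) (phifun Ω ρ u k i α)
        = qf Ω V
            (fun x => coord α x * u i x - ∑ l ∈ Finset.Icc 1 k, aco Ω ρ u i l α * u l x)
            (phifun Ω ρ u k i α) := rfl
    rw [h0, qf_sub_sum_left]
    have h1 : ∀ l ∈ Finset.Icc 1 k,
        aco Ω ρ u i l α * qf Ω V (u l) (phifun Ω ρ u k i α) = 0 := by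
      intro l hl
      rw [qf_eig Ω V ρ u lam (ne_of_gt hd) heig l (hsub l hl) _ hφ0, ipw_symm,
        hipφu l hl]
      ring
    rw [Finset.sum_congr rfl h1, Finset.sum_const, smul_zero,
      qf_coord' Ω V ρ u lam (ne_of_gt hd) heig i hiΩ α _ hφ0, hXuφ]
    ring
  -- (A)
  have hA : (lam (k+1) - lam i) *
      ipw Ω (fun x => ρ x * deg n) (phifun Ω ρ u k i α) (phifun Ω ρ u k i α)
      ≤ ipw Ω (fun _ => deg n) (wfun u i α) (phifun Ω ρ u k i α) := by
    have hmm := minmax Ω V ρ u lam hρ hd hu0 heig horth hmono k hk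
      (phifun Ω ρ u k i α) hφ0 hipφu
    linarith [hmm, hqfφφ.symm.le, hqfφφ.le]
  -- b coefficients
  have hb : ∀ j ∈ Finset.Icc 1 k, bco Ω u i j α = (lam j - lam i) * aco Ω ρ u i j α := by
    intro j hj
    have h1 := qf_coord' Ω V ρ u lam (ne_of_gt hd) heig i hiΩ α (u j)
      (hu0 j (hsub j hj))
    have h2 : qf Ω V (fun x => coord α x * u i x) (u j)
        = lam j * aco Ω ρ u i j α := by
      rw [qf_symm, qf_eig Ω V ρ u lam (ne_of_gt hd) heig j (hsub j hj) _ hXu0, ipw_symm]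
      rfl
    have h3 : bco Ω u i j α = ipw Ω (fun _ => deg n) (wfun u i α) (u j) := rfl
    rw [h2] at h1
    rw [h3]
    have h4 : aco Ω ρ u i j α
        = ipw Ω (fun x => ρ x * deg n) (fun x => coord α x * u i x) (u j) := rfl
    rw [← h4] at h1
    linear_combination -h1
  -- conversion between the ρ-weighted and deg-weighted products
  have hconv : ∀ g : (Fin n → ℤ) → ℝ,
      ipw Ω (fun x => ρ x * deg n) (fun x => wfun u i α x / ρ x) g
        = ipw Ω (fun _ => deg n) (wfun u i α) g := by
    intro g
    refine Finset.sum_congr rfl fun x hx => ?_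
    have h := ne_of_gt (hρ x hx)
    field_simp
    try ring
  set Wf : (Fin n → ℤ) → ℝ :=
    fun x => wfun u i α x / ρ x - ∑ j ∈ Finset.Icc 1 k, bco Ω u i j α * u j x with hWfdef
  have hwρu : ∀ j ∈ Finset.Icc 1 k,
      ipw Ω (fun x => ρ x * deg n) (fun x => wfun u i α x / ρ x) (u j) = bco Ω u i j α := by
    intro j hj
    rw [hconv]
    rfl
  have hWfu : ∀ j ∈ Finset.Icc 1 k, ipw Ω (fun x => ρ x * deg n) Wf (u j) = 0 := by
    intro j hj
    rw [hWfdef, ipw_sub_sum_left]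
    have h1 : ∀ l ∈ Finset.Icc 1 k,
        bco Ω u i l α * ipw Ω (fun x => ρ x * deg n) (u l) (u j)
          = bco Ω u i l α * (if l = j then (1:ℝ) else 0) := fun l hl => by
      rw [ipw_uu_orth Ω ρ u horth (hsub l hl) (hsub j hj)]
    rw [Finset.sum_congr rfl h1, hsum_ite _ j hj, hwρu j hj]
    ring
  have hWfφ : ipw Ω (fun x => ρ x * deg n) Wf (phifun Ω ρ u k i α)
      = ipw Ω (fun _ => deg n) (wfun u i α) (phifun Ω ρ u k i α) := by
    rw [hWfdef, ipw_sub_sum_left]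
    have h1 : ∀ l ∈ Finset.Icc 1 k,
        bco Ω u i l α * ipw Ω (fun x => ρ x * deg n) (u l) (phifun Ω ρ u k i α) = 0 :=
      fun l hl => by rw [ipw_symm, hipφu l hl]; ring
    rw [Finset.sum_congr rfl h1, Finset.sum_const, smul_zero, hconv]
    ring
  have hWfWf : ipw Ω (fun x => ρ x * deg n) Wf Wf
      = ipw Ω (fun x => ρ x * deg n) (fun x => wfun u i α x / ρ x)
            (fun x => wfun u i α x / ρ x)
        - ∑ j ∈ Finset.Icc 1 k, (bco Ω u i j α)^2 := by
    have h0 : ipw Ω (fun x => ρ x * deg n) Wf Wf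
        = ipw Ω (fun x => ρ x * deg n)
            (fun x => wfun u i α x / ρ x - ∑ j ∈ Finset.Icc 1 k, bco Ω u i j α * u j x)
            Wf := rfl
    rw [h0, ipw_sub_sum_left]
    have h2 : ∀ j ∈ Finset.Icc 1 k,
        bco Ω u i j α * ipw Ω (fun x => ρ x * deg n) (u j) Wf = 0 :=
      fun j hj => by rw [ipw_symm, hWfu j hj]; ring
    rw [Finset.sum_congr rfl h2, Finset.sum_const, smul_zero]
    have h3 : ipw Ω (fun x => ρ x * deg n) (fun x => wfun u i α x / ρ x) Wf
        = ipw Ω (fun x => ρ x * deg n) (fun x => wfun u i α x / ρ x)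
              (fun x => wfun u i α x / ρ x)
          - ∑ j ∈ Finset.Icc 1 k, (bco Ω u i j α)^2 := by
      rw [ipw_symm]
      have h4 : ipw Ω (fun x => ρ x * deg n) Wf (fun x => wfun u i α x / ρ x)
          = ipw Ω (fun x => ρ x * deg n)
              (fun x => wfun u i α x / ρ x - ∑ j ∈ Finset.Icc 1 k, bco Ω u i j α * u j x)
              (fun x => wfun u i α x / ρ x) := rfl
      rw [h4, ipw_sub_sum_left]
      have h5 : ∀ j ∈ Finset.Icc 1 k,
          bco Ω u i j α * ipw Ω (fun x => ρ x * deg n) (u j) (fun x => wfun u i α x / ρ x)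
            = (bco Ω u i j α)^2 := fun j hj => by
        rw [ipw_symm, hwρu j hj]; ring
      rw [Finset.sum_congr rfl h5]
    rw [h3]
    ring
  have hwpos : ∀ x ∈ Ω, (0:ℝ) ≤ ρ x * deg n := fun x hx => le_of_lt (mul_pos (hρ x hx) hd)
  have hcs := ipw_cs Ω (fun x => ρ x * deg n) Wf (phifun Ω ρ u k i α) hwpos
  have hQ0 : 0 ≤ ipw Ω (fun x => ρ x * deg n) (phifun Ω ρ u k i α) (phifun Ω ρ u k i α) :=
    ipw_self_nonneg Ω _ _ hwpos
  have hR0 : 0 ≤ ipw Ω (fun x => ρ x * deg n) Wf Wf := ipw_self_nonneg Ω _ _ hwpos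
  have ht : 0 ≤ lam (k+1) - lam i := by
    have h6 := hmono i (k+1) (Finset.mem_Icc.1 hik).1
      (by have := (Finset.mem_Icc.1 hik).2; omega) hk
    linarith
  have hA' : (lam (k+1) - lam i) *
      ipw Ω (fun x => ρ x * deg n) (phifun Ω ρ u k i α) (phifun Ω ρ u k i α)
      ≤ ipw Ω (fun x => ρ x * deg n) Wf (phifun Ω ρ u k i α) := by
    rw [hWfφ]; exact hA
  have hkey : (lam (k+1) - lam i) * ipw Ω (fun x => ρ x * deg n) Wf (phifun Ω ρ u k i α)
      ≤ ipw Ω (fun x => ρ x * deg n) Wf Wf := by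
    rcases le_or_gt (ipw Ω (fun x => ρ x * deg n) Wf (phifun Ω ρ u k i α)) 0 with hP | hP
    · have h7 := mul_nonpos_of_nonneg_of_nonpos ht hP
      linarith
    · nlinarith [mul_le_mul_of_nonneg_left hcs ht, mul_le_mul_of_nonneg_left hA' hR0, hP]
  have hPdec : ipw Ω (fun _ => deg n) (wfun u i α) (phifun Ω ρ u k i α)
      = ipw Ω (fun _ => deg n) (wfun u i α) (fun x => coord α x * u i x)
        - ∑ j ∈ Finset.Icc 1 k, aco Ω ρ u i j α * bco Ω u i j α := by
    rw [ipw_symm]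
    have h0 : ipw Ω (fun _ => deg n) (phifun Ω ρ u k i α) (wfun u i α)
        = ipw Ω (fun _ => deg n)
            (fun x => coord α x * u i x - ∑ j ∈ Finset.Icc 1 k, aco Ω ρ u i j α * u j x)
            (wfun u i α) := rfl
    rw [h0, ipw_sub_sum_left]
    have h5 : ∀ j ∈ Finset.Icc 1 k,
        aco Ω ρ u i j α * ipw Ω (fun _ => deg n) (u j) (wfun u i α)
          = aco Ω ρ u i j α * bco Ω u i j α := fun j hj => by
      rw [ipw_symm]; rfl
    rw [Finset.sum_congr rfl h5]
    congr 1
    exact ipw_symm Ω _ _ _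
  rw [hWfφ, hPdec] at hkey
  rw [hWfWf] at hkey
  have h8 : (lam (k+1) - lam i) *
      ipw Ω (fun _ => deg n) (wfun u i α) (fun x => coord α x * u i x)
    = (lam (k+1) - lam i) *
        (ipw Ω (fun _ => deg n) (wfun u i α) (fun x => coord α x * u i x)
          - ∑ j ∈ Finset.Icc 1 k, aco Ω ρ u i j α * bco Ω u i j α)
      + (lam (k+1) - lam i) * ∑ j ∈ Finset.Icc 1 k, aco Ω ρ u i j α * bco Ω u i j α := by
    ring
  rw [h8]
  linarith [hkey]


lemma coord_pt_up (x : Fin n → ℤ) (α : Fin n) : coord α (pt x α 1) = coord α x + 1 := by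
  unfold coord; rw [pt_same]; push_cast; ring

lemma coord_pt_down (x : Fin n → ℤ) (α : Fin n) : coord α (pt x α (-1)) = coord α x - 1 := by
  unfold coord; rw [pt_same]; push_cast; ring

lemma trace_sum (hd : deg n ≠ 0) (i : ℕ) (hu0i : ∀ x ∉ Ω, u i x = 0) :
    ∑ α : Fin n, ipw Ω (fun _ => deg n) (wfun u i α) (fun x => coord α x * u i x)
      = (n : ℝ) * (∑ x ∈ Ω, u i x * u i x) - dir Ω (u i) (u i) / 2 := by
  classical
  have perα : ∀ α : Fin n,
      ipw Ω (fun _ => deg n) (wfun u i α) (fun x => coord α x * u i x)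
        = (∑ x ∈ BB Ω, u i x * u i x)
          - (1/2) * ∑ x ∈ BB Ω, (u i x - u i (pt x α (-1)))^2 := by
    intro α
    have e1 : ipw Ω (fun _ => deg n) (wfun u i α) (fun x => coord α x * u i x)
        = ∑ x ∈ Ω, (u i (pt x α (-1)) * (coord α x * u i x)
            - u i (pt x α 1) * (coord α x * u i x)) := by
      refine Finset.sum_congr rfl fun x hx => ?_
      show wfun u i α x * ((fun x => coord α x * u i x) x) * deg n = _
      unfold wfun
      field_simp
      ring
    have hsupp : ∀ x, (u i (pt x α (-1)) * (coord α x * u i x)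
        - u i (pt x α 1) * (coord α x * u i x)) ≠ 0 → x ∈ Ω := by
      intro x hx
      by_contra h0
      exact hx (by rw [hu0i x h0]; ring)
    rw [e1, ← sum_BB_support Ω _ hsupp]
    -- reindex the (+1) term
    have hre : ∑ x ∈ BB Ω, u i (pt x α 1) * (coord α x * u i x)
        = ∑ x ∈ BB Ω, u i x * ((coord α x - 1) * u i (pt x α (-1))) := by
      have hcond : ∀ y, u i (pt y α 1) * (coord α y * u i y) ≠ 0
          → y ∈ Ω ∨ pt y α 1 ∈ Ω := by
        intro y hy
        left; by_contra h0
        exact hy (by rw [hu0i y h0]; ring)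
      have h := sum_pt Ω (fun y => u i (pt y α 1) * (coord α y * u i y)) α (-1) 1
        (Or.inr ⟨rfl, rfl⟩) hcond
      rw [← h]
      refine Finset.sum_congr rfl fun x _ => ?_
      show u i (pt (pt x α (-1)) α 1) * (coord α (pt x α (-1)) * u i (pt x α (-1))) = _
      rw [pt_pt_cancel₁, coord_pt_down]
    have hre2 : ∑ x ∈ BB Ω, u i (pt x α (-1)) * u i (pt x α (-1))
        = ∑ x ∈ BB Ω, u i x * u i x := by
      have hcond : ∀ y, u i y * u i y ≠ 0 → y ∈ Ω ∨ pt y α 1 ∈ Ω := by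
        intro y hy
        left; by_contra h0
        exact hy (by rw [hu0i _ h0]; ring)
      exact sum_pt Ω (fun y => u i y * u i y) α (-1) 1 (Or.inr ⟨rfl, rfl⟩) hcond
    have hcomb : ∑ x ∈ BB Ω, (u i (pt x α (-1)) * (coord α x * u i x)
          - u i (pt x α 1) * (coord α x * u i x))
        = ∑ x ∈ BB Ω, u i x * u i (pt x α (-1)) := by
      rw [Finset.sum_sub_distrib, hre, ← Finset.sum_sub_distrib]
      refine Finset.sum_congr rfl fun x _ => ?_
      ring
    rw [hcomb]
    have hsq : ∀ x, u i x * u i (pt x α (-1))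
        = (1/2) * (u i x * u i x) + (1/2) * (u i (pt x α (-1)) * u i (pt x α (-1)))
          - (1/2) * (u i x - u i (pt x α (-1)))^2 := by
      intro x; ring
    rw [Finset.sum_congr rfl fun x _ => hsq x]
    rw [Finset.sum_sub_distrib, Finset.sum_add_distrib, ← Finset.mul_sum, ← Finset.mul_sum,
      ← Finset.mul_sum, hre2]
    ring
  rw [Finset.sum_congr rfl fun α _ => perα α]
  rw [Finset.sum_sub_distrib, Finset.sum_const, ← Finset.mul_sum]
  have hcard : (univ : Finset (Fin n)).card = n := by simp
  rw [hcard]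
  have hBBΩ : ∑ x ∈ BB Ω, u i x * u i x = ∑ x ∈ Ω, u i x * u i x := by
    apply sum_BB_support
    intro x hx
    by_contra h0
    exact hx (by rw [hu0i x h0]; ring)
  rw [hBBΩ]
  have hdir : dir Ω (u i) (u i)
      = ∑ α : Fin n, ∑ x ∈ BB Ω, (u i x - u i (pt x α (-1)))^2 := by
    unfold dir
    rw [Finset.sum_comm]
    have hper : ∀ α : Fin n,
        ∑ x ∈ BB Ω, ((u i (pt x α 1) - u i x) * (u i (pt x α 1) - u i x) +
          (u i (pt x α (-1)) - u i x) * (u i (pt x α (-1)) - u i x))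
        = 2 * ∑ x ∈ BB Ω, (u i x - u i (pt x α (-1)))^2 := by
      intro α
      have hcond : ∀ y, (u i (pt y α 1) - u i y) * (u i (pt y α 1) - u i y) ≠ 0
          → y ∈ Ω ∨ pt y α 1 ∈ Ω := by
        intro y hy
        by_contra h0
        push_neg at h0
        exact hy (by rw [hu0i _ h0.1, hu0i _ h0.2]; ring)
      have h := sum_pt Ω (fun y => (u i (pt y α 1) - u i y) * (u i (pt y α 1) - u i y))
        α (-1) 1 (Or.inr ⟨rfl, rfl⟩) hcond
      have h1 : ∑ x ∈ BB Ω, (u i (pt x α 1) - u i x) * (u i (pt x α 1) - u i x)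
          = ∑ x ∈ BB Ω, (u i x - u i (pt x α (-1)))^2 := by
        rw [← h]
        refine Finset.sum_congr rfl fun x _ => ?_
        show (u i (pt (pt x α (-1)) α 1) - u i (pt x α (-1))) *
            (u i (pt (pt x α (-1)) α 1) - u i (pt x α (-1))) = _
        rw [pt_pt_cancel₁]
        ring
      rw [Finset.sum_add_distrib, h1]
      have h2 : ∑ x ∈ BB Ω, (u i (pt x α (-1)) - u i x) * (u i (pt x α (-1)) - u i x)
          = ∑ x ∈ BB Ω, (u i x - u i (pt x α (-1)))^2 :=
        Finset.sum_congr rfl fun x _ => by ring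
      rw [h2]
      ring
    rw [Finset.sum_congr rfl fun α _ => hper α, ← Finset.mul_sum]
    ring
  rw [hdir]
  ring


lemma mass (hne : Ω.Nonempty) (hd : 0 < deg n)
    (horth : ∀ i ∈ Finset.Icc 1 Ω.card, ∀ j ∈ Finset.Icc 1 Ω.card,
      ∑ x ∈ Ω, u i x * u j x * ρ x * deg n = if i = j then 1 else 0)
    (i : ℕ) (hi : i ∈ Finset.Icc 1 Ω.card) :
    1 ≤ Ω.sup' hne ρ * ((∑ x ∈ Ω, u i x * u i x) * deg n) := by
  have h1 := horth i hi i hi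
  rw [if_pos rfl] at h1
  have h2 : ∑ x ∈ Ω, u i x * u i x * ρ x * deg n
      ≤ ∑ x ∈ Ω, u i x * u i x * Ω.sup' hne ρ * deg n :=
    Finset.sum_le_sum fun x hx => by
      have hle := Finset.le_sup' ρ hx
      exact mul_le_mul_of_nonneg_right
        (mul_le_mul_of_nonneg_left hle (mul_self_nonneg (u i x))) (le_of_lt hd)
  have h3 : ∑ x ∈ Ω, u i x * u i x * Ω.sup' hne ρ * deg n
      = Ω.sup' hne ρ * ((∑ x ∈ Ω, u i x * u i x) * deg n) := by
    rw [Finset.sum_mul, Finset.mul_sum]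
    exact Finset.sum_congr rfl fun x _ => by ring
  linarith

lemma dir_le_lam (hd : 0 < deg n)
    (hV : ∀ x ∈ Ω, 0 ≤ V x)
    (hu0 : ∀ i ∈ Finset.Icc 1 Ω.card, ∀ x ∉ Ω, u i x = 0)
    (heig : ∀ i ∈ Finset.Icc 1 Ω.card, ∀ x ∈ Ω,
      -(lap n (u i) x) + V x * u i x = lam i * ρ x * u i x)
    (horth : ∀ i ∈ Finset.Icc 1 Ω.card, ∀ j ∈ Finset.Icc 1 Ω.card,
      ∑ x ∈ Ω, u i x * u j x * ρ x * deg n = if i = j then 1 else 0)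
    (i : ℕ) (hi : i ∈ Finset.Icc 1 Ω.card) :
    dir Ω (u i) (u i) ≤ lam i := by
  have h1 := qf_eig Ω V ρ u lam (ne_of_gt hd) heig i hi (u i) (hu0 i hi)
  have h2 : ipw Ω (fun x => ρ x * deg n) (u i) (u i) = 1 := by
    rw [ipw_uu_orth Ω ρ u horth hi hi, if_pos rfl]
  have h3 : 0 ≤ ∑ x ∈ Ω, V x * u i x * u i x * deg n :=
    Finset.sum_nonneg fun x hx => by
      nlinarith [mul_nonneg (hV x hx)
        (mul_nonneg (mul_self_nonneg (u i x)) (le_of_lt hd))]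
  have h4 : qf Ω V (u i) (u i)
      = dir Ω (u i) (u i) + ∑ x ∈ Ω, V x * u i x * u i x * deg n := rfl
  rw [h4, h2] at h1
  linarith

lemma quotient_bound (C A B ρx ρm d : ℝ) (hC : C = A - B)
    (hρx : 0 < ρx) (hρm : 0 < ρm) (hle : ρm ≤ ρx) (hd : 0 < d) :
    (-(C/d)/ρx) * (-(C/d)/ρx) * (ρx * d) ≤ (2/(d*ρm)) * (A^2 + B^2) := by
  subst hC
  have h1 : (-((A - B)/d)/ρx) * (-((A - B)/d)/ρx) * (ρx * d) = (A-B)^2 / (d * ρx) := by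
    field_simp
  rw [h1, div_le_iff₀ (by positivity)]
  have h2 : (2/(d*ρm)) * (A^2+B^2) * (d*ρx) = 2*(A^2+B^2) * (ρx/ρm) := by
    field_simp
  rw [h2]
  have h3 : (1:ℝ) ≤ ρx/ρm := (one_le_div hρm).2 hle
  nlinarith [mul_nonneg (by positivity : (0:ℝ) ≤ 2*(A^2+B^2)) (sub_nonneg.2 h3),
    sq_nonneg (A+B)]

lemma wf_sum_bound (hne : Ω.Nonempty) (hd : 0 < deg n) (hρ : ∀ x ∈ Ω, 0 < ρ x)
    (i : ℕ) (hu0i : ∀ x ∉ Ω, u i x = 0) :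
    ∑ α : Fin n, ipw Ω (fun x => ρ x * deg n) (fun x => wfun u i α x / ρ x)
        (fun x => wfun u i α x / ρ x)
      ≤ (4 / (deg n * Ω.inf' hne ρ)) * dir Ω (u i) (u i) := by
  have hρm : 0 < Ω.inf' hne ρ := (Finset.lt_inf'_iff hne).2 hρ
  have hα : ∀ α : Fin n,
      ipw Ω (fun x => ρ x * deg n) (fun x => wfun u i α x / ρ x)
          (fun x => wfun u i α x / ρ x)
        ≤ ∑ x ∈ BB Ω, (2/(deg n * Ω.inf' hne ρ)) *
            ((u i (pt x α 1) - u i x)^2 + (u i (pt x α (-1)) - u i x)^2) := by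
    intro α
    have hstep : ipw Ω (fun x => ρ x * deg n) (fun x => wfun u i α x / ρ x)
          (fun x => wfun u i α x / ρ x)
        ≤ ∑ x ∈ Ω, (2/(deg n * Ω.inf' hne ρ)) *
            ((u i (pt x α 1) - u i x)^2 + (u i (pt x α (-1)) - u i x)^2) := by
      refine Finset.sum_le_sum fun x hx => ?_
      exact quotient_bound (u i (pt x α 1) - u i (pt x α (-1)))
        (u i (pt x α 1) - u i x) (u i (pt x α (-1)) - u i x) (ρ x) (Ω.inf' hne ρ)
        (deg n) (by ring) (hρ x hx) hρm (Finset.inf'_le ρ hx) hd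
    refine le_trans hstep (Finset.sum_le_sum_of_subset_of_nonneg
      (fun x hx => mem_BB Ω hx) ?_)
    intro x _ _
    have hpos : (0:ℝ) ≤ 2/(deg n * Ω.inf' hne ρ) :=
      le_of_lt (div_pos two_pos (mul_pos hd hρm))
    exact mul_nonneg hpos (by positivity)
  refine le_trans (Finset.sum_le_sum fun α _ => hα α) ?_
  rw [Finset.sum_comm]
  simp only [← Finset.mul_sum]
  have hdir2 : ∑ x ∈ BB Ω, ∑ α : Fin n,
      ((u i (pt x α 1) - u i x)^2 + (u i (pt x α (-1)) - u i x)^2)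
      = 2 * dir Ω (u i) (u i) := by
    have h : ∑ x ∈ BB Ω, ∑ α : Fin n,
        ((u i (pt x α 1) - u i x)^2 + (u i (pt x α (-1)) - u i x)^2)
        = ∑ x ∈ BB Ω, ∑ α : Fin n,
          ((u i (pt x α 1) - u i x) * (u i (pt x α 1) - u i x)
            + (u i (pt x α (-1)) - u i x) * (u i (pt x α (-1)) - u i x)) :=
      Finset.sum_congr rfl fun x _ => Finset.sum_congr rfl fun α _ => by ring
    rw [h]
    unfold dir
    ring
  rw [hdir2]
  exact le_of_eq (by ring)

lemma bco_eq (hd : deg n ≠ 0)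
    (hu0 : ∀ i ∈ Finset.Icc 1 Ω.card, ∀ x ∉ Ω, u i x = 0)
    (heig : ∀ i ∈ Finset.Icc 1 Ω.card, ∀ x ∈ Ω,
      -(lap n (u i) x) + V x * u i x = lam i * ρ x * u i x)
    (i j : ℕ) (hi : i ∈ Finset.Icc 1 Ω.card) (hj : j ∈ Finset.Icc 1 Ω.card) (α : Fin n) :
    bco Ω u i j α = (lam j - lam i) * aco Ω ρ u i j α := by
  have hXu0 : ∀ x ∉ Ω, coord α x * u i x = 0 := fun x hx => by rw [hu0 i hi x hx]; ring
  have h1 := qf_coord' Ω V ρ u lam hd heig i hi α (u j) (hu0 j hj)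
  have h2 : qf Ω V (fun x => coord α x * u i x) (u j) = lam j * aco Ω ρ u i j α := by
    rw [qf_symm, qf_eig Ω V ρ u lam hd heig j hj _ hXu0, ipw_symm]
    rfl
  have h3 : bco Ω u i j α = ipw Ω (fun _ => deg n) (wfun u i α) (u j) := rfl
  have h4 : aco Ω ρ u i j α
      = ipw Ω (fun x => ρ x * deg n) (fun x => coord α x * u i x) (u j) := rfl
  rw [h2, ← h4, ← h3] at h1
  linear_combination -h1

lemma aco_symm (i j : ℕ) (α : Fin n) : aco Ω ρ u i j α = aco Ω ρ u j i α := by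
  refine Finset.sum_congr rfl fun x _ => ?_
  show coord α x * u i x * u j x * (ρ x * deg n) = coord α x * u j x * u i x * (ρ x * deg n)
  ring

lemma dsum_nonpos (hd : 0 < deg n)
    (hu0 : ∀ i ∈ Finset.Icc 1 Ω.card, ∀ x ∉ Ω, u i x = 0)
    (heig : ∀ i ∈ Finset.Icc 1 Ω.card, ∀ x ∈ Ω,
      -(lap n (u i) x) + V x * u i x = lam i * ρ x * u i x)
    (k : ℕ) (hk : k + 1 ≤ Ω.card) (α : Fin n) :
    ∑ i ∈ Finset.Icc 1 k, ∑ j ∈ Finset.Icc 1 k,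
      ((lam (k+1) - lam i) * (aco Ω ρ u i j α * bco Ω u i j α) - (bco Ω u i j α)^2) ≤ 0 := by
  classical
  have hsub : ∀ j ∈ Finset.Icc 1 k, j ∈ Finset.Icc 1 Ω.card := by
    intro j hj
    rw [Finset.mem_Icc] at hj ⊢
    omega
  set T : ℕ → ℕ → ℝ := fun i j =>
    (lam (k+1) - lam i) * (aco Ω ρ u i j α * bco Ω u i j α) - (bco Ω u i j α)^2 with hT
  have hpair : ∀ i ∈ Finset.Icc 1 k, ∀ j ∈ Finset.Icc 1 k, T i j + T j i ≤ 0 := by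
    intro i hi j hj
    rw [hT]
    simp only []
    rw [bco_eq Ω V ρ u lam (ne_of_gt hd) hu0 heig i j (hsub i hi) (hsub j hj) α,
      bco_eq Ω V ρ u lam (ne_of_gt hd) hu0 heig j i (hsub j hj) (hsub i hi) α,
      aco_symm Ω ρ u j i α]
    nlinarith [sq_nonneg ((lam j - lam i) * aco Ω ρ u i j α)]
  have hs : (∑ i ∈ Finset.Icc 1 k, ∑ j ∈ Finset.Icc 1 k, T i j)
      + (∑ i ∈ Finset.Icc 1 k, ∑ j ∈ Finset.Icc 1 k, T i j)
      = ∑ i ∈ Finset.Icc 1 k, ∑ j ∈ Finset.Icc 1 k, (T i j + T j i) := by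
    nth_rewrite 2 [Finset.sum_comm]
    rw [← Finset.sum_add_distrib]
    exact Finset.sum_congr rfl fun i _ => by rw [← Finset.sum_add_distrib]
  have h0 : ∑ i ∈ Finset.Icc 1 k, ∑ j ∈ Finset.Icc 1 k, (T i j + T j i) ≤ 0 :=
    Finset.sum_nonpos fun i hi => Finset.sum_nonpos fun j hj => hpair i hi j hj
  linarith


end YangAux

open YangAux in
/-- Yang's second type inequality for the discrete Schrödinger operator on a
finite subset of `ℤⁿ`. -/
theorem yang_second_type (n : ℕ) (hn : 0 < n) (Ω : Finset (Fin n → ℤ)) (hne : Ω.Nonempty)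
    (V ρ : (Fin n → ℤ) → ℝ)
    (hV : ∀ x ∈ Ω, 0 ≤ V x) (hρ : ∀ x ∈ Ω, 0 < ρ x)
    (lam : ℕ → ℝ) (u : ℕ → (Fin n → ℤ) → ℝ)
    (hu0 : ∀ i ∈ Finset.Icc 1 Ω.card, ∀ x ∉ Ω, u i x = 0)
    (heig : ∀ i ∈ Finset.Icc 1 Ω.card, ∀ x ∈ Ω,
      -(lap n (u i) x) + V x * u i x = lam i * ρ x * u i x)
    (horth : ∀ i ∈ Finset.Icc 1 Ω.card, ∀ j ∈ Finset.Icc 1 Ω.card,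
      ∑ x ∈ Ω, u i x * u j x * ρ x * deg n = if i = j then 1 else 0)
    (hmono : ∀ i j : ℕ, 1 ≤ i → i ≤ j → j ≤ Ω.card → lam i ≤ lam j)
    (hpos : 0 < lam 1)
    (k : ℕ) (hk1 : 1 ≤ k) (hk2 : k ≤ Ω.card - 1) :
    lam (k + 1) * (1 - (Ω.sup' hne ρ / k) * ∑ i ∈ Finset.Icc 1 k, lam i)
      ≤ (1 / k) * (1 + 4 * Ω.sup' hne ρ / (n * Ω.inf' hne ρ)) *
          (∑ i ∈ Finset.Icc 1 k, lam i)
        - (Ω.sup' hne ρ / k) * ∑ i ∈ Finset.Icc 1 k, (lam i) ^ 2 := by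
  classical
  have hn0 : (0:ℝ) < n := by exact_mod_cast hn
  have hd : (0:ℝ) < deg n := by
    show (0:ℝ) < 2 * n
    linarith
  have hcard : k + 1 ≤ Ω.card := by
    have := hne.card_pos
    omega
  have hsub : ∀ j ∈ Finset.Icc 1 k, j ∈ Finset.Icc 1 Ω.card := by
    intro j hj
    rw [Finset.mem_Icc] at hj ⊢
    omega
  have hρm0 : 0 < Ω.inf' hne ρ := (Finset.lt_inf'_iff hne).2 hρ
  have hρM0 : 0 < Ω.sup' hne ρ := by
    obtain ⟨x, hx⟩ := hne
    exact lt_of_lt_of_le (hρ x hx) (Finset.le_sup' ρ hx)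
  have hk0 : (0:ℝ) < k := by exact_mod_cast hk1
  -- per-i estimate
  have hperI : ∀ i ∈ Finset.Icc 1 k,
      (lam (k+1) - lam i) * (1/(2 * Ω.sup' hne ρ) - lam i / 2)
        ≤ (4/(deg n * Ω.inf' hne ρ)) * lam i
          + ∑ α : Fin n, ∑ j ∈ Finset.Icc 1 k,
              ((lam (k+1) - lam i) * (aco Ω ρ u i j α * bco Ω u i j α)
                - (bco Ω u i j α)^2) := by
    intro i hi
    have ht : 0 ≤ lam (k+1) - lam i := by
      have h6 := hmono i (k+1) (Finset.mem_Icc.1 hi).1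
        (by have := (Finset.mem_Icc.1 hi).2; omega) hcard
      linarith
    have hkeyS := Finset.sum_le_sum (fun α (_ : α ∈ (univ : Finset (Fin n))) =>
      keyIA Ω V ρ u lam hd hρ hu0 heig horth hmono k hcard i hi α)
    rw [← Finset.mul_sum] at hkeyS
    rw [trace_sum Ω u (ne_of_gt hd) i (hu0 i (hsub i hi))] at hkeyS
    have hmass := mass Ω ρ u hne hd horth i (hsub i hi)
    have hdirle := dir_le_lam Ω V ρ u lam hd hV hu0 heig horth i (hsub i hi)
    have hmass2 : 1/(2 * Ω.sup' hne ρ) ≤ (n:ℝ) * (∑ x ∈ Ω, u i x * u i x) := by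
      rw [div_le_iff₀ (by positivity)]
      have e : Ω.sup' hne ρ * ((∑ x ∈ Ω, u i x * u i x) * deg n)
          = ((n:ℝ) * (∑ x ∈ Ω, u i x * u i x)) * (2 * Ω.sup' hne ρ) := by
        show Ω.sup' hne ρ * ((∑ x ∈ Ω, u i x * u i x) * (2 * (n:ℝ)))
          = ((n:ℝ) * (∑ x ∈ Ω, u i x * u i x)) * (2 * Ω.sup' hne ρ)
        ring
      linarith [hmass, e.le, e.ge]
    have hlow : (lam (k+1) - lam i) * (1/(2 * Ω.sup' hne ρ) - lam i/2)
        ≤ (lam (k+1) - lam i) *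
            ((n:ℝ) * (∑ x ∈ Ω, u i x * u i x) - dir Ω (u i) (u i)/2) := by
      apply mul_le_mul_of_nonneg_left _ ht
      linarith
    have hwf := wf_sum_bound Ω ρ u hne hd hρ i (hu0 i (hsub i hi))
    have hcoef : (0:ℝ) ≤ 4/(deg n * Ω.inf' hne ρ) :=
      le_of_lt (div_pos (by norm_num) (mul_pos hd hρm0))
    have hwf2 : ∑ α : Fin n, ipw Ω (fun x => ρ x * deg n)
          (fun x => wfun u i α x / ρ x) (fun x => wfun u i α x / ρ x)
        ≤ (4/(deg n * Ω.inf' hne ρ)) * lam i :=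
      le_trans hwf (mul_le_mul_of_nonneg_left hdirle hcoef)
    have hsplitα : ∑ α : Fin n,
        (ipw Ω (fun x => ρ x * deg n) (fun x => wfun u i α x / ρ x)
            (fun x => wfun u i α x / ρ x)
          - ∑ j ∈ Finset.Icc 1 k, (bco Ω u i j α)^2
          + (lam (k+1) - lam i) * ∑ j ∈ Finset.Icc 1 k, aco Ω ρ u i j α * bco Ω u i j α)
        = (∑ α : Fin n, ipw Ω (fun x => ρ x * deg n)
              (fun x => wfun u i α x / ρ x) (fun x => wfun u i α x / ρ x))
          + ∑ α : Fin n, ∑ j ∈ Finset.Icc 1 k,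
              ((lam (k+1) - lam i) * (aco Ω ρ u i j α * bco Ω u i j α)
                - (bco Ω u i j α)^2) := by
      rw [← Finset.sum_add_distrib]
      refine Finset.sum_congr rfl fun α _ => ?_
      rw [Finset.sum_sub_distrib, Finset.mul_sum]
      ring
    rw [hsplitα] at hkeyS
    linarith [hkeyS, hlow, hwf2]
  have hsum := Finset.sum_le_sum hperI
  have hB : ∑ i ∈ Finset.Icc 1 k, ∑ α : Fin n, ∑ j ∈ Finset.Icc 1 k,
      ((lam (k+1) - lam i) * (aco Ω ρ u i j α * bco Ω u i j α) - (bco Ω u i j α)^2) ≤ 0 := by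
    rw [Finset.sum_comm]
    exact Finset.sum_nonpos fun α _ => dsum_nonpos Ω V ρ u lam hd hu0 heig k hcard α
  have hsplit2 : ∑ i ∈ Finset.Icc 1 k,
      ((4/(deg n * Ω.inf' hne ρ)) * lam i
        + ∑ α : Fin n, ∑ j ∈ Finset.Icc 1 k,
            ((lam (k+1) - lam i) * (aco Ω ρ u i j α * bco Ω u i j α) - (bco Ω u i j α)^2))
      = (4/(deg n * Ω.inf' hne ρ)) * (∑ i ∈ Finset.Icc 1 k, lam i)
        + ∑ i ∈ Finset.Icc 1 k, ∑ α : Fin n, ∑ j ∈ Finset.Icc 1 k,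
            ((lam (k+1) - lam i) * (aco Ω ρ u i j α * bco Ω u i j α) - (bco Ω u i j α)^2) := by
    rw [Finset.sum_add_distrib, ← Finset.mul_sum]
  rw [hsplit2] at hsum
  have hstar : ∑ i ∈ Finset.Icc 1 k,
      (lam (k+1) - lam i) * (1/(2 * Ω.sup' hne ρ) - lam i / 2)
      ≤ (4/(deg n * Ω.inf' hne ρ)) * (∑ i ∈ Finset.Icc 1 k, lam i) := by
    linarith [hsum, hB]
  have hkR : (((Finset.Icc 1 k).card : ℕ) : ℝ) = (k:ℝ) := by
    simp [Nat.card_Icc]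
  have hexp : ∑ i ∈ Finset.Icc 1 k,
      (lam (k+1) - lam i) * (1/(2 * Ω.sup' hne ρ) - lam i / 2)
      = (1/(2 * Ω.sup' hne ρ)) * ((k:ℝ) * lam (k+1) - ∑ i ∈ Finset.Icc 1 k, lam i)
        - (lam (k+1) * (∑ i ∈ Finset.Icc 1 k, lam i)
            - ∑ i ∈ Finset.Icc 1 k, (lam i)^2) / 2 := by
    have hterm : ∀ i ∈ Finset.Icc 1 k,
        (lam (k+1) - lam i) * (1/(2 * Ω.sup' hne ρ) - lam i / 2)
          = (1/(2 * Ω.sup' hne ρ)) * lam (k+1) - (1/(2 * Ω.sup' hne ρ)) * lam i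
            - (lam (k+1)/2) * lam i + (1/2) * (lam i)^2 := fun i _ => by ring
    rw [Finset.sum_congr rfl hterm, Finset.sum_add_distrib, Finset.sum_sub_distrib,
      Finset.sum_sub_distrib, Finset.sum_const, ← Finset.mul_sum, ← Finset.mul_sum,
      ← Finset.mul_sum, nsmul_eq_mul, hkR]
    ring
  rw [hexp] at hstar
  -- clear denominators
  have hkey2 : ((k:ℝ) * lam (k+1) - (∑ i ∈ Finset.Icc 1 k, lam i)
        - Ω.sup' hne ρ * (lam (k+1) * (∑ i ∈ Finset.Icc 1 k, lam i)
            - ∑ i ∈ Finset.Icc 1 k, (lam i)^2)) * ((n:ℝ) * Ω.inf' hne ρ)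
      ≤ 4 * Ω.sup' hne ρ * (∑ i ∈ Finset.Icc 1 k, lam i) := by
    have hmul := mul_le_mul_of_nonneg_left hstar
      (le_of_lt (mul_pos two_pos hρM0) : (0:ℝ) ≤ 2 * Ω.sup' hne ρ)
    have e1 : (2 * Ω.sup' hne ρ) *
        ((1/(2 * Ω.sup' hne ρ)) * ((k:ℝ) * lam (k+1) - ∑ i ∈ Finset.Icc 1 k, lam i)
          - (lam (k+1) * (∑ i ∈ Finset.Icc 1 k, lam i)
              - ∑ i ∈ Finset.Icc 1 k, (lam i)^2) / 2)
        = (k:ℝ) * lam (k+1) - (∑ i ∈ Finset.Icc 1 k, lam i)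
          - Ω.sup' hne ρ * (lam (k+1) * (∑ i ∈ Finset.Icc 1 k, lam i)
              - ∑ i ∈ Finset.Icc 1 k, (lam i)^2) := by
      field_simp
    have e2 : (2 * Ω.sup' hne ρ) *
        ((4/(deg n * Ω.inf' hne ρ)) * (∑ i ∈ Finset.Icc 1 k, lam i)) * ((n:ℝ) * Ω.inf' hne ρ)
        = 4 * Ω.sup' hne ρ * (∑ i ∈ Finset.Icc 1 k, lam i) := by
      show (2 * Ω.sup' hne ρ) *
        ((4/((2 * (n:ℝ)) * Ω.inf' hne ρ)) * (∑ i ∈ Finset.Icc 1 k, lam i)) * ((n:ℝ) * Ω.inf' hne ρ)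
        = 4 * Ω.sup' hne ρ * (∑ i ∈ Finset.Icc 1 k, lam i)
      field_simp
    rw [e1] at hmul
    calc ((k:ℝ) * lam (k+1) - (∑ i ∈ Finset.Icc 1 k, lam i)
          - Ω.sup' hne ρ * (lam (k+1) * (∑ i ∈ Finset.Icc 1 k, lam i)
              - ∑ i ∈ Finset.Icc 1 k, (lam i)^2)) * ((n:ℝ) * Ω.inf' hne ρ)
        ≤ (2 * Ω.sup' hne ρ) *
            ((4/(deg n * Ω.inf' hne ρ)) * (∑ i ∈ Finset.Icc 1 k, lam i)) *
            ((n:ℝ) * Ω.inf' hne ρ) :=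
          mul_le_mul_of_nonneg_right hmul (le_of_lt (mul_pos hn0 hρm0))
      _ = 4 * Ω.sup' hne ρ * (∑ i ∈ Finset.Icc 1 k, lam i) := e2
  -- final algebraic step
  rw [← sub_nonpos]
  have hgoal : lam (k + 1) * (1 - (Ω.sup' hne ρ / k) * ∑ i ∈ Finset.Icc 1 k, lam i)
      - ((1 / k) * (1 + 4 * Ω.sup' hne ρ / (n * Ω.inf' hne ρ)) *
          (∑ i ∈ Finset.Icc 1 k, lam i)
        - (Ω.sup' hne ρ / k) * ∑ i ∈ Finset.Icc 1 k, (lam i) ^ 2)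
      = (1/((k:ℝ) * ((n:ℝ) * Ω.inf' hne ρ))) *
          ((((k:ℝ) * lam (k+1) - (∑ i ∈ Finset.Icc 1 k, lam i)
            - Ω.sup' hne ρ * (lam (k+1) * (∑ i ∈ Finset.Icc 1 k, lam i)
                - ∑ i ∈ Finset.Icc 1 k, (lam i)^2)) * ((n:ℝ) * Ω.inf' hne ρ))
            - 4 * Ω.sup' hne ρ * (∑ i ∈ Finset.Icc 1 k, lam i)) := by
    field_simp
    ring
  rw [hgoal]
  exact mul_nonpos_of_nonneg_of_nonpos (by positivity) (sub_nonpos.2 hkey2)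
end
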